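/- arXiv:1001.2548 — 9 statements merged into one kernel-verified Lean document; each statement's English description precedes it below -/
import Mathlib

section
/- The subword complexity of the sequence 𝔭₂ is quadratic: there exist real constants c₁, c₂ > 0 and an integer m₀ such that for every integer m ≥ m₀ one has c₁ · m² ≤ p(𝔭₂, m) ≤ c₂ · m². (Equivalently, the complexity of the inverse of the Carlitz analogue Π₂ of π satisfies p(1/Π₂, m) = Θ(m²).) -/
/-- The subword complexity of a sequence `a : ℕ → A`: the number of distinct
factors of length `m` occurring in `a`. -/
noncomputable def subwordComplexity {A : Type*} (a : ℕ → A) (m : ℕ) : ℕ :=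
  Set.ncard { w : Fin m → A | ∃ j : ℕ, ∀ i : Fin m, w i = a (j + i) }

open Classical in
/-- The coefficient sequence 𝔭₂ of `1/Π₂`: `𝔭₂ n = 1` iff `n` is a sum of distinct
terms of the form `2^j - 1` with `j ≥ 1` (the empty sum giving `n = 0`). -/
noncomputable def p2 (n : ℕ) : Fin 2 :=
  if ∃ J : Finset ℕ, (∀ j ∈ J, 1 ≤ j) ∧ n = ∑ j ∈ J, (2 ^ j - 1) then 1 else 0

namespace P2X

/-- binary digit sum -/
def s : ℕ → ℕ
  | 0 => 0
  | (n+1) => s ((n+1)/2) + (n+1) % 2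
decreasing_by exact Nat.div_lt_self (Nat.succ_pos n) one_lt_two

lemma s_zero : s 0 = 0 := by rw [s]

lemma s_def (n : ℕ) (h : n ≠ 0) : s n = s (n/2) + n % 2 := by
  obtain ⟨m, rfl⟩ := Nat.exists_eq_succ_of_ne_zero h
  rw [s]

lemma s_two_mul (n : ℕ) : s (2*n) = s n := by
  rcases Nat.eq_zero_or_pos n with rfl | h
  · rw [Nat.mul_zero]
  · rw [s_def (2*n) (by omega)]
    have h1 : 2*n/2 = n := by omega
    have h2 : 2*n % 2 = 0 := by omega
    rw [h1, h2, Nat.add_zero]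

lemma s_two_mul_add_one (n : ℕ) : s (2*n+1) = s n + 1 := by
  rw [s_def (2*n+1) (by omega)]
  have h1 : (2*n+1)/2 = n := by omega
  have h2 : (2*n+1) % 2 = 1 := by omega
  rw [h1, h2]

lemma s_le (n : ℕ) : s n ≤ n := by
  induction n using Nat.strong_induction_on with
  | _ n ih =>
    rcases Nat.eq_zero_or_pos n with rfl | h
    · simp [s_zero]
    · rw [s_def n (by omega)]
      have := ih (n/2) (by omega)
      omega

lemma s_pos (n : ℕ) (h : 1 ≤ n) : 1 ≤ s n := by
  induction n using Nat.strong_induction_on with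
  | _ n ih =>
    rw [s_def n (by omega)]
    obtain ⟨q, hq | hq⟩ := Nat.even_or_odd' n
    · have := ih (n/2) (by omega) (by omega)
      omega
    · omega

lemma s_succ_le (n : ℕ) : s (n+1) ≤ s n + 1 := by
  induction n using Nat.strong_induction_on with
  | _ n ih =>
    obtain ⟨q, hq | hq⟩ := Nat.even_or_odd' n
    · subst hq
      rw [s_two_mul_add_one, s_two_mul]
    · subst hq
      have h1 : 2*q+1+1 = 2*(q+1) := by ring
      rw [h1, s_two_mul, s_two_mul_add_one]
      rcases Nat.eq_zero_or_pos q with rfl | h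
      · simp [s_zero, s_def 1 one_ne_zero]
      · have := ih q (by omega)
        omega

lemma s_lt_pow {n k : ℕ} (h : n < 2^k) : s n ≤ k := by
  induction k generalizing n with
  | zero => interval_cases n; simp [s_zero]
  | succ k ih =>
    rcases Nat.eq_zero_or_pos n with rfl | hn
    · simp [s_zero]
    · rw [s_def n (by omega)]
      have hp : 2^(k+1) = 2*2^k := by ring
      have h2 : n / 2 < 2^k := by omega
      have := ih h2
      omega

lemma s_lt_pow' {n k : ℕ} (h : n + 1 < 2^k) : s n + 1 ≤ k := by
  induction k generalizing n with
  | zero => simp at h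
  | succ k ih =>
    rcases Nat.eq_zero_or_pos n with rfl | hn
    · have h1 : 1 ≤ 2^k := Nat.one_le_two_pow
      have h0 : s 0 = 0 := s_zero
      omega
    · rw [s_def n (by omega)]
      have hpow : 2^(k+1) = 2*2^k := by ring
      obtain ⟨q, hq | hq⟩ := Nat.even_or_odd' n
      · have h2 : n/2 < 2^k := by omega
        have := s_lt_pow h2
        omega
      · have h2 : n/2 + 1 < 2^k := by omega
        have := ih h2
        omega

lemma s_mul_pow_add {k a t : ℕ} (h : t < 2^k) : s (a * 2^k + t) = s a + s t := by
  induction k generalizing t a with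
  | zero =>
    interval_cases t
    simp [s_zero]
  | succ k ih =>
    have hpow : (2:ℕ)^(k+1) = 2*2^k := by ring
    have ht2 : t/2 < 2^k := by omega
    have key : a * 2^(k+1) + t = 2*(a*2^k + t/2) + t % 2 := by
      rw [hpow, ← Nat.mul_assoc, Nat.mul_comm a 2, Nat.mul_assoc, Nat.mul_add]
      omega
    have hst : s t = s (t/2) + t % 2 := by
      rcases Nat.eq_zero_or_pos t with rfl | ht
      · simp [s_zero]
      · exact s_def t (by omega)
    obtain ⟨q, hq | hq⟩ := Nat.even_or_odd' t
    · have h2 : t % 2 = 0 := by omega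
      rw [key, h2, Nat.add_zero, s_two_mul, ih ht2]
      omega
    · have h2 : t % 2 = 1 := by omega

      rw [key, h2, s_two_mul_add_one, ih ht2]
      omega

lemma s_one : s 1 = 1 := by rw [s_def 1 one_ne_zero]; simp [s_zero]

lemma s_pow (e : ℕ) : s (2^e) = 1 := by
  have := s_mul_pow_add (k := e) (a := 1) (t := 0) (Nat.two_pow_pos e)
  simpa [s_zero, s_one] using this

lemma s_pow_sub_one (e : ℕ) : s (2^e - 1) = e := by
  induction e with
  | zero => simp [s_zero]
  | succ e ih =>
    have h1 : 1 ≤ 2^e := Nat.one_le_two_pow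
    have key : 2^(e+1) - 1 = 2*(2^e - 1) + 1 := by
      have : (2:ℕ)^(e+1) = 2*2^e := by ring
      omega
    rw [key, s_two_mul_add_one, ih]


/-- position of the i-th one: g i = 2i - s₂(i) -/
def g (i : ℕ) : ℕ := 2*i - s i

lemma g_add_s (i : ℕ) : g i + s i = 2*i := by
  have := s_le i
  unfold g
  omega

lemma g_zero : g 0 = 0 := by
  have := g_add_s 0
  have := s_zero
  omega

lemma g_lt_succ (i : ℕ) : g i < g (i+1) := by
  have h1 := g_add_s i
  have h2 := g_add_s (i+1)
  have h3 := s_succ_le i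
  omega

lemma g_strictMono : StrictMono g := strictMono_nat_of_lt_succ g_lt_succ

lemma g_ge (i : ℕ) : i ≤ g i := by
  have h1 := g_add_s i
  have h2 := s_le i
  omega

lemma s_sum_pow : ∀ n (K : Finset ℕ), (∑ j ∈ K, 2^j) = n → s n = K.card := by
  intro n
  induction n using Nat.strong_induction_on with
  | _ n ih =>
    intro K hK
    rcases Nat.eq_zero_or_pos n with rfl | hn
    · have : K = ∅ := by
        by_contra h
        obtain ⟨j, hj⟩ := Finset.nonempty_iff_ne_empty.2 h
        have h1 : (2:ℕ)^j ≤ ∑ j ∈ K, 2^j :=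
          Finset.single_le_sum (fun i _ => Nat.zero_le _) hj
        have h2 : 0 < (2:ℕ)^j := Nat.two_pow_pos j
        omega
      subst this
      simpa [s_zero] using hK.symm ▸ rfl
    · -- n ≥ 1
      have hKne : K.Nonempty := by
        by_contra h
        rw [Finset.not_nonempty_iff_eq_empty] at h
        subst h
        simp at hK
        omega
      set K' : Finset ℕ := (K.erase 0).image (· - 1) with hK'
      have hinj : ∀ x ∈ K.erase 0, ∀ y ∈ K.erase 0, x - 1 = y - 1 → x = y := by
        intro x hx y hy hxy
        have hx0 : x ≠ 0 := Finset.ne_of_mem_erase hx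
        have hy0 : y ≠ 0 := Finset.ne_of_mem_erase hy
        omega
      have hsum' : (∑ j ∈ K', 2^j) = ∑ j ∈ K.erase 0, 2^(j-1) := by
        rw [hK', Finset.sum_image hinj]
      have hsum2 : (∑ j ∈ K.erase 0, 2^j) = 2 * ∑ j ∈ K.erase 0, 2^(j-1) := by
        rw [Finset.mul_sum]
        refine Finset.sum_congr rfl (fun j hj => ?_)
        have hj0 : j ≠ 0 := Finset.ne_of_mem_erase hj
        obtain ⟨j', rfl⟩ : ∃ j', j = j' + 1 := ⟨j-1, by omega⟩
        rw [pow_succ, Nat.add_sub_cancel]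
        ring
      have hcard' : K'.card = (K.erase 0).card := by
        rw [hK']
        exact Finset.card_image_of_injOn (fun x hx y hy => hinj x hx y hy)
      set h : ℕ := ∑ j ∈ K', 2^j with hh
      by_cases h0 : 0 ∈ K
      · have h00 : 2^0 + (∑ j ∈ K.erase 0, 2^j) = n := by
          rw [← hK]
          exact Finset.add_sum_erase K (fun j => 2^j) h0
        have hn2 : n = 2*h + 1 := by
          simp only [pow_zero] at h00
          omega
        have hhlt : h < n := by omega
        have := ih h hhlt K' rfl
        rw [hn2, s_two_mul_add_one, this, hcard']
        rw [Finset.card_erase_of_mem h0]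
        have : 0 < K.card := Finset.card_pos.2 hKne
        omega
      · have herase : K.erase 0 = K := Finset.erase_eq_of_notMem h0
        have h00 : (∑ j ∈ K.erase 0, 2^j) = n := by rw [herase, hK]
        have hn2 : n = 2*h := by omega
        have hh1 : 1 ≤ h := by omega
        have hhlt : h < n := by omega
        have := ih h hhlt K' rfl
        rw [hn2, s_two_mul, this, hcard', herase]

lemma exists_K : ∀ i : ℕ, ∃ K : Finset ℕ, (∑ j ∈ K, 2^j) = i ∧ K.card = s i := by
  intro i
  induction i using Nat.strong_induction_on with
  | _ i ih =>
    rcases Nat.eq_zero_or_pos i with rfl | hi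
    · exact ⟨∅, by simp, by simp [s_zero]⟩
    · obtain ⟨q, hq | hq⟩ := Nat.even_or_odd' i
      · -- i = 2q, q ≥ 1
        obtain ⟨K, hKs, hKc⟩ := ih q (by omega)
        refine ⟨K.image (· + 1), ?_, ?_⟩
        · rw [Finset.sum_image (fun x _ y _ h => by simpa using h)]
          subst hq
          rw [← hKs, Finset.mul_sum]
          exact Finset.sum_congr rfl (fun j _ => by rw [pow_succ]; ring)
        · rw [Finset.card_image_of_injOn (fun x _ y _ h => by simpa using h), hKc, hq, s_two_mul]
      · obtain ⟨K, hKs, hKc⟩ := ih q (by omega)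
        have h0 : 0 ∉ K.image (· + 1) := by simp
        refine ⟨insert 0 (K.image (· + 1)), ?_, ?_⟩
        · rw [Finset.sum_insert h0, Finset.sum_image (fun x _ y _ h => by simpa using h)]
          have : (∑ x ∈ K, 2^(x+1)) = 2 * ∑ j ∈ K, 2^j := by
            rw [Finset.mul_sum]
            exact Finset.sum_congr rfl (fun j _ => by rw [pow_succ]; ring)
          rw [this, hKs, hq]
          ring
        · rw [Finset.card_insert_of_notMem h0,
            Finset.card_image_of_injOn (fun x _ y _ h => by simpa using h), hKc, hq, s_two_mul_add_one]

/-- the key characterization -/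
lemma rep_iff (n : ℕ) :
    (∃ J : Finset ℕ, (∀ j ∈ J, 1 ≤ j) ∧ n = ∑ j ∈ J, (2 ^ j - 1)) ↔ ∃ i, g i = n := by
  constructor
  · rintro ⟨J, hJ1, rfl⟩
    set K : Finset ℕ := J.image (· - 1) with hK
    have hinj : ∀ x ∈ J, ∀ y ∈ J, x - 1 = y - 1 → x = y := by
      intro x hx y hy h
      have := hJ1 x hx; have := hJ1 y hy
      omega
    set i : ℕ := ∑ j ∈ K, 2^j with hi
    refine ⟨i, ?_⟩
    have hsi : s i = J.card := by
      rw [s_sum_pow i K hi.symm, hK, Finset.card_image_of_injOn (fun x hx y hy => hinj x hx y hy)]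
    have h2i : 2 * i = ∑ j ∈ J, 2^j := by
      rw [hi, hK, Finset.sum_image hinj, Finset.mul_sum]
      refine Finset.sum_congr rfl (fun j hj => ?_)
      have h1j := hJ1 j hj
      obtain ⟨j', rfl⟩ : ∃ j', j = j' + 1 := ⟨j-1, by omega⟩
      rw [pow_succ, Nat.add_sub_cancel]
      ring
    have hsum : (∑ j ∈ J, (2^j - 1)) + J.card = ∑ j ∈ J, 2^j := by
      rw [Finset.card_eq_sum_ones, ← Finset.sum_add_distrib]
      refine Finset.sum_congr rfl (fun j hj => ?_)
      have : 1 ≤ (2:ℕ)^j := Nat.one_le_two_pow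
      omega
    have := g_add_s i
    omega
  · rintro ⟨i, rfl⟩
    obtain ⟨K, hKs, hKc⟩ := exists_K i
    refine ⟨K.image (· + 1), fun j hj => ?_, ?_⟩
    · simp only [Finset.mem_image] at hj
      obtain ⟨x, _, rfl⟩ := hj
      omega
    · rw [Finset.sum_image (fun x _ y _ h => by simpa using h)]
      have h1 : (∑ x ∈ K, (2^(x+1) - 1)) + K.card = ∑ x ∈ K, 2^(x+1) := by
        rw [Finset.card_eq_sum_ones, ← Finset.sum_add_distrib]
        refine Finset.sum_congr rfl (fun j _ => ?_)
        have : 1 ≤ (2:ℕ)^(j+1) := Nat.one_le_two_pow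
        omega
      have h2 : (∑ x ∈ K, 2^(x+1)) = 2 * ∑ j ∈ K, 2^j := by
        rw [Finset.mul_sum]
        exact Finset.sum_congr rfl (fun j _ => by rw [pow_succ]; ring)
      have := g_add_s i
      rw [hKs] at h2
      omega


open Classical in
noncomputable def xx (n : ℕ) : Fin 2 := if ∃ i, g i = n then 1 else 0

lemma p2_eq_xx : p2 = xx := by
  funext n
  unfold p2 xx
  by_cases h : ∃ i, g i = n
  · rw [if_pos h, if_pos]
    rw [rep_iff]
    exact h
  · rw [if_neg h, if_neg]
    intro hc
    rw [rep_iff] at hc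
    exact h hc

lemma xx_eq_one {n : ℕ} (h : ∃ i, g i = n) : xx n = 1 := by rw [xx, if_pos h]

lemma xx_eq_zero {n : ℕ} (h : ¬ ∃ i, g i = n) : xx n = 0 := by rw [xx, if_neg h]

lemma xx_one_iff {n : ℕ} : xx n = 1 ↔ ∃ i, g i = n := by
  unfold xx
  by_cases h : ∃ i, g i = n <;> simp [h]

lemma xx_congr {n n' : ℕ} (h : (∃ i, g i = n) ↔ (∃ i, g i = n')) : xx n = xx n' := by
  unfold xx
  by_cases h1 : ∃ i, g i = n
  · rw [if_pos h1, if_pos (h.1 h1)]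
  · rw [if_neg h1, if_neg (fun hc => h1 (h.2 hc))]

/-- length of the basic block w_k -/
def L (k : ℕ) : ℕ := 2^(k+1) - 1 - k

lemma pow_big (k : ℕ) : k + 2 ≤ 2^(k+1) := by
  induction k with
  | zero => norm_num
  | succ k ih =>
    have : (2:ℕ)^(k+1+1) = 2*2^(k+1) := by ring
    omega

lemma L_eq (k : ℕ) : g (2^k - 1) + 1 = L k := by
  have h1 := g_add_s (2^k - 1)
  have h2 := s_pow_sub_one k
  have h3 : (2:ℕ)^(k+1) = 2*2^k := by ring
  have h4 : (1:ℕ) ≤ 2^k := Nat.one_le_two_pow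
  unfold L
  have h5 := pow_big k
  omega

lemma s_mul_pow (a k : ℕ) : s (a * 2^k) = s a := by
  have := s_mul_pow_add (k := k) (a := a) (t := 0) (Nat.two_pow_pos k)
  simpa [s_zero] using this

lemma g_block {k a t : ℕ} (ht : t < 2^k) : g (a * 2^k + t) = g (a * 2^k) + g t := by
  have h1 : g (a * 2^k + t) + (s a + s t) = 2*(a*2^k + t) := by
    rw [← s_mul_pow_add ht]; exact g_add_s _
  have h2 : g (a * 2^k) + s a = 2*(a*2^k) := by
    rw [← s_mul_pow a k]; exact g_add_s _
  have h3 := g_add_s t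
  omega

lemma D_step (k a : ℕ) : g (a*2^k) + 2^(k+1) ≤ g ((a+1)*2^k) + 1 := by
  have h1 : g (a * 2^k) + s a = 2*(a*2^k) := by
    rw [← s_mul_pow a k]; exact g_add_s _
  have h2 : g ((a+1) * 2^k) + s (a+1) = 2*((a+1)*2^k) := by
    rw [← s_mul_pow (a+1) k]; exact g_add_s _
  have h3 := s_succ_le a
  have h4 : 2*((a+1)*2^k) = 2*(a*2^k) + 2^(k+1) := by ring
  omega

lemma D_mono (k a : ℕ) : g (a*2^k) < g ((a+1)*2^k) := by
  have := D_step k a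
  have := pow_big k
  omega

lemma D_sep (k a : ℕ) : g (a*2^k) + L k ≤ g ((a+1)*2^k) := by
  have := D_step k a
  have := pow_big k
  unfold L
  omega

/-- shift lemma: inside block a, the word looks like w_k -/
lemma mem_shift {k a r : ℕ} (hr : r ≤ g (2^k - 1)) :
    (∃ u, g u = g (a*2^k) + r) ↔ (∃ t, g t = r) := by
  have hpow : (1:ℕ) ≤ 2^k := Nat.one_le_two_pow
  constructor
  · rintro ⟨u, hu⟩
    have hu1 : a*2^k ≤ u := by
      by_contra hc
      push_neg at hc
      have := g_strictMono hc
      omega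
    have hu2 : u ≤ a*2^k + (2^k - 1) := by
      by_contra hc
      push_neg at hc
      have h3 := g_strictMono hc
      rw [g_block (t := 2^k - 1) (by omega)] at h3
      omega
    obtain ⟨t, rfl⟩ : ∃ t, u = a*2^k + t := ⟨u - a*2^k, by omega⟩
    rw [g_block (by omega)] at hu
    exact ⟨t, by omega⟩
  · rintro ⟨t, rfl⟩
    have ht : t < 2^k := by
      by_contra hc
      push_neg at hc
      have : (2:ℕ)^k - 1 < t := by omega
      have := g_strictMono this
      omega
    exact ⟨a*2^k + t, by rw [g_block ht]⟩

lemma xx_shift {k a r : ℕ} (hr : r ≤ g (2^k - 1)) :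
    xx (g (a*2^k) + r) = xx r := xx_congr (mem_shift hr)

/-- gap lemma: between blocks everything is 0 -/
lemma xx_gap {k a r : ℕ} (h1 : g (2^k - 1) < r) (h2 : g (a*2^k) + r < g ((a+1)*2^k)) :
    xx (g (a*2^k) + r) = 0 := by
  apply xx_eq_zero
  rintro ⟨u, hu⟩
  have hu1 : a*2^k + (2^k - 1) < u := by
    by_contra hc
    push_neg at hc
    have h3 : g u ≤ g (a*2^k + (2^k-1)) := g_strictMono.monotone hc
    rw [g_block (t := 2^k - 1) (by have : (1:ℕ) ≤ 2^k := Nat.one_le_two_pow; omega)] at h3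
    omega
  have hu2 : (a+1)*2^k ≤ u := by
    have : (1:ℕ) ≤ 2^k := Nat.one_le_two_pow
    have : (a+1)*2^k = a*2^k + 2^k := by ring
    omega
  have := g_strictMono.monotone hu2
  omega


/-- canonical window shape: suffix of w_k, zeros, prefix of w_k -/
noncomputable def Fm (k m : ℕ) (p : ℕ × ℕ) : Fin m → Fin 2 := fun t =>
  if (t:ℕ) < p.1 then xx (L k - p.1 + (t:ℕ))
  else if (t:ℕ) < p.1 + p.2 then 0
  else xx ((t:ℕ) - p.1 - p.2)

lemma window_form {k m : ℕ} (hmL : m ≤ L k) (j : ℕ) :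
    ∃ u z, u ≤ L k ∧ z ≤ m ∧ ∀ t : Fin m, xx (j + (t:ℕ)) = Fm k m (u, z) t := by
  classical
  have hpow1 : (1:ℕ) ≤ 2^k := Nat.one_le_two_pow
  set i := Nat.findGreatest (fun a => g (a*2^k) ≤ j) j with hi
  have hD1 : g (i*2^k) ≤ j :=
    Nat.findGreatest_spec (P := fun a => g (a*2^k) ≤ j) (Nat.zero_le j)
      (by simpa [g_zero] using Nat.zero_le j)
  have hD2 : j < g ((i+1)*2^k) := by
    by_cases hij : i+1 ≤ j
    · have hlt : Nat.findGreatest (fun a => g (a*2^k) ≤ j) j < i+1 := by omega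
      have := Nat.findGreatest_is_greatest hlt hij
      omega
    · have h3 := g_ge ((i+1)*2^k)
      have h4 : i+1 ≤ (i+1)*2^k := Nat.le_mul_of_pos_right _ (by omega)
      omega
  have hsep := D_sep k i
  have hLk := L_eq k
  set u := L k - (j - g (i*2^k)) with hu
  set z := min (g ((i+1)*2^k)) (j+m) - max j (g (i*2^k) + L k) with hz
  refine ⟨u, z, by omega, by omega, ?_⟩
  intro t
  have ht := t.isLt
  simp only [Fm]
  split_ifs with h1 h2
  · -- inside the block
    have e1 : j + (t:ℕ) = g (i*2^k) + (j + (t:ℕ) - g (i*2^k)) := by omega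
    rw [e1, xx_shift (by omega)]
    have e2 : j + (t:ℕ) - g (i*2^k) = L k - u + (t:ℕ) := by omega
    rw [e2]
  · -- in the gap
    have e1 : j + (t:ℕ) = g (i*2^k) + (j + (t:ℕ) - g (i*2^k)) := by omega
    rw [e1]
    exact xx_gap (by omega) (by omega)
  · -- in the next block
    have e1 : j + (t:ℕ) = g ((i+1)*2^k) + (j + (t:ℕ) - g ((i+1)*2^k)) := by omega
    rw [e1, xx_shift (by omega)]
    have e2 : j + (t:ℕ) - g ((i+1)*2^k) = (t:ℕ) - u - z := by omega
    rw [e2]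


lemma Fm_eval1 {k m u z q : ℕ} (hq : q < m) (h : q < u) :
    Fm k m (u,z) ⟨q,hq⟩ = xx (L k - u + q) := by
  simp only [Fm]
  rw [if_pos h]

lemma Fm_eval2 {k m u z q : ℕ} (hq : q < m) (h1 : u ≤ q) (h2 : q < u + z) :
    Fm k m (u,z) ⟨q,hq⟩ = 0 := by
  simp only [Fm]
  rw [if_neg (by omega), if_pos h2]

lemma Fm_eval3 {k m u z q : ℕ} (hq : q < m) (h : u + z ≤ q) :
    Fm k m (u,z) ⟨q,hq⟩ = xx (q - u - z) := by
  simp only [Fm]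
  rw [if_neg (by omega), if_neg (by omega)]

/-- every admissible (u,z) shape actually occurs in the word -/
lemma lower_occur {k m u z : ℕ} (hmL : m ≤ L k) (hkz : k ≤ z) (huz : u + z < m) :
    ∃ j, ∀ t : Fin m, Fm k m (u, z) t = xx (j + (t:ℕ)) := by
  set e := z - k with he
  set a := 2^e - 1 with ha
  have hpe : (1:ℕ) ≤ 2^e := Nat.one_le_two_pow
  have hpk : (1:ℕ) ≤ 2^k := Nat.one_le_two_pow
  have ha1 : a + 1 = 2^e := by omega
  have f1 : g (a*2^k) + s a = 2*(a*2^k) := by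
    rw [← s_mul_pow a k]; exact g_add_s _
  have f2 : g ((a+1)*2^k) + s (a+1) = 2*((a+1)*2^k) := by
    rw [← s_mul_pow (a+1) k]; exact g_add_s _
  have f3 : s a = e := by rw [ha, s_pow_sub_one]
  have f4 : s (a+1) = 1 := by rw [ha1, s_pow]
  have f5 : (a+1)*2^k = a*2^k + 2^k := by ring
  have f6 : L k = 2^(k+1) - 1 - k := rfl
  have f7 : (2:ℕ)^(k+1) = 2*2^k := by ring
  have f8 := pow_big k
  have hDD : g ((a+1)*2^k) = g (a*2^k) + L k + z := by omega
  have hLk := L_eq k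
  have huL : u < L k := by omega
  refine ⟨g (a*2^k) + (L k - u), fun t => ?_⟩
  have ht := t.isLt
  rcases lt_trichotomy (t:ℕ) u with h1 | h1 | h1
  · rw [show t = (⟨(t:ℕ), ht⟩ : Fin m) from rfl, Fm_eval1 ht h1]
    have e1 : g (a*2^k) + (L k - u) + (t:ℕ) = g (a*2^k) + (L k - u + (t:ℕ)) := by omega
    rw [e1, xx_shift (by omega)]
  · rcases Nat.lt_or_ge (t:ℕ) (u + z) with h2 | h2
    · rw [show t = (⟨(t:ℕ), ht⟩ : Fin m) from rfl, Fm_eval2 ht (by omega) h2]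
      have e1 : g (a*2^k) + (L k - u) + (t:ℕ) = g (a*2^k) + (L k - u + (t:ℕ)) := by omega
      rw [e1]
      exact (xx_gap (by omega) (by omega)).symm
    · rw [show t = (⟨(t:ℕ), ht⟩ : Fin m) from rfl, Fm_eval3 ht h2]
      have e1 : g (a*2^k) + (L k - u) + (t:ℕ) = g ((a+1)*2^k) + ((t:ℕ) - u - z) := by omega
      rw [e1, xx_shift (by omega)]
  · rcases Nat.lt_or_ge (t:ℕ) (u + z) with h2 | h2
    · rw [show t = (⟨(t:ℕ), ht⟩ : Fin m) from rfl, Fm_eval2 ht (by omega) h2]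
      have e1 : g (a*2^k) + (L k - u) + (t:ℕ) = g (a*2^k) + (L k - u + (t:ℕ)) := by omega
      rw [e1]
      exact (xx_gap (by omega) (by omega)).symm
    · rw [show t = (⟨(t:ℕ), ht⟩ : Fin m) from rfl, Fm_eval3 ht h2]
      have e1 : g (a*2^k) + (L k - u) + (t:ℕ) = g ((a+1)*2^k) + ((t:ℕ) - u - z) := by omega
      rw [e1, xx_shift (by omega)]

lemma g_gap_small {k t : ℕ} (h1 : 1 ≤ t) (h2 : t ≤ 2^k - 1) :
    g (t-1) < g t ∧ g t ≤ g (t-1) + k := by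
  have hpk : (1:ℕ) ≤ 2^k := Nat.one_le_two_pow
  have f1 := g_add_s t
  have f2 := g_add_s (t-1)
  have f3 : s (t-1) + 1 ≤ k := s_lt_pow' (by omega)
  have f4 : 1 ≤ s t := s_pos t h1
  exact ⟨g_strictMono (by omega), by omega⟩

/-- the end of the zero block is the unique position with k zeros before a one -/
lemma marker_unique {k m u z : ℕ} (hmL : m ≤ L k) (hkz : k ≤ z) (huz : u + z < m)
    (huL : u < L k)
    (p : ℕ) (hp1 : k ≤ p) (hp2 : p < m)
    (hone : Fm k m (u,z) ⟨p, hp2⟩ = 1)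
    (hzeros : ∀ q (hq : q < m), p - k ≤ q → q < p → Fm k m (u,z) ⟨q, hq⟩ = 0) :
    p = u + z := by
  have hLk := L_eq k
  have hpk : (1:ℕ) ≤ 2^k := Nat.one_le_two_pow
  rcases lt_trichotomy p u with h1 | h1 | h1
  · -- p inside the suffix part : impossible
    rw [Fm_eval1 hp2 h1] at hone
    obtain ⟨τ, hτ⟩ := xx_one_iff.1 hone
    have hq1 : 1 ≤ L k - u + p := by omega
    have hτ1 : 1 ≤ τ := by
      rcases Nat.eq_zero_or_pos τ with rfl | h
      · rw [g_zero] at hτ; omega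
      · exact h
    have hqle : L k - u + p ≤ g (2^k - 1) := by omega
    have hτ2 : τ ≤ 2^k - 1 := by
      by_contra hc
      push_neg at hc
      have := g_strictMono hc
      omega
    obtain ⟨hg1, hg2⟩ := g_gap_small hτ1 hτ2
    set σ := p - (g τ - g (τ-1)) with hσ
    have hσm : σ < m := by omega
    have hσu : σ < u := by omega
    have h0 := hzeros σ hσm (by omega) (by omega)
    rw [Fm_eval1 hσm hσu] at h0
    have h1' : xx (L k - u + σ) = 1 := xx_eq_one ⟨τ - 1, by omega⟩
    rw [h0] at h1'
    exact absurd h1' (by decide)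
  · -- p = u
    rcases Nat.eq_zero_or_pos z with hz0 | hz0
    · omega
    · exfalso
      rw [Fm_eval2 hp2 (by omega) (by omega)] at hone
      exact absurd hone (by decide)
  · rcases Nat.lt_or_ge p (u+z) with h2 | h2
    · rw [Fm_eval2 hp2 (by omega) h2] at hone
      exact absurd hone (by decide)
    · -- p ≥ u + z : show p = u + z
      by_contra hne
      have h3 : u + z < p := by omega
      rw [Fm_eval3 hp2 h2] at hone
      obtain ⟨τ, hτ⟩ := xx_one_iff.1 hone
      have hτ1 : 1 ≤ τ := by
        rcases Nat.eq_zero_or_pos τ with rfl | h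
        · rw [g_zero] at hτ; omega
        · exact h
      have hqle : p - u - z ≤ g (2^k - 1) := by omega
      have hτ2 : τ ≤ 2^k - 1 := by
        by_contra hc
        push_neg at hc
        have := g_strictMono hc
        omega
      obtain ⟨hg1, hg2⟩ := g_gap_small hτ1 hτ2
      set σ := p - (g τ - g (τ-1)) with hσ
      have hσm : σ < m := by omega
      have hσuz : u + z ≤ σ := by omega
      have h0 := hzeros σ hσm (by omega) (by omega)
      rw [Fm_eval3 hσm hσuz] at h0
      have h1' : xx (σ - u - z) = 1 := xx_eq_one ⟨τ - 1, by omega⟩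
      rw [h0] at h1'
      exact absurd h1' (by decide)


lemma marker_exists {k m u z : ℕ} (hkz : k ≤ z) (huz : u + z < m) :
    Fm k m (u,z) ⟨u+z, by omega⟩ = 1 ∧
    ∀ q (hq : q < m), (u+z) - k ≤ q → q < u+z → Fm k m (u,z) ⟨q, hq⟩ = 0 := by
  constructor
  · rw [Fm_eval3 (by omega) (le_refl _)]
    have e0 : u + z - u - z = 0 := by omega
    rw [e0]
    exact xx_eq_one ⟨0, g_zero⟩
  · intro q hq hq1 hq2
    exact Fm_eval2 hq (by omega) hq2

lemma Fm_inj_aux {k m : ℕ} (hmL : m ≤ L k) {a b c d : ℕ}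
    (hb : k ≤ b) (hab : a + b < m) (hd : k ≤ d) (hcd : c + d < m)
    (hF : Fm k m (a,b) = Fm k m (c,d)) (hsum : a + b = c + d) (hac : a < c) : False := by
  have hLk := L_eq k
  have hq : c - 1 < m := by omega
  have e1 : Fm k m (a,b) ⟨c-1, hq⟩ = 0 := Fm_eval2 hq (by omega) (by omega)
  have e2 : Fm k m (c,d) ⟨c-1, hq⟩ = xx (L k - c + (c-1)) := Fm_eval1 hq (by omega)
  have e3 : L k - c + (c-1) = g (2^k - 1) := by omega
  rw [hF, e2, e3] at e1
  have h1 := xx_eq_one (n := g (2^k - 1)) ⟨2^k - 1, rfl⟩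
  rw [e1] at h1
  exact absurd h1 (by decide)

lemma Fm_inj {k m : ℕ} (hmL : m ≤ L k) {u z u' z' : ℕ}
    (h1 : k ≤ z) (h2 : u + z < m) (h1' : k ≤ z') (h2' : u' + z' < m)
    (heq : Fm k m (u,z) = Fm k m (u',z')) : u = u' ∧ z = z' := by
  have huL' : u' < L k := by omega
  have hm1 := marker_exists (m := m) (k := k) h1 h2
  have hp : u + z = u' + z' := by
    apply marker_unique hmL h1' h2' huL' (u+z) (by omega) (by omega)
    · rw [← heq]
      exact hm1.1
    · intro q hq hq1 hq2
      rw [← heq]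
      exact hm1.2 q hq hq1 hq2
  have c1 : ¬ u < u' := fun h => Fm_inj_aux hmL h1 h2 h1' h2' heq hp h
  have c2 : ¬ u' < u := fun h => Fm_inj_aux hmL h1' h2' h1 h2 heq.symm hp.symm h
  omega

lemma pow_big2 (k : ℕ) : 2*k + 2 ≤ 2^(k+1) := by
  induction k with
  | zero => norm_num
  | succ k ih =>
    have : (2:ℕ)^(k+1+1) = 2*2^(k+1) := by ring
    omega

lemma pow_big3 {k : ℕ} (h : 3 ≤ k) : 3*k + 3 ≤ 2^(k+1) := by
  induction k, h using Nat.le_induction with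
  | base => norm_num
  | succ k hk ih =>
    have : (2:ℕ)^(k+1+1) = 2*2^(k+1) := by ring
    omega

lemma exL (m : ℕ) : ∃ k, m ≤ L k := by
  refine ⟨m, ?_⟩
  have := pow_big2 m
  unfold L
  omega

lemma k_upper {m k : ℕ} (hm : 1 ≤ m) (hk : m ≤ L k) (hmin : ∀ k' < k, L k' < m) :
    L k ≤ 4*m := by
  cases k with
  | zero =>
    have : L 0 = 1 := by norm_num [L]
    omega
  | succ k' =>
    have h1 := hmin k' (by omega)
    have h2 := pow_big2 k'
    have e1 : (2:ℕ)^(k'+1+1) = 2*2^(k'+1) := by ring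
    unfold L at *
    omega

lemma k_small {m k : ℕ} (hm : 16 ≤ m) (hmin : ∀ k' < k, L k' < m) : 2*k ≤ m := by
  cases k with
  | zero => omega
  | succ k' =>
    have h1 := hmin k' (by omega)
    by_cases h : k' + 1 ≤ 8
    · omega
    · have h3 := pow_big3 (k := k') (by omega)
      unfold L at h1
      omega

lemma upper_count {m : ℕ} (hm : 1 ≤ m) {k : ℕ} (hmL : m ≤ L k) :
    ({ w : Fin m → Fin 2 | ∃ j, ∀ t : Fin m, w t = xx (j + (t:ℕ)) }).Finite ∧
    ({ w : Fin m → Fin 2 | ∃ j, ∀ t : Fin m, w t = xx (j + (t:ℕ)) }).ncard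
      ≤ (L k + 1) * (m + 1) := by
  set T : Finset (ℕ×ℕ) := Finset.Iic (L k) ×ˢ Finset.Iic m with hT
  have hsub : { w : Fin m → Fin 2 | ∃ j, ∀ t : Fin m, w t = xx (j + (t:ℕ)) }
      ⊆ Fm k m '' ↑T := by
    rintro w ⟨j, hw⟩
    obtain ⟨u, z, hu, hz, hF⟩ := window_form hmL j
    refine ⟨(u,z), ?_, ?_⟩
    · simp only [hT, Finset.coe_product, Set.mem_prod, Finset.mem_coe, Finset.mem_Iic]
      exact ⟨hu, hz⟩
    · funext t
      rw [← hF t, ← hw t]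
  have hfin : (Fm k m '' ↑T).Finite := T.finite_toSet.image _
  refine ⟨hfin.subset hsub, ?_⟩
  calc ({ w : Fin m → Fin 2 | ∃ j, ∀ t : Fin m, w t = xx (j + (t:ℕ)) }).ncard
      ≤ (Fm k m '' ↑T).ncard := Set.ncard_le_ncard hsub hfin
    _ ≤ (↑T : Set (ℕ×ℕ)).ncard := Set.ncard_image_le T.finite_toSet
    _ = T.card := Set.ncard_coe_finset T
    _ = (L k + 1) * (m + 1) := by
        rw [hT, Finset.card_product, Nat.card_Iic, Nat.card_Iic]

lemma lower_count {m : ℕ} (hm : 16 ≤ m) {k : ℕ} (hmL : m ≤ L k) (hk2 : 2*k ≤ m)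
    (hfin : ({ w : Fin m → Fin 2 | ∃ j, ∀ t : Fin m, w t = xx (j + (t:ℕ)) }).Finite) :
    (m/4) * (m/4) ≤ ({ w : Fin m → Fin 2 | ∃ j, ∀ t : Fin m, w t = xx (j + (t:ℕ)) }).ncard := by
  set M := m/4 with hM
  set T : Finset (ℕ×ℕ) := Finset.range M ×ˢ Finset.Ico k (k+M) with hT
  have hmemT : ∀ p : ℕ×ℕ, p ∈ T → p.1 < M ∧ k ≤ p.2 ∧ p.2 < k + M := by
    intro p hp
    rw [hT, Finset.mem_product, Finset.mem_range, Finset.mem_Ico] at hp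
    exact ⟨hp.1, hp.2.1, hp.2.2⟩
  have hcond : ∀ p : ℕ×ℕ, p ∈ T → k ≤ p.2 ∧ p.1 + p.2 < m := by
    intro p hp
    obtain ⟨ha, hb, hc⟩ := hmemT p hp
    omega
  have hsub : Fm k m '' ↑T ⊆ { w : Fin m → Fin 2 | ∃ j, ∀ t : Fin m, w t = xx (j + (t:ℕ)) } := by
    rintro w ⟨⟨u,z⟩, hmem, rfl⟩
    obtain ⟨hz1, hz2⟩ := hcond (u,z) hmem
    obtain ⟨j, hj⟩ := lower_occur hmL hz1 hz2
    exact ⟨j, hj⟩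
  have hinj : Set.InjOn (Fm k m) ↑T := by
    rintro ⟨u,z⟩ hp ⟨u',z'⟩ hq h
    obtain ⟨hz1, hz2⟩ := hcond (u,z) hp
    obtain ⟨hz1', hz2'⟩ := hcond (u',z') hq
    obtain ⟨e1, e2⟩ := Fm_inj hmL hz1 hz2 hz1' hz2' h
    simp only at e1 e2
    exact Prod.ext e1 e2
  calc M * M = T.card := by
        rw [hT, Finset.card_product, Finset.card_range, Nat.card_Ico,
          Nat.add_sub_cancel_left]
    _ = (↑T : Set (ℕ×ℕ)).ncard := (Set.ncard_coe_finset T).symm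
    _ = (Fm k m '' ↑T).ncard := (Set.ncard_image_of_injOn hinj).symm
    _ ≤ _ := Set.ncard_le_ncard hsub hfin

end P2X

open P2X

/-- The subword complexity of `𝔭₂` (i.e. of `1/Π₂`) is `Θ(m²)`. -/
theorem complexity_p2_theta_quadratic :
    ∃ c₁ c₂ : ℝ, 0 < c₁ ∧ 0 < c₂ ∧ ∃ m₀ : ℕ, ∀ m : ℕ, m₀ ≤ m →
      c₁ * (m : ℝ) ^ 2 ≤ (subwordComplexity p2 m : ℝ) ∧
      (subwordComplexity p2 m : ℝ) ≤ c₂ * (m : ℝ) ^ 2 := by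
  refine ⟨1/64, 10, by norm_num, by norm_num, 16, fun m hm => ?_⟩
  have hm1 : 1 ≤ m := by omega
  have hex : ∃ k, m ≤ L k := exL m
  set k := Nat.find hex with hk
  have hkL : m ≤ L k := Nat.find_spec hex
  have hmin : ∀ k' < k, L k' < m := by
    intro k' hk'
    have := Nat.find_min hex hk'
    omega
  have hLb := k_upper hm1 hkL hmin
  have hk2 := k_small hm hmin
  have hval : subwordComplexity p2 m
      = ({ w : Fin m → Fin 2 | ∃ j, ∀ t : Fin m, w t = xx (j + (t:ℕ)) }).ncard := by
    unfold subwordComplexity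
    rw [p2_eq_xx]
  obtain ⟨hfin, hub⟩ := upper_count hm1 hkL
  have hlb := lower_count hm hkL hk2 hfin
  obtain ⟨N, hgen⟩ : ∃ N, ({ w : Fin m → Fin 2 | ∃ j, ∀ t : Fin m, w t = xx (j + (t:ℕ)) }).ncard = N :=
    ⟨_, rfl⟩
  rw [hgen] at hub hlb
  rw [hval, hgen]
  clear hval hgen hfin
  constructor
  · -- lower bound
    have h8 : m ≤ 8 * (m/4) := by omega
    have hmm : m*m ≤ 64 * N := by
      calc m*m ≤ (8*(m/4)) * (8*(m/4)) := Nat.mul_le_mul h8 h8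
        _ = 64 * ((m/4) * (m/4)) := by ring
        _ ≤ 64 * N := by
            have := hlb
            omega
    have hcast : (m:ℝ)*(m:ℝ) ≤ 64 * (N:ℝ) := by exact_mod_cast hmm
    have hsq : (m:ℝ)^2 = (m:ℝ)*(m:ℝ) := sq (m:ℝ)
    rw [hsq]
    linarith
  · -- upper bound
    have h10 : N ≤ 10*(m*m) := by
      have e1 : (L k + 1)*(m+1) ≤ (4*m+1)*(m+1) := by
        have h4 : L k + 1 ≤ 4*m + 1 := by omega
        exact Nat.mul_le_mul_right _ h4
      have e2 : (4*m+1)*(m+1) ≤ 10*(m*m) := by nlinarith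
      omega
    have hcast : (N:ℝ) ≤ 10 * ((m:ℝ)*(m:ℝ)) := by exact_mod_cast h10
    have hsq : (m:ℝ)^2 = (m:ℝ)*(m:ℝ) := sq (m:ℝ)
    rw [hsq]
    linarith
end

section
/- For every integer m ≥ 1, the subword complexity of 𝔭₂ satisfies the upper bound (p(𝔭₂, m) : ℝ) ≤ (m − log₂ m)(m + log₂ m + 2)/2 + 2m, where log₂ denotes the base-2 logarithm (Real.logb 2). -/
namespace P2Aux

def Q (n : ℕ) : Prop := ∃ J : Finset ℕ, (∀ j ∈ J, 1 ≤ j) ∧ n = ∑ j ∈ J, (2 ^ j - 1)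

open Classical in
lemma p2_def (n : ℕ) : p2 n = if Q n then 1 else 0 := rfl

lemma p2_eq_iff {n n' : ℕ} (h : Q n ↔ Q n') : p2 n = p2 n' := by
  classical
  rw [p2_def, p2_def]
  by_cases hq : Q n
  · rw [if_pos hq, if_pos (h.mp hq)]
  · rw [if_neg hq, if_neg (fun h' => hq (h.mpr h'))]

lemma p2_eq_zero {n : ℕ} (h : ¬ Q n) : p2 n = 0 := by
  classical
  rw [p2_def, if_neg h]

lemma sum_Icc (K : ℕ) : ∑ j ∈ Finset.Icc 1 K, (2 ^ j - 1) = 2 ^ (K + 1) - 2 - K := by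
  induction K with
  | zero => simp
  | succ K ih =>
    rw [Finset.sum_Icc_succ_top (by omega)]
    have hp : K + 2 ≤ 2 ^ (K + 1) := by
      have := Nat.lt_two_pow_self (n := (K + 1)); omega
    have he : (2:ℕ) ^ (K + 2) = 2 * 2 ^ (K + 1) := by rw [pow_succ]; ring
    omega

lemma sum_le {J : Finset ℕ} {K : ℕ} (h1 : ∀ j ∈ J, 1 ≤ j) (h2 : ∀ j ∈ J, j ≤ K) :
    ∑ j ∈ J, (2 ^ j - 1) ≤ 2 ^ (K + 1) - 2 - K := by
  have hsub : J ⊆ Finset.Icc 1 K := fun j hj => Finset.mem_Icc.mpr ⟨h1 j hj, h2 j hj⟩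
  calc ∑ j ∈ J, (2 ^ j - 1) ≤ ∑ j ∈ Finset.Icc 1 K, (2 ^ j - 1) :=
        Finset.sum_le_sum_of_subset hsub
    _ = _ := sum_Icc K

lemma mem_le {J : Finset ℕ} {n : ℕ} (hn : n = ∑ j ∈ J, (2 ^ j - 1)) {j : ℕ} (hj : j ∈ J) :
    2 ^ j - 1 ≤ n := by
  rw [hn]
  exact Finset.single_le_sum (f := fun j => 2 ^ j - 1) (fun _ _ => Nat.zero_le _) hj

lemma shiftQ (k n : ℕ) (h1 : 2 ^ (k + 1) ≤ n + 1) (h2 : n + 3 ≤ 2 ^ (k + 2)) :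
    Q n ↔ Q (n - (2 ^ (k + 1) - 1)) := by
  have hp1 : k + 2 ≤ 2 ^ (k + 1) := by have := Nat.lt_two_pow_self (n := (k + 1)); omega
  have hp2 : (2:ℕ) ^ (k + 2) = 2 * 2 ^ (k + 1) := by rw [pow_succ]; ring
  constructor
  · rintro ⟨J, hJ1, hJ2⟩
    have hmem : k + 1 ∈ J := by
      by_contra hk
      have hub : ∀ j ∈ J, j ≤ k := by
        intro j hj
        by_contra hgt
        have hle := mem_le hJ2 hj
        have hne : j ≠ k + 1 := fun e => hk (e ▸ hj)
        have hj2 : k + 2 ≤ j := by omega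
        have hpj : 2 ^ (k + 2) ≤ 2 ^ j := Nat.pow_le_pow_right (by norm_num) hj2
        omega
      have hs := sum_le hJ1 hub
      omega
    refine ⟨J.erase (k + 1), fun j hj => hJ1 j (Finset.mem_of_mem_erase hj), ?_⟩
    have hsum : 2 ^ (k + 1) - 1 + ∑ j ∈ J.erase (k + 1), (2 ^ j - 1) = ∑ j ∈ J, (2 ^ j - 1) :=
      Finset.add_sum_erase J (fun j => 2 ^ j - 1) hmem
    omega
  · rintro ⟨J, hJ1, hJ2⟩
    have hnotmem : k + 1 ∉ J := by
      intro hmem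
      have := mem_le hJ2 hmem
      omega
    refine ⟨insert (k + 1) J, ?_, ?_⟩
    · intro j hj
      rcases Finset.mem_insert.mp hj with h | h
      · omega
      · exact hJ1 j h
    · rw [Finset.sum_insert hnotmem]
      omega

lemma notQ_zone (k n : ℕ) (h1 : 2 ^ (k + 2) ≤ n + k + 2) (h2 : n + 2 ≤ 2 ^ (k + 2)) : ¬ Q n := by
  rintro ⟨J, hJ1, hJ2⟩
  have hp1 : k + 3 ≤ 2 ^ (k + 2) := by have := Nat.lt_two_pow_self (n := (k + 2)); omega
  have hub : ∀ j ∈ J, j ≤ k + 1 := by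
    intro j hj
    by_contra hgt
    have hle := mem_le hJ2 hj
    have hpj : 2 ^ (k + 2) ≤ 2 ^ j := Nat.pow_le_pow_right (by norm_num) (by omega)
    omega
  have hs := sum_le hJ1 hub
  have he : (2:ℕ) ^ (k + 1 + 1) = 2 ^ (k + 2) := by norm_num
  rw [he] at hs
  omega

lemma p2_shift (k n : ℕ) (h1 : 2 ^ (k + 1) ≤ n + 1) (h2 : n + 3 ≤ 2 ^ (k + 2)) :
    p2 n = p2 (n - (2 ^ (k + 1) - 1)) :=
  p2_eq_iff (shiftQ k n h1 h2)

lemma p2_zero (k n : ℕ) (h1 : 2 ^ (k + 2) ≤ n + k + 2) (h2 : n + 2 ≤ 2 ^ (k + 2)) : p2 n = 0 :=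
  p2_eq_zero (notQ_zone k n h1 h2)

lemma p2_prefix (k t : ℕ) (h : t + 2 ≤ 2 ^ (k + 2)) : p2 (2 ^ (k + 2) - 1 + t) = p2 t := by
  have hp1 : (2:ℕ) ≤ 2 ^ (k + 2) := by have := Nat.lt_two_pow_self (n := (k + 2)); omega
  have he2 : (2:ℕ) ^ (k + 1 + 1) = 2 ^ (k + 2) := by norm_num
  have he3 : (2:ℕ) ^ (k + 1 + 2) = 2 * 2 ^ (k + 2) := by
    rw [show k + 1 + 2 = (k + 2) + 1 from rfl, pow_succ]; ring
  have hs := p2_shift (k + 1) (2 ^ (k + 2) - 1 + t) (by rw [he2]; omega) (by rw [he3]; omega)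
  rw [he2] at hs
  rw [hs]
  congr 1
  omega

end P2Aux

namespace P2Aux

lemma straddle (m k s : ℕ) (hs1 : s ≤ k) (hs2 : s + 1 ≤ m) (hm : m ≤ 2 ^ (k + 2))
    (i : ℕ) (hi : i < m) :
    p2 (2 ^ (k + 2) - 2 - s + i) = if i ≤ s then 0 else p2 (i - s - 1) := by
  have hp : k + 4 ≤ 2 ^ (k + 2) := by
    have h1 := Nat.lt_two_pow_self (n := k)
    have h2 : (2:ℕ) ^ (k + 2) = 4 * 2 ^ k := by rw [pow_succ, pow_succ]; ring
    omega
  by_cases hle : i ≤ s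
  · rw [if_pos hle]
    exact p2_zero k _ (by omega) (by omega)
  · rw [if_neg hle]
    have he : 2 ^ (k + 2) - 2 - s + i = 2 ^ (k + 2) - 1 + (i - s - 1) := by omega
    rw [he]
    exact p2_prefix k _ (by omega)

end P2Aux

namespace P2Aux

lemma pow_ge (k : ℕ) : k + 4 ≤ 2 ^ (k + 2) := by
  have h1 := Nat.lt_two_pow_self (n := k)
  have h2 : (2:ℕ) ^ (k + 2) = 4 * 2 ^ k := by rw [pow_succ, pow_succ]; ring
  omega

def lo (m k : ℕ) : ℕ := if 2 ^ (k + 2) < m then 0 else k + 1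

noncomputable def Dset (m : ℕ) : Finset ℕ :=
  insert 0 (((Finset.range m).image fun s => 2 ^ (m - 1 + 2) - 2 - s) ∪
    (Finset.range (m - 1)).biUnion fun k =>
      (Finset.Icc (lo m k) (min (m - 1) (2 ^ (k + 1) - 1))).image fun s => 2 ^ (k + 2) - 2 - s)

lemma straddle_eq (m k s : ℕ) (hs1 : s ≤ k) (hs2 : s + 1 ≤ m) (hm : m ≤ 2 ^ (k + 2))
    (i : Fin m) : p2 (2 ^ (k + 2) - 2 - s + i) = p2 (2 ^ (m - 1 + 2) - 2 - s + i) := by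
  have hmm : m ≤ 2 ^ (m - 1 + 2) := by
    have e : m - 1 + 2 = m + 1 := by omega
    rw [e, pow_succ]
    have := Nat.lt_two_pow_self (n := m)
    omega
  rw [straddle m k s hs1 hs2 hm i i.isLt, straddle m (m - 1) s (by omega) hs2 hmm i i.isLt]

lemma reduce (m : ℕ) (hm : 1 ≤ m) (j : ℕ) :
    ∃ j' ∈ Dset m, ∀ i : Fin m, p2 (j' + i) = p2 (j + i) := by
  induction j using Nat.strong_induction_on with
  | _ j IH =>
  rcases Nat.eq_zero_or_pos j with rfl | hj
  · exact ⟨0, Finset.mem_insert_self _ _, fun i => rfl⟩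
  have hL1 : 1 ≤ Nat.log 2 (j + 1) :=
    Nat.le_log_of_pow_le (by norm_num) (by omega)
  set k := Nat.log 2 (j + 1) - 1 with hk
  have hkL : k + 1 = Nat.log 2 (j + 1) := by omega
  have hlow : 2 ^ (k + 1) ≤ j + 1 := by rw [hkL]; exact Nat.pow_log_le_self 2 (by omega)
  have hhigh : j + 1 < 2 ^ (k + 2) := by
    have h := Nat.lt_pow_succ_log_self (by norm_num : 1 < 2) (j + 1)
    rw [← hkL] at h
    exact h
  have hp1 : k + 2 ≤ 2 ^ (k + 1) := by have := Nat.lt_two_pow_self (n := (k + 1)); omega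
  have hp2 : (2:ℕ) ^ (k + 2) = 2 * 2 ^ (k + 1) := by rw [pow_succ]; ring
  by_cases hcase : j + m + 2 ≤ 2 ^ (k + 2)
  · obtain ⟨j', hD, heq⟩ := IH (j - (2 ^ (k + 1) - 1)) (by omega)
    refine ⟨j', hD, fun i => ?_⟩
    rw [heq i]
    have hs := p2_shift k (j + i) (by omega) (by have := i.isLt; omega)
    rw [hs]
    congr 1
    omega
  · set s := 2 ^ (k + 2) - 2 - j with hs
    have hjs : j = 2 ^ (k + 2) - 2 - s := by omega
    have hsm : s + 1 ≤ m := by omega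
    have hs2 : s ≤ 2 ^ (k + 1) - 1 := by omega
    by_cases hsk : s ≤ k
    · by_cases hmk : m ≤ 2 ^ (k + 2)
      · refine ⟨2 ^ (m - 1 + 2) - 2 - s, ?_, fun i => ?_⟩
        · refine Finset.mem_insert_of_mem (Finset.mem_union_left _ ?_)
          exact Finset.mem_image.mpr ⟨s, Finset.mem_range.mpr (by omega), rfl⟩
        · rw [hjs]
          exact (straddle_eq m k s hsk hsm hmk i).symm
      · refine ⟨j, ?_, fun i => rfl⟩
        refine Finset.mem_insert_of_mem (Finset.mem_union_right _ ?_)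
        have hpk := pow_ge k
        refine Finset.mem_biUnion.mpr ⟨k, Finset.mem_range.mpr (by omega), ?_⟩
        refine Finset.mem_image.mpr ⟨s, ?_, hjs.symm⟩
        rw [Finset.mem_Icc, lo, if_pos (by omega)]
        omega
    · refine ⟨j, ?_, fun i => rfl⟩
      refine Finset.mem_insert_of_mem (Finset.mem_union_right _ ?_)
      refine Finset.mem_biUnion.mpr ⟨k, Finset.mem_range.mpr (by omega), ?_⟩
      refine Finset.mem_image.mpr ⟨s, ?_, hjs.symm⟩
      rw [Finset.mem_Icc, lo]
      split
      · omega
      · omega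

end P2Aux

namespace P2Aux

lemma geom2 (n : ℕ) : ∑ k ∈ Finset.range n, 2 ^ (k + 2) = 2 ^ (n + 2) - 4 := by
  induction n with
  | zero => simp
  | succ n ih =>
    rw [Finset.sum_range_succ, ih]
    have h1 : 4 ≤ (2:ℕ) ^ (n + 2) := by have := pow_ge n; omega
    have h2 : (2:ℕ) ^ (n + 1 + 2) = 2 * 2 ^ (n + 2) := by
      rw [show n + 1 + 2 = (n + 2) + 1 from rfl, pow_succ]; ring
    omega

lemma sumrev (n : ℕ) : ∑ k ∈ Finset.range n, 2 * (n - k) = n * (n + 1) := by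
  induction n with
  | zero => simp
  | succ n ih =>
    have e : ∀ k ∈ Finset.range (n + 1), 2 * (n + 1 - k) = 2 * (n - k) + 2 := by
      intro k hk
      have := Finset.mem_range.mp hk
      omega
    rw [Finset.sum_congr rfl e, Finset.sum_add_distrib, Finset.sum_const, Finset.card_range,
      Finset.sum_range_succ, ih]
    have : n - n = 0 := by omega
    rw [this]
    ring

lemma card_Dset (m : ℕ) (hm : 1 ≤ m) :
    2 * (Dset m).card ≤
      2 + 2 * m + (2 ^ (Nat.log 2 m + 2) - 4) + (m - 1 - Nat.log 2 m) * (m - Nat.log 2 m) := by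
  set L := Nat.log 2 m with hLdef
  have hpowm : 2 ^ L ≤ m := Nat.pow_log_le_self 2 (by omega)
  have hLltm : L < m := by have := Nat.lt_two_pow_self (n := L); omega
  -- step 1 : card bound by sum of Icc cards
  have h1 : (Dset m).card ≤
      1 + (m + ∑ k ∈ Finset.range (m - 1),
        (Finset.Icc (lo m k) (min (m - 1) (2 ^ (k + 1) - 1))).card) := by
    refine le_trans (Finset.card_insert_le _ _) ?_
    have h2 := Finset.card_union_le
      ((Finset.range m).image fun s => 2 ^ (m - 1 + 2) - 2 - s)
      ((Finset.range (m - 1)).biUnion fun k =>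
        (Finset.Icc (lo m k) (min (m - 1) (2 ^ (k + 1) - 1))).image fun s => 2 ^ (k + 2) - 2 - s)
    have h3 : ((Finset.range m).image fun s => 2 ^ (m - 1 + 2) - 2 - s).card ≤ m := by
      refine le_trans (Finset.card_image_le) ?_
      simp
    have h4 : ((Finset.range (m - 1)).biUnion fun k =>
        (Finset.Icc (lo m k) (min (m - 1) (2 ^ (k + 1) - 1))).image fun s => 2 ^ (k + 2) - 2 - s).card
        ≤ ∑ k ∈ Finset.range (m - 1),
          (Finset.Icc (lo m k) (min (m - 1) (2 ^ (k + 1) - 1))).card := by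
      refine le_trans Finset.card_biUnion_le ?_
      exact Finset.sum_le_sum fun k _ => Finset.card_image_le
    omega
  -- step 2 : bound the doubled sum
  have h5 : 2 * ∑ k ∈ Finset.range (m - 1),
      (Finset.Icc (lo m k) (min (m - 1) (2 ^ (k + 1) - 1))).card
      ≤ (2 ^ (L + 2) - 4) + (m - 1 - L) * (m - L) := by
    have hsplit : ∑ k ∈ Finset.Ico 0 L, 2 * (Finset.Icc (lo m k) (min (m - 1) (2 ^ (k + 1) - 1))).card
        + ∑ k ∈ Finset.Ico L (m - 1), 2 * (Finset.Icc (lo m k) (min (m - 1) (2 ^ (k + 1) - 1))).card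
        = ∑ k ∈ Finset.Ico 0 (m - 1), 2 * (Finset.Icc (lo m k) (min (m - 1) (2 ^ (k + 1) - 1))).card :=
      Finset.sum_Ico_consecutive _ (Nat.zero_le _) (by omega)
    have hA : ∑ k ∈ Finset.Ico 0 L, 2 * (Finset.Icc (lo m k) (min (m - 1) (2 ^ (k + 1) - 1))).card
        ≤ 2 ^ (L + 2) - 4 := by
      rw [← geom2 L, ← Finset.range_eq_Ico]
      refine Finset.sum_le_sum fun k _ => ?_
      rw [Nat.card_Icc]
      have hp : (2:ℕ) ^ (k + 2) = 2 * 2 ^ (k + 1) := by rw [pow_succ]; ring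
      have hmin : min (m - 1) (2 ^ (k + 1) - 1) ≤ 2 ^ (k + 1) - 1 := min_le_right _ _
      have h1 : (1:ℕ) ≤ 2 ^ (k + 1) := Nat.one_le_two_pow
      omega
    have hB : ∑ k ∈ Finset.Ico L (m - 1), 2 * (Finset.Icc (lo m k) (min (m - 1) (2 ^ (k + 1) - 1))).card
        ≤ (m - 1 - L) * (m - L) := by
      have hterm : ∀ k ∈ Finset.Ico L (m - 1),
          2 * (Finset.Icc (lo m k) (min (m - 1) (2 ^ (k + 1) - 1))).card ≤ 2 * (m - 1 - k) := by
        intro k hk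
        obtain ⟨hk1, hk2⟩ := Finset.mem_Ico.mp hk
        have hmlt : m < 2 ^ (L + 1) := Nat.lt_pow_succ_log_self (by norm_num) m
        have hple : (2:ℕ) ^ (L + 1) ≤ 2 ^ (k + 2) := Nat.pow_le_pow_right (by norm_num) (by omega)
        have hlo : lo m k = k + 1 := by rw [lo, if_neg (by omega)]
        rw [hlo, Nat.card_Icc]
        omega
      refine le_trans (Finset.sum_le_sum hterm) ?_
      rw [Finset.sum_Ico_eq_sum_range]
      have he : ∀ k ∈ Finset.range (m - 1 - L), 2 * (m - 1 - (L + k)) = 2 * ((m - 1 - L) - k) := by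
        intro k _
        omega
      rw [Finset.sum_congr rfl he, sumrev]
      have : m - 1 - L + 1 = m - L := by omega
      rw [this]
    have hmul : 2 * ∑ k ∈ Finset.range (m - 1),
        (Finset.Icc (lo m k) (min (m - 1) (2 ^ (k + 1) - 1))).card
        = ∑ k ∈ Finset.Ico 0 (m - 1), 2 * (Finset.Icc (lo m k) (min (m - 1) (2 ^ (k + 1) - 1))).card := by
      rw [← Finset.range_eq_Ico, Finset.mul_sum]
    omega
  omega

lemma subword_le_card (m : ℕ) (hm : 1 ≤ m) : subwordComplexity p2 m ≤ (Dset m).card := by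
  have hset : { w : Fin m → Fin 2 | ∃ j : ℕ, ∀ i : Fin m, w i = p2 (j + i) }
      = (fun j => fun i : Fin m => p2 (j + i)) '' ↑(Dset m) := by
    apply Set.Subset.antisymm
    · rintro w ⟨j, hw⟩
      obtain ⟨j', hj'D, hj'⟩ := reduce m hm j
      exact ⟨j', hj'D, funext fun i => (hj' i).trans (hw i).symm⟩
    · rintro w ⟨j', _, rfl⟩
      exact ⟨j', fun i => rfl⟩
  rw [subwordComplexity, hset]
  calc ((fun j => fun i : Fin m => p2 (j + i)) '' ↑(Dset m)).ncard
      ≤ (↑(Dset m) : Set ℕ).ncard := Set.ncard_image_le (Dset m).finite_toSet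
    _ = (Dset m).card := Set.ncard_coe_finset _

end P2Aux

namespace P2Aux

lemma lt_pow_pred (m : ℕ) (hm : 3 ≤ m) : m < 2 ^ (m - 1) := by
  induction m, hm using Nat.le_induction with
  | base => norm_num
  | succ n hn ih =>
    have h2 : (2:ℕ) ^ (n + 1 - 1) = 2 * 2 ^ (n - 1) := by
      rw [show n + 1 - 1 = (n - 1) + 1 by omega, pow_succ']
    omega

end P2Aux



/-- Upper bound for the subword complexity of `𝔭₂`:
`p(𝔭₂, m) ≤ (m − log₂ m)(m + log₂ m + 2)/2 + 2m`. -/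
theorem complexity_p2_upper_bound (m : ℕ) (hm : 1 ≤ m) :
    (subwordComplexity p2 m : ℝ) ≤
      ((m : ℝ) - Real.logb 2 m) * ((m : ℝ) + Real.logb 2 m + 2) / 2 + 2 * m := by
  have hsub := P2Aux.subword_le_card m hm
  have hcard := P2Aux.card_Dset m hm
  set L := Nat.log 2 m with hLdef
  have hpowm : 2 ^ L ≤ m := Nat.pow_log_le_self 2 (by omega)
  have hpow4 : (2:ℕ) ^ (L + 2) ≤ 4 * m := by
    have h : (2:ℕ) ^ (L + 2) = 4 * 2 ^ L := by rw [pow_succ, pow_succ]; ring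
    omega
  have hkey : 2 * subwordComplexity p2 m ≤ 6 * m - 2 + (m - 1 - L) * (m - L) := by omega
  rcases Nat.lt_or_ge m 3 with hm3 | hm3
  · -- m = 1 or m = 2
    interval_cases m
    · have hL0 : L = 0 := by
        have h := Nat.log_lt_of_lt_pow (b := 2) (show (1:ℕ) ≠ 0 by omega)
          (show (1:ℕ) < 2 ^ 1 by norm_num)
        omega
      rw [hL0] at hkey
      norm_num at hkey
      have hp0 : subwordComplexity p2 1 ≤ 2 := by omega
      have hp : (subwordComplexity p2 1 : ℝ) ≤ 2 := by exact_mod_cast hp0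
      push_cast
      rw [Real.logb_one]
      linarith
    · have hL1 : L = 1 := by
        have h1 := Nat.log_lt_of_lt_pow (b := 2) (show (2:ℕ) ≠ 0 by omega)
          (show (2:ℕ) < 2 ^ 2 by norm_num)
        have h2 := Nat.le_log_of_pow_le (by norm_num : 1 < 2) (show (2:ℕ) ^ 1 ≤ 2 by norm_num)
        omega
      rw [hL1] at hkey
      norm_num at hkey
      have hp0 : subwordComplexity p2 2 ≤ 5 := by omega
      have hp : (subwordComplexity p2 2 : ℝ) ≤ 5 := by exact_mod_cast hp0
      push_cast
      rw [Real.logb_self_eq_one (by norm_num)]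
      linarith
  · -- m ≥ 3
    have hmp := P2Aux.lt_pow_pred m hm3
    have hLm2 : L + 2 ≤ m := by
      have := Nat.log_lt_of_lt_pow (by omega : m ≠ 0) hmp
      omega
    have hlb0 : 0 ≤ Real.logb 2 m :=
      Real.logb_nonneg (by norm_num) (by exact_mod_cast hm)
    have hlbu : Real.logb 2 m ≤ (L : ℝ) + 1 := by
      have h := Nat.lt_pow_succ_log_self (by norm_num : 1 < 2) m
      have h2 : (m:ℝ) ≤ (2:ℝ) ^ (L + 1) := by exact_mod_cast h.le
      have h3 : Real.logb 2 (m:ℝ) ≤ Real.logb 2 ((2:ℝ) ^ (L + 1)) :=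
        Real.logb_le_logb_of_le (by norm_num) (by positivity) h2
      rwa [Real.logb_pow, Real.logb_self_eq_one (by norm_num), mul_one,
        Nat.cast_add, Nat.cast_one] at h3
    have hLr : ((L:ℝ)) + 2 ≤ (m:ℝ) := by exact_mod_cast hLm2
    have h6 : ((6 * m - 2 : ℕ) : ℝ) = 6 * (m:ℝ) - 2 := by
      rw [Nat.cast_sub (by omega)]; push_cast; ring
    have hprod1 : ((m - 1 - L : ℕ) : ℝ) = (m:ℝ) - 1 - (L:ℝ) := by
      rw [Nat.cast_sub (by omega : L ≤ m - 1), Nat.cast_sub (by omega : 1 ≤ m), Nat.cast_one]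
    have hprod2 : ((m - L : ℕ) : ℝ) = (m:ℝ) - (L:ℝ) := by
      rw [Nat.cast_sub (by omega : L ≤ m)]
    have hR : 2 * (subwordComplexity p2 m : ℝ) ≤
        6 * (m:ℝ) - 2 + ((m:ℝ) - 1 - L) * ((m:ℝ) - L) := by
      calc 2 * (subwordComplexity p2 m : ℝ) = ((2 * subwordComplexity p2 m : ℕ) : ℝ) := by
            push_cast; ring
        _ ≤ ((6 * m - 2 + (m - 1 - L) * (m - L) : ℕ) : ℝ) := by exact_mod_cast hkey
        _ = _ := by rw [Nat.cast_add, h6, Nat.cast_mul, hprod1, hprod2]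
    nlinarith [mul_nonneg (by linarith : (0:ℝ) ≤ 2 * (L:ℝ) + 1) (by linarith : (0:ℝ) ≤ (m:ℝ) - (L:ℝ) - 2),
      mul_nonneg (by linarith : (0:ℝ) ≤ (L:ℝ) + 1 - Real.logb 2 m)
        (by linarith : (0:ℝ) ≤ (L:ℝ) + 1 + Real.logb 2 m)]
end

section
/- For every integer m ≥ 1, the subword complexity of 𝔭₂ satisfies the lower bound (p(𝔭₂, m) : ℝ) ≥ (m − log₂ m)(m − log₂ m + 1)/2, where log₂ denotes the base-2 logarithm (Real.logb 2). -/
def SP (n : ℕ) : Prop := ∃ J : Finset ℕ, (∀ j ∈ J, 1 ≤ j) ∧ n = ∑ j ∈ J, (2 ^ j - 1)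

lemma p2_of {n : ℕ} (h : SP n) : p2 n = 1 := by
  simp only [p2]; exact if_pos h

lemma p2_not {n : ℕ} (h : ¬ SP n) : p2 n = 0 := by
  simp only [p2]; exact if_neg h

lemma sum_Icc_pow (L : ℕ) : ∑ j ∈ Finset.Icc 1 L, (2 ^ j - 1) + (L + 2) = 2 ^ (L + 1) := by
  induction L with
  | zero => simp
  | succ L ih =>
    rw [Finset.sum_Icc_succ_top (by omega)]
    have h1 : (1:ℕ) ≤ 2 ^ (L+1) := Nat.one_le_two_pow
    have : (2:ℕ) ^ (L+2) = 2 ^ (L+1) + 2 ^ (L+1) := by ring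
    omega

lemma term_le {n : ℕ} {J : Finset ℕ} (hn : n = ∑ j ∈ J, (2 ^ j - 1)) {j : ℕ} (hj : j ∈ J) :
    2 ^ j - 1 ≤ n := hn ▸ Finset.single_le_sum (f := fun j => 2 ^ j - 1) (fun _ _ => Nat.zero_le _) hj

lemma sum_bound {J : Finset ℕ} (h1 : ∀ j ∈ J, 1 ≤ j) (hL : ∀ j ∈ J, j ≤ L) :
    ∑ j ∈ J, (2 ^ j - 1) + (L + 2) ≤ 2 ^ (L + 1) := by
  have hsub : J ⊆ Finset.Icc 1 L := fun j hj => Finset.mem_Icc.2 ⟨h1 j hj, hL j hj⟩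
  have h2 : ∑ j ∈ J, (2 ^ j - 1) ≤ ∑ j ∈ Finset.Icc 1 L, (2 ^ j - 1) :=
    Finset.sum_le_sum_of_subset hsub
  have := sum_Icc_pow L
  omega

lemma idx_le {J : Finset ℕ} {n L : ℕ} (hn : n = ∑ j ∈ J, (2 ^ j - 1)) (hlt : n < 2 ^ (L + 1) - 1)
    {j : ℕ} (hj : j ∈ J) : j ≤ L := by
  have h := term_le hn hj
  have : 2 ^ j < 2 ^ (L + 1) := by have : (1:ℕ) ≤ 2 ^ j := Nat.one_le_two_pow; omega
  have := (Nat.pow_lt_pow_iff_right (a := 2) one_lt_two).1 this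
  omega

lemma SP_zero : SP 0 := ⟨∅, by simp, by simp⟩

lemma SP_shift {n M : ℕ} (hlt : n < 2 ^ (M + 1) - 1) : SP (2 ^ (M + 1) - 1 + n) ↔ SP n := by
  constructor
  · rintro ⟨J, h1, hsum⟩
    have hM1 : M + 1 ∈ J := by
      by_contra hM1
      have hle : ∀ j ∈ J, j ≤ M := by
        intro j hj
        have : j ≤ M + 1 := by
          refine idx_le hsum ?_ hj
          have h1' : (1:ℕ) ≤ 2 ^ (M+1) := Nat.one_le_two_pow
          have : (2:ℕ) ^ (M+2) = 2 ^ (M+1) + 2 ^ (M+1) := by ring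
          omega
        rcases Nat.lt_or_ge j (M+1) with h | h
        · omega
        · exact absurd (by omega : j = M + 1) (fun e => hM1 (e ▸ hj))
      have := sum_bound h1 hle
      have hM : M < 2 ^ (M+1) := lt_of_lt_of_le (Nat.lt_two_pow_self (n := M)) (Nat.pow_le_pow_right (by omega) (by omega))
      omega
    refine ⟨J.erase (M + 1), fun j hj => h1 j (Finset.mem_of_mem_erase hj), ?_⟩
    have he : 2 ^ (M+1) - 1 + ∑ j ∈ J.erase (M+1), (2 ^ j - 1) = ∑ j ∈ J, (2 ^ j - 1) :=
      Finset.add_sum_erase J (fun j => 2 ^ j - 1) hM1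
    have h1' : (1:ℕ) ≤ 2 ^ (M+1) := Nat.one_le_two_pow
    omega
  · rintro ⟨J, h1, hsum⟩
    have hM1 : M + 1 ∉ J := by
      intro hM1
      have := term_le hsum hM1
      omega
    refine ⟨insert (M + 1) J, ?_, ?_⟩
    · intro j hj; rcases Finset.mem_insert.1 hj with rfl | hj; omega; exact h1 j hj
    · rw [Finset.sum_insert hM1]; omega

lemma SP_not_double (M : ℕ) : ¬ SP (2 ^ (M + 2) - 2) := by
  rintro ⟨J, h1, hsum⟩
  have h2 : (2:ℕ) ^ (M+2) = 2 ^ (M+1) + 2 ^ (M+1) := by ring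
  have h1' : (1:ℕ) ≤ 2 ^ (M+1) := Nat.one_le_two_pow
  have hle : ∀ j ∈ J, j ≤ M + 1 := fun j hj => idx_le hsum (by omega) hj
  have := sum_bound h1 hle
  omega

lemma SP_tail {M i : ℕ} (hi : i ≤ M) : SP (2 ^ (M + 1) - 2 - i) ↔ i = M := by
  have h1' : (1:ℕ) ≤ 2 ^ (M+1) := Nat.one_le_two_pow
  have hM : M < 2 ^ (M+1) := lt_of_lt_of_le (Nat.lt_two_pow_self (n := M)) (Nat.pow_le_pow_right (by omega) (by omega))
  constructor
  · rintro ⟨J, h1, hsum⟩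
    have hle : ∀ j ∈ J, j ≤ M := fun j hj => idx_le hsum (by omega) hj
    have := sum_bound h1 hle
    omega
  · rintro rfl
    refine ⟨Finset.Icc 1 i, fun j hj => (Finset.mem_Icc.1 hj).1, ?_⟩
    have := sum_Icc_pow i
    omega

lemma p2_zero : p2 0 = 1 := p2_of SP_zero

lemma p2_shift {n M : ℕ} (h : n < 2 ^ (M + 1) - 1) : p2 (2 ^ (M + 1) - 1 + n) = p2 n := by
  rcases Classical.em (SP n) with hs | hs
  · rw [p2_of hs, p2_of ((SP_shift h).2 hs)]
  · rw [p2_not hs, p2_not (fun hc => hs ((SP_shift h).1 hc))]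

lemma p2_double (M : ℕ) : p2 (2 ^ (M + 2) - 2) = 0 := p2_not (SP_not_double M)

lemma p2_tail_eq (M : ℕ) : p2 (2 ^ (M + 1) - 2 - M) = 1 := p2_of ((SP_tail le_rfl).2 rfl)

lemma p2_tail_ne {M i : ℕ} (hi : i ≤ M) (hne : i ≠ M) : p2 (2 ^ (M + 1) - 2 - i) = 0 :=
  p2_not (fun h => hne ((SP_tail hi).1 h))
open Classical in
noncomputable def Fk (k : ℕ) : Finset (Fin k → Fin 2) :=
  Finset.univ.filter (fun w => ∃ j : ℕ, ∀ i : Fin k, w i = p2 (j + i))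

lemma mem_Fk {k : ℕ} {w : Fin k → Fin 2} :
    w ∈ Fk k ↔ ∃ j : ℕ, ∀ i : Fin k, w i = p2 (j + i) := by
  simp [Fk]

open Classical in
noncomputable def Sk (k : ℕ) : Finset (Fin k → Fin 2) :=
  Finset.univ.filter (fun w => Fin.snoc w 0 ∈ Fk (k+1) ∧ Fin.snoc w 1 ∈ Fk (k+1))

lemma mem_Sk {k : ℕ} {w : Fin k → Fin 2} :
    w ∈ Sk k ↔ Fin.snoc w 0 ∈ Fk (k+1) ∧ Fin.snoc w 1 ∈ Fk (k+1) := by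
  simp [Sk]

open Classical in
noncomputable def jw (k : ℕ) (w : Fin k → Fin 2) : ℕ :=
  if h : ∃ j : ℕ, ∀ i : Fin k, w i = p2 (j + i) then h.choose else 0

noncomputable def bw (k : ℕ) (w : Fin k → Fin 2) : Fin 2 := p2 (jw k w + k)

lemma ext_mem {k : ℕ} {w : Fin k → Fin 2} (h : w ∈ Fk k) :
    Fin.snoc w (bw k w) ∈ Fk (k+1) := by
  rw [mem_Fk] at h ⊢
  refine ⟨jw k w, ?_⟩
  have hspec : ∀ i : Fin k, w i = p2 (jw k w + i) := by
    rw [jw, dif_pos h]; exact h.choose_spec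
  intro i
  induction i using Fin.lastCases with
  | last => rw [Fin.snoc_last]; simp [bw]
  | cast i => rw [Fin.snoc_castSucc]; simpa using hspec i

lemma fin2_cases (x : Fin 2) : x = 0 ∨ x = 1 := by omega

lemma fin2_ne (x : Fin 2) : x ≠ 1 - x := by omega

lemma card_step (k : ℕ) : (Fk k).card + (Sk k).card ≤ (Fk (k+1)).card := by
  classical
  set A := (Fk k).image (fun w => (Fin.snoc w (bw k w) : Fin (k+1) → Fin 2)) with hA
  set B := (Sk k).image (fun w => (Fin.snoc w (1 - bw k w) : Fin (k+1) → Fin 2)) with hB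
  have hAsub : A ⊆ Fk (k+1) := by
    intro x hx
    obtain ⟨w, hw, rfl⟩ := Finset.mem_image.1 hx
    exact ext_mem hw
  have hBsub : B ⊆ Fk (k+1) := by
    intro x hx
    obtain ⟨w, hw, rfl⟩ := Finset.mem_image.1 hx
    rw [mem_Sk] at hw
    rcases fin2_cases (1 - bw k w) with h | h <;> rw [h]
    · exact hw.1
    · exact hw.2
  have hinj : ∀ (c : (Fin k → Fin 2) → Fin 2) (s : Finset (Fin k → Fin 2)),
      Set.InjOn (fun w => (Fin.snoc w (c w) : Fin (k+1) → Fin 2)) s := by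
    intro c s w hw w' hw' hww
    have := congrArg Fin.init hww
    simpa [Fin.init_snoc] using this
  have hcardA : A.card = (Fk k).card := Finset.card_image_of_injOn (hinj _ _)
  have hcardB : B.card = (Sk k).card := Finset.card_image_of_injOn (hinj _ _)
  have hdisj : Disjoint A B := by
    rw [Finset.disjoint_left]
    intro x hx hx'
    obtain ⟨w, hw, rfl⟩ := Finset.mem_image.1 hx
    obtain ⟨w', hw', heq⟩ := Finset.mem_image.1 hx'
    have hww : w' = w := by
      have := congrArg Fin.init heq
      simpa [Fin.init_snoc] using this
    subst hww
    have := congrArg (fun v => v (Fin.last k)) heq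
    simp only [Fin.snoc_last] at this
    exact fin2_ne _ this.symm
  calc (Fk k).card + (Sk k).card = A.card + B.card := by rw [hcardA, hcardB]
    _ = (A ∪ B).card := (Finset.card_union_of_disjoint hdisj).symm
    _ ≤ (Fk (k+1)).card := Finset.card_le_card (Finset.union_subset hAsub hBsub)

noncomputable def ww (M k : ℕ) : Fin k → Fin 2 := fun i => p2 (2 ^ (M+1) - 1 - k + i)

lemma pow_ge (M : ℕ) : M + 2 ≤ 2 ^ (M + 1) := by
  have h := Nat.lt_two_pow_self (n := M)
  have : (2:ℕ) ^ (M+1) = 2 ^ M + 2 ^ M := by ring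
  have h1 : (1:ℕ) ≤ 2 ^ M := Nat.one_le_two_pow
  omega

lemma ww_mem_Sk {k M : ℕ} (hk : k ≤ 2 ^ (M+1) - 1) : ww M k ∈ Sk k := by
  have hp := pow_ge M
  have hpow : (2:ℕ) ^ (M+2) = 2 ^ (M+1) + 2 ^ (M+1) := by ring
  rw [mem_Sk]
  constructor
  · -- followed by 0 : occurrence at j = 2^{M+1}-1 + (2^{M+1}-1-k)
    rw [mem_Fk]
    refine ⟨2 ^ (M+1) - 1 + (2 ^ (M+1) - 1 - k), ?_⟩
    intro i
    refine Fin.lastCases ?_ ?_ i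
    · rw [Fin.snoc_last]
      have harg : 2 ^ (M+1) - 1 + (2 ^ (M+1) - 1 - k) + (Fin.last k : ℕ) = 2 ^ (M+2) - 2 := by
        simp only [Fin.val_last]; omega
      rw [harg, p2_double]
    · intro i
      rw [Fin.snoc_castSucc]
      have hik : (i : ℕ) < k := i.isLt
      have harg : 2 ^ (M+1) - 1 + (2 ^ (M+1) - 1 - k) + ((i : Fin k).castSucc : ℕ)
          = 2 ^ (M+1) - 1 + (2 ^ (M+1) - 1 - k + i) := by
        simp only [Fin.coe_castSucc]; omega
      rw [harg, p2_shift (by omega)]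
      rfl
  · -- followed by 1 : occurrence at j = 2^{M+1}-1-k
    rw [mem_Fk]
    refine ⟨2 ^ (M+1) - 1 - k, ?_⟩
    intro i
    refine Fin.lastCases ?_ ?_ i
    · rw [Fin.snoc_last]
      have harg : 2 ^ (M+1) - 1 - k + (Fin.last k : ℕ) = 2 ^ (M+1) - 1 + 0 := by
        simp only [Fin.val_last]; omega
      rw [harg, p2_shift (by omega), p2_zero]
    · intro i
      rw [Fin.snoc_castSucc]
      rfl

lemma ww_apply {M M' k : ℕ} (hk : k ≤ 2 ^ (M'+1) - 1) (hMk : M < k) (hMM' : M ≤ M') :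
    ww M' k ⟨k - 1 - M, by omega⟩ = if M = M' then 1 else 0 := by
  have hp := pow_ge M'
  have harg : 2 ^ (M'+1) - 1 - k + ((⟨k - 1 - M, by omega⟩ : Fin k) : ℕ)
      = 2 ^ (M'+1) - 2 - M := by
    simp only []; omega
  rw [ww]
  simp only []
  rw [harg]
  split
  · next h => subst h; exact p2_tail_eq M
  · next h => exact p2_tail_ne hMM' h

lemma Sk_card {k : ℕ} (hk : 1 ≤ k) : k + 1 - Nat.log 2 k ≤ (Sk k).card := by
  classical
  set L0 := Nat.log 2 k with hL0
  have hkp : k < 2 ^ (L0 + 1) := Nat.lt_pow_succ_log_self (by omega) k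
  have hbound : ∀ M, L0 ≤ M → k ≤ 2 ^ (M+1) - 1 := by
    intro M hM
    have : (2:ℕ) ^ (L0+1) ≤ 2 ^ (M+1) := Nat.pow_le_pow_right (by omega) (by omega)
    omega
  have hsub : (Finset.Icc L0 k).image (fun M => ww M k) ⊆ Sk k := by
    intro x hx
    obtain ⟨M, hM, rfl⟩ := Finset.mem_image.1 hx
    exact ww_mem_Sk (hbound M (Finset.mem_Icc.1 hM).1)
  have hinj : Set.InjOn (fun M => ww M k) (Finset.Icc L0 k) := by
    intro M hM M' hM' heq0
    have heq : ww M k = ww M' k := heq0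
    simp only [Finset.coe_Icc, Set.mem_Icc] at hM hM'
    by_contra hne
    rcases Nat.lt_or_ge M M' with h | h
    · have h1 := ww_apply (hbound M' (by omega)) (by omega) (le_of_lt h)
      have h2 := ww_apply (hbound M (by omega)) (by omega) (le_refl M)
      rw [← heq] at h1
      rw [h2] at h1
      simp [Nat.ne_of_lt h] at h1
    · have hlt : M' < M := by omega
      have h1 := ww_apply (hbound M (by omega)) (by omega) (le_of_lt hlt)
      have h2 := ww_apply (hbound M' (by omega)) (by omega) (le_refl M')
      rw [heq] at h1
      rw [h2] at h1
      simp [Nat.ne_of_lt hlt] at h1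
  have hcard : ((Finset.Icc L0 k).image (fun M => ww M k)).card = k - L0 + 1 := by
    rw [Finset.card_image_of_injOn hinj, Nat.card_Icc]
    have : L0 ≤ k := Nat.log_le_self 2 k
    omega
  have := Finset.card_le_card hsub
  have hL0k : L0 ≤ k := Nat.log_le_self 2 k
  omega

lemma Fk_one : 2 ≤ (Fk 1).card := by
  classical
  have h1 : (fun _ : Fin 1 => (1 : Fin 2)) ∈ Fk 1 := by
    rw [mem_Fk]
    exact ⟨0, fun i => by simpa [Fin.fin_one_eq_zero i] using p2_zero.symm⟩
  have h0 : (fun _ : Fin 1 => (0 : Fin 2)) ∈ Fk 1 := by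
    rw [mem_Fk]
    refine ⟨2, fun i => ?_⟩
    have : (i : ℕ) = 0 := by omega
    rw [this]
    have : (2 : ℕ) = 2 ^ (0 + 2) - 2 := by norm_num
    rw [show (2 + 0 : ℕ) = 2 ^ (0 + 2) - 2 by norm_num, p2_double]
  have hne : (fun _ : Fin 1 => (0 : Fin 2)) ≠ (fun _ : Fin 1 => (1 : Fin 2)) := by
    intro h
    have := congrFun h 0
    simp at this
  exact Finset.one_lt_card.2 ⟨_, h0, _, h1, hne⟩

lemma main_count : ∀ m, 1 ≤ m →
    2 + ∑ k ∈ Finset.Ico 1 m, (k + 1 - Nat.log 2 k) ≤ (Fk m).card := by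
  intro m hm
  induction m with
  | zero => omega
  | succ m ih =>
    rcases Nat.eq_or_lt_of_le hm with h | h
    · rw [← h]
      simpa using Fk_one
    · have hm1 : 1 ≤ m := by omega
      have := ih hm1
      have hstep := card_step m
      have hsk := Sk_card hm1
      rw [Finset.sum_Ico_succ_top hm1]
      omega


lemma sum_tsub (g : ℕ) : ∀ m, 2 * ∑ t ∈ Finset.Icc 1 m, (t - g) = (m - g) * (m - g + 1) := by
  intro m
  induction m with
  | zero => simp
  | succ m ih =>
    rw [Finset.sum_Icc_succ_top (by omega), Nat.mul_add, ih]
    rcases le_or_gt g m with h | h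
    · have h1 : m + 1 - g = m - g + 1 := by omega
      rw [h1]
      ring
    · have h0 : m - g = 0 := by omega
      have hv : m + 1 - g = 0 ∨ m + 1 - g = 1 := by omega
      rcases hv with hv | hv <;> rw [h0, hv] <;> ring
lemma shift_sum (g : ℕ) : ∀ m, 1 ≤ m →
    ∑ k ∈ Finset.Ico 1 m, (k + 1 - g) + (1 - g) = ∑ t ∈ Finset.Icc 1 m, (t - g) := by
  intro m
  induction m with
  | zero => omega
  | succ m ih =>
    intro _
    rcases Nat.eq_or_lt_of_le (by omega : 1 ≤ m + 1) with h | h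
    · rw [← h]; simp
    · have hm : 1 ≤ m := by omega
      rw [Finset.sum_Ico_succ_top hm, Finset.sum_Icc_succ_top (by omega), ← ih hm]
      omega

/-- Lower bound for the subword complexity of `𝔭₂`:
`p(𝔭₂, m) ≥ (m − log₂ m)(m − log₂ m + 1)/2`. -/
theorem complexity_p2_lower_bound (m : ℕ) (hm : 1 ≤ m) :
    ((m : ℝ) - Real.logb 2 m) * ((m : ℝ) - Real.logb 2 m + 1) / 2 ≤
      (subwordComplexity p2 m : ℝ) := by
  classical
  have hset : { w : Fin m → Fin 2 | ∃ j : ℕ, ∀ i : Fin m, w i = p2 (j + i) } = ↑(Fk m) := by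
    ext w; simp [Fk]
  have hcompl : subwordComplexity p2 m = (Fk m).card := by
    rw [subwordComplexity, hset, Set.ncard_coe_finset]
  set g := Nat.log 2 m with hg
  have hgm : g ≤ m := Nat.log_le_self 2 m
  have h1 := main_count m hm
  have h2 : ∑ k ∈ Finset.Ico 1 m, (k + 1 - g) ≤ ∑ k ∈ Finset.Ico 1 m, (k + 1 - Nat.log 2 k) := by
    apply Finset.sum_le_sum
    intro k hk
    have : Nat.log 2 k ≤ g := Nat.log_mono_right (le_of_lt (Finset.mem_Ico.1 hk).2)
    omega
  have h3 := shift_sum g m hm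
  have h4 := sum_tsub g m
  set Q := (m - g) * (m - g + 1) with hQ
  have hp : 2 + Q ≤ 2 * subwordComplexity p2 m := by omega
  -- real part
  have h2g : (2:ℝ) ^ g ≤ (m:ℝ) := by exact_mod_cast Nat.pow_log_le_self 2 (by omega)
  have h2m : (m:ℝ) ≤ (2:ℝ) ^ m := by exact_mod_cast le_of_lt (Nat.lt_two_pow_self (n := m))
  have hb : (1:ℝ) < 2 := one_lt_two
  have hmpos : (0:ℝ) < m := by exact_mod_cast hm
  have hgR : (g:ℝ) ≤ Real.logb 2 m := by
    have := Real.logb_le_logb_of_le hb (by positivity : (0:ℝ) < (2:ℝ) ^ g) h2g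
    rwa [Real.logb_pow, Real.logb_self_eq_one hb, mul_one] at this
  have hlR : Real.logb 2 m ≤ m := by
    have := Real.logb_le_logb_of_le hb hmpos h2m
    rwa [Real.logb_pow, Real.logb_self_eq_one hb, mul_one] at this
  have hQR : (Q:ℝ) = ((m:ℝ) - g) * ((m:ℝ) - g + 1) := by
    rw [hQ]
    push_cast [hgm]
    ring
  have hpR : 2 + ((m:ℝ) - g) * ((m:ℝ) - g + 1) ≤ 2 * (subwordComplexity p2 m : ℝ) := by
    rw [← hQR]
    exact_mod_cast hp
  set L := Real.logb 2 m
  nlinarith [hpR, hgR, hlR, mul_nonneg (sub_nonneg.2 hlR) (sub_nonneg.2 hgR)]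
end

section
/- Let q ≥ 3 and let F be a finite field with q elements. Let a : ℕ → F be a sequence such that: (i) whenever a finite set J of positive integers satisfies n = ∑_{j ∈ J}(q^j − 1), then a n = (−1)^(card J) in F; and (ii) a n = 0 whenever no such set exists (in particular a 0 = 1, via J = ∅). Then the subword complexity of a is linear: there exist real constants c₁, c₂ > 0 and an integer m₀ such that for every m ≥ m₀ one has c₁ · m ≤ p(a, m) ≤ c₂ · m. (Equivalently, p(1/Π_q, m) = Θ(m) for q ≥ 3.) -/
lemma cast_sum_qpow (q : ℕ) (hq : 1 ≤ q) (J : Finset ℕ) :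
    ((∑ j ∈ J, (q ^ j - 1) : ℕ) : ℤ) = ∑ j ∈ J, ((q : ℤ) ^ j - 1) := by
  rw [Nat.cast_sum]
  refine Finset.sum_congr rfl fun j _ => ?_
  have : 1 ≤ q ^ j := Nat.one_le_pow _ _ hq
  push_cast [this]
  ring

lemma two_sum_Icc_le (q : ℕ) (hq : 3 ≤ q) (n : ℕ) :
    2 * ∑ j ∈ Finset.Icc 1 n, (q ^ j - 1) ≤ q ^ (n + 1) := by
  induction n with
  | zero => simp
  | succ n ih =>
    rw [show Finset.Icc 1 (n+1) = insert (n+1) (Finset.Icc 1 n) by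
      exact (Finset.insert_Icc_right_eq_Icc_add_one (by omega)).symm]
    rw [Finset.sum_insert (by simp)]
    have h1 : q ^ (n+1) ≥ 1 := Nat.one_le_pow _ _ (by omega)
    have h2 : q ^ (n+1+1) = q * q ^ (n+1) := by ring
    have h3 : 3 * q ^ (n+1) ≤ q * q ^ (n+1) := Nat.mul_le_mul_right _ hq
    omega

lemma two_sum_Ico_pow_le (q l : ℕ) (hq : 3 ≤ q) :
    ∀ n, l ≤ n → 2 * ∑ j ∈ Finset.Ico l n, (q : ℤ) ^ j ≤ (q : ℤ) ^ n - (q : ℤ) ^ l := by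
  intro n
  induction n with
  | zero => intro h; interval_cases l; simp
  | succ n ih =>
    intro h
    rcases Nat.lt_or_ge l (n+1) with h' | h'
    · have hln : l ≤ n := by omega
      rw [Finset.sum_Ico_succ_top hln]
      have := ih hln
      have hqq : (3 : ℤ) ≤ (q : ℤ) := by exact_mod_cast hq
      have hpow : (0:ℤ) < (q:ℤ) ^ n := pow_pos (by linarith) n
      have : (q:ℤ) ^ (n+1) = (q:ℤ) * (q:ℤ)^n := by ring
      nlinarith
    · have : l = n + 1 := by omega
      subst this
      simp

lemma sep_aux (q L m : ℕ) (hq : 3 ≤ q) (hL8 : 8 * m + 8 ≤ q ^ L)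
    (A A' : Finset ℕ) (hA : ∀ j ∈ A, L ≤ j) (hA' : ∀ j ∈ A', L ≤ j)
    (M : ℕ) (hMA : M ∈ A) (hMA' : M ∉ A')
    (hMmax : ∀ j ∈ A', j ∉ A → j ≤ M) :
    2 * ∑ j ∈ A', ((q : ℤ) ^ j - 1) + (q : ℤ) ^ L + 8 * m + 6 ≤
      2 * ∑ j ∈ A, ((q : ℤ) ^ j - 1) := by
  have hq1 : (1 : ℤ) ≤ (q : ℤ) := by exact_mod_cast (by omega : 1 ≤ q)
  have hnn : ∀ j : ℕ, (0 : ℤ) ≤ (q : ℤ) ^ j - 1 := fun j => by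
    have := one_le_pow₀ (n := j) hq1
    linarith
  have hsplit : ∀ B C : Finset ℕ,
      ∑ j ∈ B, ((q : ℤ) ^ j - 1) = ∑ j ∈ B ∩ C, ((q : ℤ) ^ j - 1) + ∑ j ∈ B \ C, ((q : ℤ) ^ j - 1) :=
    fun B C => (Finset.sum_inter_add_sum_sdiff B C _).symm
  rw [hsplit A A', hsplit A' A, Finset.inter_comm A' A]
  have hML : L ≤ M := hA M hMA
  have h1 : (q : ℤ) ^ M - 1 ≤ ∑ j ∈ A \ A', ((q : ℤ) ^ j - 1) := by
    refine Finset.single_le_sum (fun j _ => hnn j) ?_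
    exact Finset.mem_sdiff.mpr ⟨hMA, hMA'⟩
  have h2 : ∑ j ∈ A' \ A, ((q : ℤ) ^ j - 1) ≤ ∑ j ∈ Finset.Ico L M, (q : ℤ) ^ j := by
    calc ∑ j ∈ A' \ A, ((q : ℤ) ^ j - 1) ≤ ∑ j ∈ A' \ A, (q : ℤ) ^ j :=
          Finset.sum_le_sum (fun j _ => by linarith)
      _ ≤ ∑ j ∈ Finset.Ico L M, (q : ℤ) ^ j := by
          refine Finset.sum_le_sum_of_subset_of_nonneg ?_ (fun j _ _ => by positivity)
          intro j hj
          have hj' := Finset.mem_sdiff.mp hj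
          have h1 := hA' j hj'.1
          have h2 : j ≤ M := hMmax j hj'.1 hj'.2
          have h3 : j ≠ M := fun h => hMA' (h ▸ hj'.1)
          exact Finset.mem_Ico.mpr ⟨h1, by omega⟩
  have h3 := two_sum_Ico_pow_le q L hq M hML
  have h4 : (8 * m + 8 : ℤ) ≤ (q : ℤ) ^ L := by exact_mod_cast hL8
  have h5 : (q : ℤ) ^ L ≤ (q : ℤ) ^ M := pow_le_pow_right₀ (by linarith) hML
  linarith

lemma sep (q L m : ℕ) (hq : 3 ≤ q) (hL8 : 8 * m + 8 ≤ q ^ L)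
    (A A' : Finset ℕ) (hA : ∀ j ∈ A, L ≤ j) (hA' : ∀ j ∈ A', L ≤ j)
    (hclose : 2 * |∑ j ∈ A, ((q : ℤ) ^ j - 1) - ∑ j ∈ A', ((q : ℤ) ^ j - 1)| ≤
      (q : ℤ) ^ L + 2 * m) :
    A = A' := by
  by_contra hne
  have hdne : ((A ∪ A') \ (A ∩ A')).Nonempty := by
    rw [Finset.sdiff_nonempty]
    intro hsub
    apply hne
    ext x
    constructor
    · intro hx
      by_contra hx'
      have : x ∈ (A ∪ A') := Finset.mem_union_left _ hx
      have := hsub this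
      exact hx' (Finset.mem_inter.mp this).2
    · intro hx
      by_contra hx'
      have : x ∈ (A ∪ A') := Finset.mem_union_right _ hx
      have := hsub this
      exact hx' (Finset.mem_inter.mp this).1
  set M := ((A ∪ A') \ (A ∩ A')).max' hdne with hM
  have hMmem := ((A ∪ A') \ (A ∩ A')).max'_mem hdne
  have hMu := (Finset.mem_sdiff.mp hMmem).1
  have hMi := (Finset.mem_sdiff.mp hMmem).2
  have hmax : ∀ j, j ∈ A ∪ A' → j ∉ A ∩ A' → j ≤ M :=
    fun j h1 h2 => Finset.le_max' _ j (Finset.mem_sdiff.mpr ⟨h1, h2⟩)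
  rcases Finset.mem_union.mp hMu with hMA | hMA'
  · have hMA' : M ∉ A' := fun h => hMi (Finset.mem_inter.mpr ⟨hMA, h⟩)
    have := sep_aux q L m hq hL8 A A' hA hA' M hMA hMA'
      (fun j hj hj' => hmax j (Finset.mem_union_right _ hj)
        (fun h => hj' (Finset.mem_inter.mp h).1))
    have h8 : (0:ℤ) ≤ 8 * m := by positivity
    have := le_abs_self (∑ j ∈ A, ((q : ℤ) ^ j - 1) - ∑ j ∈ A', ((q : ℤ) ^ j - 1))
    linarith
  · have hMA : M ∉ A := fun h => hMi (Finset.mem_inter.mpr ⟨h, hMA'⟩)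
    have := sep_aux q L m hq hL8 A' A hA' hA M hMA' hMA
      (fun j hj hj' => hmax j (Finset.mem_union_left _ hj)
        (fun h => hj' (Finset.mem_inter.mp h).2))
    have h8 : (0:ℤ) ≤ 8 * m := by positivity
    have habs2 := neg_abs_le (∑ j ∈ A, ((q : ℤ) ^ j - 1) - ∑ j ∈ A', ((q : ℤ) ^ j - 1))
    linarith

/-- For `q ≥ 3`, the coefficient sequence of `1/Π_q` has linear subword
complexity `Θ(m)`. -/
theorem complexity_inv_carlitz_pi_q_theta_linear
    (q : ℕ) (hq : 3 ≤ q) (F : Type*) [Field F] [Fintype F] (hcard : Fintype.card F = q)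
    (a : ℕ → F)
    (h1 : ∀ (n : ℕ) (J : Finset ℕ), (∀ j ∈ J, 1 ≤ j) → n = ∑ j ∈ J, (q ^ j - 1) →
      a n = (-1 : F) ^ J.card)
    (h0 : ∀ n : ℕ, (¬ ∃ J : Finset ℕ, (∀ j ∈ J, 1 ≤ j) ∧ n = ∑ j ∈ J, (q ^ j - 1)) →
      a n = 0) :
    ∃ c₁ c₂ : ℝ, 0 < c₁ ∧ 0 < c₂ ∧ ∃ m₀ : ℕ, ∀ m : ℕ, m₀ ≤ m →
      c₁ * (m : ℝ) ≤ (subwordComplexity a m : ℝ) ∧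
      (subwordComplexity a m : ℝ) ≤ c₂ * (m : ℝ) := by
  refine ⟨1, ((16 * q + 3 : ℕ) : ℝ), one_pos, by positivity, 1, ?_⟩
  intro m hm
  -- choose the scale L
  have hex : ∃ L, 8 * m + 8 ≤ q ^ L := by
    refine ⟨8 * m + 8, ?_⟩
    calc 8 * m + 8 ≤ 2 ^ (8 * m + 8) := Nat.le_of_lt (Nat.lt_two_pow_self)
      _ ≤ q ^ (8 * m + 8) := Nat.pow_le_pow_left (by omega) _
  set L := Nat.find hex with hLdef
  have hL8 : 8 * m + 8 ≤ q ^ L := Nat.find_spec hex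
  have hL1 : 1 ≤ L := by
    by_contra h
    have : L = 0 := by omega
    rw [this] at hL8
    simp at hL8
  have hQle : q ^ L ≤ 16 * q * m := by
    have h1 : ¬ (8 * m + 8 ≤ q ^ (L - 1)) := Nat.find_min hex (by omega)
    push_neg at h1
    have h2 : q ^ L = q * q ^ (L - 1) := by
      rw [← pow_succ']
      congr 1
      omega
    calc q ^ L = q * q ^ (L - 1) := h2
      _ ≤ q * (8 * m + 8) := Nat.mul_le_mul_left _ (by omega)
      _ ≤ q * (16 * m) := Nat.mul_le_mul_left _ (by omega)
      _ = 16 * q * m := by ring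
  set Q := q ^ L with hQdef
  have hQ8 : 8 * m + 8 ≤ Q := hL8
  set mL := ∑ j ∈ Finset.Icc 1 (L - 1), (q ^ j - 1) with hmLdef
  have hmL2 : 2 * mL ≤ Q := by
    have := two_sum_Icc_le q hq (L - 1)
    rwa [show L - 1 + 1 = L by omega] at this
  -- positions just below Q - 1 are not representable
  have hzero : ∀ T I : ℕ, I < T → T < m → a (Q - 1 - T + I) = 0 := by
    intro T I hIT hTm
    apply h0
    rintro ⟨J, hJ1, hJs⟩
    have hn1 : Q - 1 - T + I < Q - 1 := by omega
    have hn2 : Q - m ≤ Q - 1 - T + I := by omega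
    by_cases hhigh : ∃ j ∈ J, L ≤ j
    · obtain ⟨j, hjJ, hjL⟩ := hhigh
      have h1 : Q ≤ q ^ j := Nat.pow_le_pow_right (by omega) hjL
      have h2 : q ^ j - 1 ≤ Q - 1 - T + I := by
        rw [hJs]
        exact Finset.single_le_sum (f := fun j => q ^ j - 1) (fun _ _ => Nat.zero_le _) hjJ
      omega
    · push_neg at hhigh
      have hsub : J ⊆ Finset.Icc 1 (L - 1) := fun j hj =>
        Finset.mem_Icc.mpr ⟨hJ1 j hj, by have := hhigh j hj; omega⟩
      have h3 : Q - 1 - T + I ≤ mL := by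
        rw [hJs]
        exact Finset.sum_le_sum_of_subset hsub
      omega
  have haQ : a (Q - 1) = -1 := by
    have h := h1 (Q - 1) {L} (by intro j hj; simp at hj; omega)
      (by rw [Finset.sum_singleton])
    rw [h, Finset.card_singleton, pow_one]
  have hQm : m + 1 ≤ Q := by omega
  -- LOWER BOUND
  have hlow : m ≤ subwordComplexity a m := by
    set f : Fin m → (Fin m → F) := fun t i => a (Q - 1 - t.val + i.val) with hf
    have hkey : ∀ t t' : Fin m, t.val < t'.val → f t ≠ f t' := by
      intro t t' hlt heq
      have e1 : f t t = a (Q - 1) := by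
        simp only [hf]
        congr 1
        have := t.isLt
        omega
      have e2 : f t' t = 0 := hzero t'.val t.val hlt t'.isLt
      rw [heq] at e1
      rw [e2] at e1
      rw [haQ] at e1
      exact (neg_ne_zero.mpr one_ne_zero) e1.symm
    have hinj : Function.Injective f := by
      intro t t' heq
      by_contra hne
      rcases Nat.lt_or_ge t.val t'.val with hlt | hge
      · exact hkey t t' hlt heq
      · have : t'.val < t.val := by
          rcases Nat.lt_or_ge t'.val t.val with h | h
          · exact h
          · exact absurd (Fin.ext (by omega)) hne
        exact hkey t' t this heq.symm
    have hsub : Set.range f ⊆ { w : Fin m → F | ∃ j : ℕ, ∀ i : Fin m, w i = a (j + i) } := by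
      rintro w ⟨t, rfl⟩
      exact ⟨Q - 1 - t.val, fun i => rfl⟩
    have h1 : (Set.range f).ncard = m := by
      rw [← Set.image_univ, Set.ncard_image_of_injective _ hinj, Set.ncard_univ,
        Nat.card_eq_fintype_card, Fintype.card_fin]
    calc m = (Set.range f).ncard := h1.symm
      _ ≤ _ := Set.ncard_le_ncard hsub (Set.toFinite _)
  -- UPPER BOUND
  have hq1 : 1 ≤ q := by omega
  have hcast : ∀ J : Finset ℕ, ((∑ j ∈ J, (q ^ j - 1) : ℕ) : ℤ) = ∑ j ∈ J, ((q : ℤ) ^ j - 1) :=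
    fun J => cast_sum_qpow q hq1 J
  set b : ℤ → F := fun z => if h : 0 ≤ z then a z.toNat else 0 with hb
  have claim : ∀ j₀ : ℕ, (∃ i : Fin m, a (j₀ + i.val) ≠ 0) →
      ∃ p : F × ℤ, (p.1 = 1 ∨ p.1 = -1) ∧ 1 - (m : ℤ) ≤ p.2 ∧ p.2 ≤ (mL : ℤ) ∧
        ∀ i : Fin m, a (j₀ + i.val) = p.1 * b (p.2 + i.val) := by
    rintro j₀ ⟨i₀, hi₀⟩
    obtain ⟨J, hJ1, hJs⟩ : ∃ J : Finset ℕ, (∀ j ∈ J, 1 ≤ j) ∧ j₀ + i₀.val = ∑ j ∈ J, (q ^ j - 1) := by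
      by_contra hc
      exact hi₀ (h0 _ hc)
    set A := J.filter (fun j => L ≤ j) with hA
    set B := J.filter (fun j => ¬ L ≤ j) with hB
    set H := ∑ j ∈ A, (q ^ j - 1 : ℕ) with hH
    set s₀ := ∑ j ∈ B, (q ^ j - 1 : ℕ) with hs₀
    have hdecomp : j₀ + i₀.val = H + s₀ := by
      rw [hJs, hH, hs₀, hA, hB, Finset.sum_filter_add_sum_filter_not]
    have hAL : ∀ j ∈ A, L ≤ j := fun j hj => (Finset.mem_filter.mp hj).2
    have hA1 : ∀ j ∈ A, 1 ≤ j := fun j hj => hJ1 j (Finset.mem_filter.mp hj).1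
    have hs₀mL : s₀ ≤ mL := by
      apply Finset.sum_le_sum_of_subset
      intro j hj
      have h1 := Finset.mem_filter.mp hj
      exact Finset.mem_Icc.mpr ⟨hJ1 j h1.1, by have := h1.2; omega⟩
    -- key decomposition rigidity
    have hkey : ∀ (k : ℕ) (x : ℤ), a k ≠ 0 → (k : ℤ) = (H : ℤ) + x →
        -(m : ℤ) ≤ x → x ≤ (mL : ℤ) + m →
        0 ≤ x ∧ ∃ B' : Finset ℕ, (∀ j ∈ B', 1 ≤ j) ∧ x = ∑ j ∈ B', ((q : ℤ) ^ j - 1) := by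
      intro k x hk hkx hx1 hx2
      obtain ⟨J', hJ'1, hJ's⟩ : ∃ J' : Finset ℕ, (∀ j ∈ J', 1 ≤ j) ∧ k = ∑ j ∈ J', (q ^ j - 1) := by
        by_contra hc
        exact hk (h0 _ hc)
      set A' := J'.filter (fun j => L ≤ j) with hA'
      set B' := J'.filter (fun j => ¬ L ≤ j) with hB'
      have hA'L : ∀ j ∈ A', L ≤ j := fun j hj => (Finset.mem_filter.mp hj).2
      have hdec' : k = ∑ j ∈ A', (q ^ j - 1 : ℕ) + ∑ j ∈ B', (q ^ j - 1 : ℕ) := by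
        rw [hJ's, hA', hB', Finset.sum_filter_add_sum_filter_not]
      have hs'mL : ∑ j ∈ B', (q ^ j - 1 : ℕ) ≤ mL := by
        apply Finset.sum_le_sum_of_subset
        intro j hj
        have h1 := Finset.mem_filter.mp hj
        exact Finset.mem_Icc.mpr ⟨hJ'1 j h1.1, by have := h1.2; omega⟩
      have hdecZ : (k : ℤ) = ((∑ j ∈ A', (q ^ j - 1 : ℕ) : ℕ) : ℤ) + ((∑ j ∈ B', (q ^ j - 1 : ℕ) : ℕ) : ℤ) := by
        exact_mod_cast congrArg (Nat.cast : ℕ → ℤ) hdec'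
      rw [hkx] at hdecZ
      have hAA' : A = A' := by
        apply sep q L m hq hL8 A A' hAL hA'L
        rw [← hcast A, ← hcast A', ← hH]
        have e : ((H : ℤ)) - ((∑ j ∈ A', (q ^ j - 1 : ℕ) : ℕ) : ℤ) =
            ((∑ j ∈ B', (q ^ j - 1 : ℕ) : ℕ) : ℤ) - x := by
          linarith
        have hs'0 : (0 : ℤ) ≤ ((∑ j ∈ B', (q ^ j - 1 : ℕ) : ℕ) : ℤ) := by positivity
        have hs'mLZ : ((∑ j ∈ B', (q ^ j - 1 : ℕ) : ℕ) : ℤ) ≤ (mL : ℤ) := by exact_mod_cast hs'mL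
        have hmL2Z : 2 * (mL : ℤ) ≤ ((q : ℤ) ^ L) := by
          have : ((2 * mL : ℕ) : ℤ) ≤ ((Q : ℕ) : ℤ) := by exact_mod_cast hmL2
          rw [hQdef] at this
          push_cast at this
          linarith
        have hmZ : (0 : ℤ) ≤ (m : ℤ) := by positivity
        have habs : |((H : ℤ)) - ((∑ j ∈ A', (q ^ j - 1 : ℕ) : ℕ) : ℤ)| ≤ (mL : ℤ) + m := by
          rw [abs_le]
          exact ⟨by linarith, by linarith⟩
        linarith [habs]
      have hHeq : (H : ℤ) = ((∑ j ∈ A', (q ^ j - 1 : ℕ) : ℕ) : ℤ) := by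
        rw [hH, hAA']
      have hxB : x = ((∑ j ∈ B', (q ^ j - 1 : ℕ) : ℕ) : ℤ) := by
        linarith
      refine ⟨by rw [hxB]; positivity, B', fun j hj => hJ'1 j (Finset.mem_filter.mp hj).1, ?_⟩
      rw [hxB, hcast B']
    refine ⟨⟨(-1 : F) ^ A.card, (s₀ : ℤ) - i₀.val⟩, ?_, ?_, ?_, ?_⟩
    · rcases Nat.even_or_odd A.card with h | h
      · exact Or.inl h.neg_one_pow
      · exact Or.inr h.neg_one_pow
    · have := i₀.isLt
      simp only
      omega
    · simp only
      omega
    · intro i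
      simp only
      have hdZ : ((j₀ : ℤ) + i.val) = (H : ℤ) + ((s₀ : ℤ) - i₀.val + i.val) := by
        have := congrArg (Nat.cast : ℕ → ℤ) hdecomp
        push_cast at this
        linarith
      rcases lt_or_ge ((s₀ : ℤ) - i₀.val + i.val) 0 with hneg | hpos
      · have hbz : b ((s₀ : ℤ) - i₀.val + i.val) = 0 := by
          rw [hb]
          simp only [dif_neg (not_le.mpr hneg)]
        rw [hbz, mul_zero]
        by_contra hnz
        have := hkey (j₀ + i.val) ((s₀ : ℤ) - i₀.val + i.val) hnz (by push_cast; linarith)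
          (by have := i₀.isLt; omega) (by have := i.isLt; omega)
        omega
      · set t := ((s₀ : ℤ) - i₀.val + i.val).toNat with ht
        have htZ : (t : ℤ) = (s₀ : ℤ) - i₀.val + i.val := Int.toNat_of_nonneg hpos
        have hbt : b ((s₀ : ℤ) - i₀.val + i.val) = a t := by
          rw [hb]
          simp only [dif_pos hpos]
          rfl
        rw [hbt]
        have hji : j₀ + i.val = H + t := by
          have : ((j₀ + i.val : ℕ) : ℤ) = ((H + t : ℕ) : ℤ) := by
            push_cast
            rw [htZ]
            linarith
          exact_mod_cast this
        have htub : t ≤ mL + m - 1 := by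
          have h1 : (t : ℤ) ≤ (mL : ℤ) + m - 1 := by
            rw [htZ]
            have := i.isLt
            have h2 : (i.val : ℤ) ≤ (m : ℤ) - 1 := by exact_mod_cast Nat.le_sub_one_of_lt this
            have h3 : (s₀ : ℤ) ≤ (mL : ℤ) := by exact_mod_cast hs₀mL
            linarith
          omega
        have htQ : t < Q - 1 := by omega
        by_cases htS : ∃ Jt : Finset ℕ, (∀ j ∈ Jt, 1 ≤ j) ∧ t = ∑ j ∈ Jt, (q ^ j - 1)
        · obtain ⟨Jt, hJt1, hJts⟩ := htS
          have hJtL : ∀ j ∈ Jt, j < L := by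
            intro j hj
            by_contra hc
            push_neg at hc
            have h1 : Q ≤ q ^ j := Nat.pow_le_pow_right (by omega) hc
            have h2 : q ^ j - 1 ≤ t := by
              rw [hJts]
              exact Finset.single_le_sum (f := fun j => q ^ j - 1) (fun _ _ => Nat.zero_le _) hj
            omega
          have hdisj : Disjoint A Jt := by
            rw [Finset.disjoint_left]
            intro j hjA hjT
            have := hAL j hjA
            have := hJtL j hjT
            omega
          have hunion : j₀ + i.val = ∑ j ∈ A ∪ Jt, (q ^ j - 1) := by
            rw [Finset.sum_union hdisj, hji, hJts]
          have hval := h1 (j₀ + i.val) (A ∪ Jt)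
            (fun j hj => by
              rcases Finset.mem_union.mp hj with h | h
              · exact hA1 j h
              · exact hJt1 j h) hunion
          rw [hval, Finset.card_union_of_disjoint hdisj, pow_add]
          congr 1
          exact (h1 t Jt hJt1 hJts).symm
        · have hat : a t = 0 := h0 t htS
          rw [hat, mul_zero]
          by_contra hnz
          obtain ⟨hx0, B', hB'1, hB's⟩ := hkey (j₀ + i.val) ((s₀ : ℤ) - i₀.val + i.val) hnz
            (by push_cast; linarith) (by have := i₀.isLt; omega) (by have := i.isLt; omega)
          apply htS
          refine ⟨B', hB'1, ?_⟩
          have : (t : ℤ) = ((∑ j ∈ B', (q ^ j - 1 : ℕ) : ℕ) : ℤ) := by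
            rw [htZ, hB's, hcast B']
          exact_mod_cast this
  -- counting
  have hupper : subwordComplexity a m ≤ 2 * (mL + m) + 1 := by
    classical
    set T : Finset (F × ℤ) := ({1, -1} : Finset F) ×ˢ Finset.Icc (1 - (m : ℤ)) (mL : ℤ) with hT
    set g : F × ℤ → (Fin m → F) := fun p i => p.1 * b (p.2 + i.val) with hg
    have hsub : { w : Fin m → F | ∃ j : ℕ, ∀ i : Fin m, w i = a (j + i) } ⊆
        insert (fun _ => (0 : F)) (g '' (T : Set (F × ℤ))) := by
      rintro w ⟨j₀, hw⟩
      by_cases hz : ∀ i : Fin m, a (j₀ + i.val) = 0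
      · apply Set.mem_insert_iff.mpr
        left
        funext i
        rw [hw i, hz i]
      · push_neg at hz
        obtain ⟨p, hp1, hp2, hp3, hp4⟩ := claim j₀ hz
        apply Set.mem_insert_iff.mpr
        right
        refine ⟨p, ?_, ?_⟩
        · rw [Finset.mem_coe, hT, Finset.mem_product]
          constructor
          · rcases hp1 with h | h <;> simp [h]
          · exact Finset.mem_Icc.mpr ⟨hp2, hp3⟩
        · rw [hg]
          funext i
          rw [hw i, hp4 i]
    have hTcard : T.card ≤ 2 * (mL + m) := by
      rw [hT, Finset.card_product]
      have h2 : ({1, -1} : Finset F).card ≤ 2 := by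
        apply le_trans (Finset.card_insert_le _ _)
        simp
      have h3 : (Finset.Icc (1 - (m : ℤ)) (mL : ℤ)).card = mL + m := by
        rw [Int.card_Icc]
        omega
      calc ({1, -1} : Finset F).card * (Finset.Icc (1 - (m : ℤ)) (mL : ℤ)).card
          ≤ 2 * (Finset.Icc (1 - (m : ℤ)) (mL : ℤ)).card := Nat.mul_le_mul_right _ h2
        _ = 2 * (mL + m) := by rw [h3]
    calc subwordComplexity a m
        ≤ (insert (fun _ => (0 : F)) (g '' (T : Set (F × ℤ)))).ncard :=
          Set.ncard_le_ncard hsub (Set.toFinite _)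
      _ ≤ (g '' (T : Set (F × ℤ))).ncard + 1 := Set.ncard_insert_le _ _
      _ ≤ T.card + 1 := by
          have := Set.ncard_image_le (s := (T : Set (F × ℤ))) (f := g) T.finite_toSet
          rw [Set.ncard_coe_finset] at this
          omega
      _ ≤ 2 * (mL + m) + 1 := by omega
  -- conclude
  constructor
  · rw [one_mul]
    exact_mod_cast hlow
  · have hfinal : subwordComplexity a m ≤ (16 * q + 3) * m := by
      have hmLle : 2 * mL ≤ 16 * q * m := le_trans hmL2 hQle
      calc subwordComplexity a m ≤ 2 * (mL + m) + 1 := hupper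
        _ = 2 * mL + 2 * m + 1 := by ring
        _ ≤ 16 * q * m + 2 * m + 1 := by omega
        _ ≤ 16 * q * m + 2 * m + m := by omega
        _ = (16 * q + 3) * m := by ring
    calc (subwordComplexity a m : ℝ) ≤ (((16 * q + 3) * m : ℕ) : ℝ) := by exact_mod_cast hfinal
      _ = ((16 * q + 3 : ℕ) : ℝ) * m := by push_cast; ring
end

section
/- Let q ≥ 3 and let F be a finite field with q elements. Let a : ℕ → F be a sequence such that: (i) whenever a finite set J of positive integers satisfies n = ∑_{j ∈ J}(q^j − 1), then a n = (−1)^(card J) in F; and (ii) a n = 0 whenever no such set exists. Then for every integer m ≥ 1 one has p(a, m) ≤ (2q + 4)·m + 2q − 3. -/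
private def MM (q K : ℕ) : ℕ := ∑ j ∈ Finset.Icc 1 K, (q ^ j - 1)

private lemma MM_succ (q K : ℕ) : MM q (K + 1) = MM q K + (q ^ (K + 1) - 1) := by
  rw [MM, MM, Finset.sum_Icc_succ_top (by omega)]

private lemma three_pow (q : ℕ) (hq : 3 ≤ q) (n : ℕ) : 3 * q ^ n ≤ q ^ (n + 1) := by
  calc 3 * q ^ n ≤ q * q ^ n := Nat.mul_le_mul_right _ hq
    _ = q ^ n * q := mul_comm _ _
    _ = q ^ (n + 1) := (pow_succ q n).symm

private lemma MM_add_pow_le (q : ℕ) (hq : 3 ≤ q) : ∀ K, MM q K + q ^ K ≤ q ^ (K + 1) := by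
  intro K
  induction K with
  | zero =>
    simp [MM]
    omega
  | succ K ih =>
    have h3 : 1 ≤ q ^ K := Nat.one_le_pow _ _ (by omega)
    have h4 : 1 ≤ q ^ (K + 1) := Nat.one_le_pow _ _ (by omega)
    have h5 : 3 * q ^ K ≤ q ^ (K + 1) := three_pow q hq K
    have h6 : 3 * q ^ (K + 1) ≤ q ^ (K + 1 + 1) := three_pow q hq (K + 1)
    rw [MM_succ]
    omega

private lemma MM_le (q : ℕ) (hq : 3 ≤ q) (K : ℕ) : MM q K + 2 ≤ q ^ (K + 1) := by
  cases K with
  | zero =>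
    simp [MM]
    omega
  | succ K =>
    have h := MM_add_pow_le q hq (K + 1)
    have h2 : q ≤ q ^ (K + 1) := Nat.le_self_pow (by omega) q
    omega

private lemma shift_lemma (q : ℕ) (hq : 3 ≤ q) {F : Type*} [Field F] (a : ℕ → F)
    (h1 : ∀ (n : ℕ) (J : Finset ℕ), (∀ j ∈ J, 1 ≤ j) → n = ∑ j ∈ J, (q ^ j - 1) →
      a n = (-1 : F) ^ J.card)
    (h0 : ∀ n : ℕ, (¬ ∃ J : Finset ℕ, (∀ j ∈ J, 1 ≤ j) ∧ n = ∑ j ∈ J, (q ^ j - 1)) →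
      a n = 0)
    (k r : ℕ) (hk : 1 ≤ k) (hr : r + 2 ≤ q ^ k) :
    a (q ^ k - 1 + r) = - a r := by
  have hq1 : 1 < q := by omega
  have hqk3 : 3 ≤ q ^ k := le_trans hq (Nat.le_self_pow (by omega) q)
  by_cases hrep : ∃ J : Finset ℕ, (∀ j ∈ J, 1 ≤ j) ∧ r = ∑ j ∈ J, (q ^ j - 1)
  · obtain ⟨J, hJ1, hJr⟩ := hrep
    have hkJ : k ∉ J := by
      intro hkJ
      have hle : q ^ k - 1 ≤ ∑ j ∈ J, (q ^ j - 1) :=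
        Finset.single_le_sum (f := fun j => q ^ j - 1) (fun i _ => Nat.zero_le _) hkJ
      rw [← hJr] at hle
      omega
    have hsum : q ^ k - 1 + r = ∑ j ∈ insert k J, (q ^ j - 1) := by
      rw [Finset.sum_insert hkJ, ← hJr]
    have h1' := h1 _ (insert k J) (by
      intro j hj
      rcases Finset.mem_insert.1 hj with h | h
      · omega
      · exact hJ1 j h) hsum
    rw [h1', Finset.card_insert_of_notMem hkJ, h1 r J hJ1 hJr, pow_succ]
    ring
  · have har : a r = 0 := h0 r hrep
    have h2 : a (q ^ k - 1 + r) = 0 := by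
      apply h0
      rintro ⟨J, hJ1, hs⟩
      by_cases hkJ : k ∈ J
      · apply hrep
        refine ⟨J.erase k, fun j hj => hJ1 j (Finset.mem_of_mem_erase hj), ?_⟩
        have he := Finset.add_sum_erase J (fun j => q ^ j - 1) hkJ
        omega
      · by_cases hbig : ∃ j ∈ J, k + 1 ≤ j
        · obtain ⟨j0, hj0J, hj0⟩ := hbig
          have hle : q ^ j0 - 1 ≤ ∑ j ∈ J, (q ^ j - 1) :=
            Finset.single_le_sum (f := fun j => q ^ j - 1) (fun i _ => Nat.zero_le _) hj0J
          have hp : q ^ (k + 1) ≤ q ^ j0 := Nat.pow_le_pow_right (by omega) hj0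
          have hp3 : 3 * q ^ k ≤ q ^ (k + 1) := three_pow q hq k
          omega
        · push_neg at hbig
          have hsub : ∀ j ∈ J, j ≤ k - 1 := by
            intro j hj
            have hb := hbig j hj
            have hne : j ≠ k := fun h => hkJ (h ▸ hj)
            omega
          have hle : ∑ j ∈ J, (q ^ j - 1) ≤ MM q (k - 1) :=
            Finset.sum_le_sum_of_subset
              (fun j hj => Finset.mem_Icc.2 ⟨hJ1 j hj, hsub j hj⟩)
          have hMB := MM_le q hq (k - 1)
          rw [show k - 1 + 1 = k by omega] at hMB
          omega
    rw [h2, har, neg_zero]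

private lemma zero_gap (q : ℕ) (hq : 3 ≤ q) {F : Type*} [Field F] (a : ℕ → F)
    (h0 : ∀ n : ℕ, (¬ ∃ J : Finset ℕ, (∀ j ∈ J, 1 ≤ j) ∧ n = ∑ j ∈ J, (q ^ j - 1)) →
      a n = 0)
    (K n : ℕ) (hn1 : MM q K < n) (hn2 : n + 2 ≤ q ^ (K + 1)) :
    a n = 0 := by
  apply h0
  rintro ⟨J, hJ1, hs⟩
  by_cases hc : ∀ j ∈ J, j ≤ K
  · have hle : ∑ j ∈ J, (q ^ j - 1) ≤ MM q K :=
      Finset.sum_le_sum_of_subset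
        (fun j hj => Finset.mem_Icc.2 ⟨hJ1 j hj, hc j hj⟩)
    omega
  · push_neg at hc
    obtain ⟨j0, hj0J, hj0⟩ := hc
    have hle : q ^ j0 - 1 ≤ ∑ j ∈ J, (q ^ j - 1) :=
      Finset.single_le_sum (f := fun j => q ^ j - 1) (fun i _ => Nat.zero_le _) hj0J
    have hp : q ^ (K + 1) ≤ q ^ j0 := Nat.pow_le_pow_right (by omega) (by omega)
    have hp1 : 1 ≤ q ^ (K + 1) := Nat.one_le_pow _ _ (by omega)
    omega

private def sgn {F : Type*} [Field F] (b : Bool) : F := if b then 1 else -1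

private lemma sgn_neg {F : Type*} [Field F] (b : Bool) (x : F) :
    sgn b * (-x) = sgn (!b) * x := by
  cases b <;> simp [sgn]

private abbrev Idx (c m : ℕ) :=
  Option ((Bool × Fin c) ⊕ (Bool × Fin (m - 1)) ⊕ (Bool × Fin (m - 1)) ⊕ (Bool × Fin (m - 1)))

private def fword {F : Type*} [Field F] (a : ℕ → F) (q k m : ℕ) :
    Idx (q ^ k - m) m → (Fin m → F)
  | none => fun _ => 0
  | some (Sum.inl (ε, t)) => fun i => sgn ε * a ((t : ℕ) + i)
  | some (Sum.inr (Sum.inl (ε, s))) => fun i =>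
      if (i : ℕ) < (s : ℕ) + 1 then sgn ε * a (q ^ k - 1 - ((s : ℕ) + 1) + i)
      else sgn (!ε) * a ((i : ℕ) - ((s : ℕ) + 1))
  | some (Sum.inr (Sum.inr (Sum.inl (ε, s)))) => fun i =>
      if (i : ℕ) < (s : ℕ) + 1 then 0 else sgn ε * a ((i : ℕ) - ((s : ℕ) + 1))
  | some (Sum.inr (Sum.inr (Sum.inr (ε, s)))) => fun i =>
      if (i : ℕ) < (s : ℕ) + 1 then sgn ε * a (q ^ k - 1 - ((s : ℕ) + 1) + i) else 0

/-- For `q ≥ 3`, the coefficient sequence of `1/Π_q` satisfies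
`p(a, m) ≤ (2q + 4)m + 2q − 3` for every `m ≥ 1`. -/
theorem complexity_inv_carlitz_pi_q_upper_bound
    (q : ℕ) (hq : 3 ≤ q) (F : Type*) [Field F] [Fintype F] (hcard : Fintype.card F = q)
    (a : ℕ → F)
    (h1 : ∀ (n : ℕ) (J : Finset ℕ), (∀ j ∈ J, 1 ≤ j) → n = ∑ j ∈ J, (q ^ j - 1) →
      a n = (-1 : F) ^ J.card)
    (h0 : ∀ n : ℕ, (¬ ∃ J : Finset ℕ, (∀ j ∈ J, 1 ≤ j) ∧ n = ∑ j ∈ J, (q ^ j - 1)) →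
      a n = 0)
    (m : ℕ) (hm : 1 ≤ m) :
    subwordComplexity a m ≤ (2 * q + 4) * m + 2 * q - 3 := by
  classical
  have hq1 : 1 ≤ q := by omega
  have hex : ∃ kk : ℕ, m + 1 ≤ q ^ kk := by
    refine ⟨m + 1, ?_⟩
    calc m + 1 ≤ 2 ^ (m + 1) := (Nat.lt_two_pow_self (n := m + 1)).le
      _ ≤ q ^ (m + 1) := Nat.pow_le_pow_left (by omega) _
  set k := Nat.find hex with hkdef
  have hk1 : m + 1 ≤ q ^ k := Nat.find_spec hex
  have hkpos : 1 ≤ k := by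
    rcases Nat.eq_zero_or_pos k with h | h
    · rw [h] at hk1; simp at hk1; omega
    · exact h
  have hk2 : q ^ (k - 1) ≤ m := by
    have hmin := Nat.find_min hex (show k - 1 < k by omega)
    omega
  have hqm : q ^ k ≤ q * m := by
    have h' : q ^ k = q * q ^ (k - 1) := by
      conv_lhs => rw [show k = (k - 1) + 1 by omega]
      rw [pow_succ]; ring
    rw [h']
    exact Nat.mul_le_mul_left _ hk2
  have key : ∀ j : ℕ, ∀ ε : Bool, ∃ idx : Idx (q ^ k - m) m,
      ∀ i : Fin m, sgn ε * a (j + (i : ℕ)) = fword a q k m idx i := by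
    intro j
    induction j using Nat.strong_induction_on with
    | _ j ih =>
    intro ε
    have hexK : ∃ KK : ℕ, k ≤ KK ∧ j + m + 1 ≤ q ^ (KK + 1) := by
      refine ⟨k + j + m, by omega, ?_⟩
      calc j + m + 1 ≤ 2 ^ (k + j + m + 1) := by
            have := Nat.lt_two_pow_self (n := k + j + m + 1); omega
        _ ≤ q ^ (k + j + m + 1) := Nat.pow_le_pow_left (by omega) _
    set K := Nat.find hexK with hKdef
    obtain ⟨hKk, hKle⟩ : k ≤ K ∧ j + m + 1 ≤ q ^ (K + 1) := Nat.find_spec hexK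
    have hKpow : m + 1 ≤ q ^ K := le_trans hk1 (Nat.pow_le_pow_right hq1 hKk)
    have hK3 : 3 ≤ q ^ K := le_trans hq (Nat.le_self_pow (by omega) q)
    by_cases hA : j + m + 1 ≤ q ^ K
    · -- window entirely in the prefix U_k : family F1
      have hKeq : K = k := by
        by_contra hne
        have hmin := Nat.find_min hexK (show K - 1 < K by omega)
        rw [show K - 1 + 1 = K by omega] at hmin
        exact hmin ⟨by omega, hA⟩
      rw [hKeq] at hA
      refine ⟨some (Sum.inl (ε, ⟨j, by omega⟩)), fun i => ?_⟩
      simp only [fword]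
    · push_neg at hA  -- q ^ K < j + m + 1
      by_cases hB : j + 2 ≤ q ^ K
      · -- window straddles position q^K - 1
        have hs1 : 1 ≤ q ^ K - 1 - j := by omega
        have hs2 : q ^ K - 1 - j ≤ m - 1 := by omega
        by_cases hKeq : K = k
        · rw [hKeq] at hA hB hs1 hs2 hKle hKpow hK3
          refine ⟨some (Sum.inr (Sum.inl (ε, ⟨q ^ k - 1 - j - 1, by omega⟩))), fun i => ?_⟩
          have hii := i.isLt
          simp only [fword]
          by_cases hcase : (i : ℕ) < q ^ k - 1 - j
          · rw [if_pos (by omega : (i : ℕ) < (q ^ k - 1 - j - 1) + 1)]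
            have heq : q ^ k - 1 - (q ^ k - 1 - j - 1 + 1) + (i : ℕ) = j + (i : ℕ) := by omega
            rw [heq]
          · rw [if_neg (by omega : ¬ (i : ℕ) < (q ^ k - 1 - j - 1) + 1)]
            have hji : j + (i : ℕ) = q ^ k - 1 + ((i : ℕ) - (q ^ k - 1 - j - 1 + 1)) := by omega
            rw [hji, shift_lemma q hq a h1 h0 k _ hkpos (by omega)]
            exact sgn_neg ε _
        · have hKgt : k < K := lt_of_le_of_ne hKk (Ne.symm hKeq)
          have hm2 : m + 1 ≤ q ^ (K - 1) :=
            le_trans hk1 (Nat.pow_le_pow_right hq1 (by omega))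
          have hMA := MM_add_pow_le q hq (K - 1)
          rw [show K - 1 + 1 = K by omega] at hMA
          refine ⟨some (Sum.inr (Sum.inr (Sum.inl (!ε, ⟨q ^ K - 1 - j - 1, by omega⟩)))),
            fun i => ?_⟩
          have hii := i.isLt
          simp only [fword]
          by_cases hcase : (i : ℕ) < q ^ K - 1 - j
          · rw [if_pos (by omega : (i : ℕ) < (q ^ K - 1 - j - 1) + 1)]
            rw [zero_gap q hq a h0 (K - 1) (j + (i : ℕ)) (by omega)
              (by rw [show K - 1 + 1 = K by omega]; omega), mul_zero]
          · rw [if_neg (by omega : ¬ (i : ℕ) < (q ^ K - 1 - j - 1) + 1)]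
            have hji : j + (i : ℕ) = q ^ K - 1 + ((i : ℕ) - (q ^ K - 1 - j - 1 + 1)) := by omega
            rw [hji, shift_lemma q hq a h1 h0 K _ (by omega) (by omega)]
            exact sgn_neg ε _
      · push_neg at hB  -- q ^ K < j + 2
        by_cases hC : j + m + 1 ≤ 2 * q ^ K - 1
        · -- window inside the reflected copy: recurse
          obtain ⟨idx, hidx⟩ := ih (j - (q ^ K - 1)) (by omega) (!ε)
          refine ⟨idx, fun i => ?_⟩
          have hii := i.isLt
          have hji : j + (i : ℕ) = q ^ K - 1 + (j - (q ^ K - 1) + (i : ℕ)) := by omega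
          rw [hji, shift_lemma q hq a h1 h0 K _ (by omega) (by omega), sgn_neg]
          exact hidx i
        · push_neg at hC  -- 2 * q ^ K - 1 < j + m + 1
          have hMK : MM q K + 3 ≤ 2 * q ^ K := by
            have h5 := MM_succ q (K - 1)
            rw [show K - 1 + 1 = K by omega] at h5
            have h6 := MM_le q hq (K - 1)
            rw [show K - 1 + 1 = K by omega] at h6
            omega
          have hzero : ∀ p : ℕ, 2 * q ^ K - 2 ≤ p → p + 2 ≤ q ^ (K + 1) → a p = 0 := by
            intro p hp1 hp2
            exact zero_gap q hq a h0 K p (by omega) hp2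
          by_cases hD : 2 * q ^ K - 2 ≤ j
          · refine ⟨none, fun i => ?_⟩
            have hii := i.isLt
            simp only [fword]
            rw [hzero (j + (i : ℕ)) (by omega) (by omega), mul_zero]
          · push_neg at hD
            by_cases hKeq : K = k
            · rw [hKeq] at hA hB hC hD hMK hzero hKle hKpow hK3
              refine ⟨some (Sum.inr (Sum.inr (Sum.inr
                (!ε, ⟨2 * q ^ k - 2 - j - 1, by omega⟩)))), fun i => ?_⟩
              have hii := i.isLt
              simp only [fword]
              by_cases hcase : (i : ℕ) < 2 * q ^ k - 2 - j
              · rw [if_pos (by omega : (i : ℕ) < (2 * q ^ k - 2 - j - 1) + 1)]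
                have hji : j + (i : ℕ) =
                    q ^ k - 1 + (q ^ k - 1 - (2 * q ^ k - 2 - j - 1 + 1) + (i : ℕ)) := by omega
                rw [hji, shift_lemma q hq a h1 h0 k _ hkpos (by omega)]
                exact sgn_neg ε _
              · rw [if_neg (by omega : ¬ (i : ℕ) < (2 * q ^ k - 2 - j - 1) + 1)]
                rw [hzero (j + (i : ℕ)) (by omega) (by omega), mul_zero]
            · have hKgt : k < K := lt_of_le_of_ne hKk (Ne.symm hKeq)
              have hm2 : m + 1 ≤ q ^ (K - 1) :=
                le_trans hk1 (Nat.pow_le_pow_right hq1 (by omega))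
              have hMA := MM_add_pow_le q hq (K - 1)
              rw [show K - 1 + 1 = K by omega] at hMA
              have h5 := MM_succ q (K - 1)
              rw [show K - 1 + 1 = K by omega] at h5
              refine ⟨none, fun i => ?_⟩
              have hii := i.isLt
              simp only [fword]
              rw [zero_gap q hq a h0 K (j + (i : ℕ)) (by omega) (by omega), mul_zero]
  have hsub : { w : Fin m → F | ∃ j : ℕ, ∀ i : Fin m, w i = a (j + i) } ⊆
      Set.range (fword a q k m) := by
    rintro w ⟨j, hw⟩
    obtain ⟨idx, hidx⟩ := key j true
    refine ⟨idx, ?_⟩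
    funext i
    rw [← hidx i, hw i]
    simp [sgn]
  have h5 : subwordComplexity a m ≤ (Set.range (fword a q k m)).ncard := by
    unfold subwordComplexity
    exact Set.ncard_le_ncard hsub (Set.finite_range _)
  have h6 : (Set.range (fword a q k m)).ncard ≤ Fintype.card (Idx (q ^ k - m) m) := by
    rw [← Set.image_univ]
    calc (fword a q k m '' Set.univ).ncard
        ≤ (Set.univ : Set (Idx (q ^ k - m) m)).ncard := Set.ncard_image_le Set.finite_univ
      _ = Fintype.card (Idx (q ^ k - m) m) := by
          rw [Set.ncard_univ, Nat.card_eq_fintype_card]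
  have h7 : Fintype.card (Idx (q ^ k - m) m) =
      1 + (2 * (q ^ k - m) + (2 * (m - 1) + (2 * (m - 1) + 2 * (m - 1)))) := by
    simp [Idx, Fintype.card_option, Fintype.card_sum, Fintype.card_prod,
      Fintype.card_bool, Fintype.card_fin]
    ring
  have h9 : ∀ A B : ℕ, A ≤ B → m ≤ B →
      1 + (2 * (A - m) + (2 * (m - 1) + (2 * (m - 1) + 2 * (m - 1)))) ≤
        2 * B + 4 * m + 2 * q - 3 := by
    intro A B hAB hmB
    omega
  have h10 : (2 * q + 4) * m + 2 * q - 3 = 2 * (q * m) + 4 * m + 2 * q - 3 := by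
    congr 1
    ring
  calc subwordComplexity a m ≤ Fintype.card (Idx (q ^ k - m) m) := le_trans h5 h6
    _ = 1 + (2 * (q ^ k - m) + (2 * (m - 1) + (2 * (m - 1) + 2 * (m - 1)))) := h7
    _ ≤ 2 * (q * m) + 4 * m + 2 * q - 3 := h9 _ _ hqm (Nat.le_mul_of_pos_left m (by omega))
    _ = (2 * q + 4) * m + 2 * q - 3 := h10.symm
end

section
/- The class 𝒫 of Laurent series of at most polynomial complexity is a vector space over F(T): let F be a finite field, f, g : LaurentSeries F, and suppose there exist naturals K, L and reals C₁, C₂ > 0 with p(f, m) ≤ C₁ · m^K and p(g, m) ≤ C₂ · m^L for all m ≥ 1. Then for all rational functions r, s : RatFunc F there exist a natural N and a real C > 0 such that p((algebraMap (RatFunc F) (LaurentSeries F) r) * f + (algebraMap (RatFunc F) (LaurentSeries F) s) * g, m) ≤ C · m^N for all m ≥ 1. -/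
open Polynomial HahnSeries Finset

/-- The complexity of a Laurent series `f ∈ F((T⁻¹))`: the subword complexity of its
coefficient sequence. -/
noncomputable def laurentComplexity {F : Type*} [Field F] (f : LaurentSeries F) (m : ℕ) : ℕ :=
  subwordComplexity (fun n : ℕ => f.coeff (n : ℤ)) m

lemma subword_nonempty {A : Type*} (a : ℕ → A) (m : ℕ) :
    { w : Fin m → A | ∃ j : ℕ, ∀ i : Fin m, w i = a (j + i) }.Nonempty :=
  ⟨fun i => a (0 + i), 0, fun _ => rfl⟩

lemma one_le_subwordComplexity {A : Type*} [Finite A] (a : ℕ → A) (m : ℕ) :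
    1 ≤ subwordComplexity a m := by
  have h := subword_nonempty a m
  have : 0 < subwordComplexity a m := by
    rw [subwordComplexity, Set.ncard_pos (Set.toFinite _)]
    exact h
  omega

lemma subwordComplexity_le_card {A : Type*} [Fintype A] (a : ℕ → A) (m : ℕ) :
    subwordComplexity a m ≤ Fintype.card A ^ m := by
  rw [subwordComplexity]
  calc Set.ncard _ ≤ (Set.univ : Set (Fin m → A)).ncard :=
        Set.ncard_le_ncard (Set.subset_univ _) Set.finite_univ
    _ = Fintype.card A ^ m := by
        rw [Set.ncard_univ, Nat.card_eq_fintype_card, Fintype.card_fun, Fintype.card_fin]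

lemma comb_bound {F : Type*} [Fintype F] [Nonempty F] (a b c : ℕ → F) (M V : ℕ)
    (e : (Fin M → F) → (Fin (M + V + 1) → F) → (Fin (M + V + 1) → F) → F)
    (hrec : ∀ n : ℕ, M ≤ n →
      c n = e (fun i => c (n - M + i)) (fun i => a (n - M + i)) (fun i => b (n - M + i)))
    (m : ℕ) :
    subwordComplexity c m ≤
      Fintype.card F ^ M * (subwordComplexity a (m + V) * subwordComplexity b (m + V)) := by
  rcases le_or_gt m M with hm | hm
  · calc subwordComplexity c m ≤ Fintype.card F ^ m := subwordComplexity_le_card c m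
      _ ≤ Fintype.card F ^ M := Nat.pow_le_pow_right Fintype.card_pos hm
      _ ≤ _ := by
          have h1 := one_le_subwordComplexity a (m + V)
          have h2 := one_le_subwordComplexity b (m + V)
          exact Nat.le_mul_of_pos_right _ (by positivity)
  · set Sc := { w : Fin m → F | ∃ j : ℕ, ∀ i : Fin m, w i = c (j + i) } with hSc
    set Sa := { w : Fin (m + V) → F | ∃ j : ℕ, ∀ i : Fin (m + V), w i = a (j + i) } with hSa
    set Sb := { w : Fin (m + V) → F | ∃ j : ℕ, ∀ i : Fin (m + V), w i = b (j + i) } with hSb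
    haveI : Finite Sa := (Set.toFinite Sa).to_subtype
    haveI : Finite Sb := (Set.toFinite Sb).to_subtype
    have key : ∀ w : Sc, ∃ (u : Fin M → F) (va : Sa) (vb : Sb) (j : ℕ),
        (∀ i : Fin m, (w : Fin m → F) i = c (j + i)) ∧
        (∀ i : Fin M, u i = c (j + i)) ∧
        (∀ i : Fin (m + V), (va : Fin (m+V) → F) i = a (j + i)) ∧
        (∀ i : Fin (m + V), (vb : Fin (m+V) → F) i = b (j + i)) := by
      rintro ⟨w, j, hj⟩
      exact ⟨fun i => c (j + i), ⟨fun i => a (j + i), j, fun _ => rfl⟩,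
        ⟨fun i => b (j + i), j, fun _ => rfl⟩, j, hj, fun _ => rfl, fun _ => rfl, fun _ => rfl⟩
    choose u va vb j hw hu hva hvb using key
    have hinj : Function.Injective (fun w : Sc => (u w, va w, vb w)) := by
      intro w w' heq
      simp only [Prod.mk.injEq] at heq
      obtain ⟨h1, h2, h3⟩ := heq
      have hc : ∀ t : ℕ, t < m → c (j w + t) = c (j w' + t) := by
        intro t
        induction t using Nat.strong_induction_on with
        | _ t ih =>
          intro htm
          rcases lt_or_ge t M with htM | htM
          · have := congrFun h1 ⟨t, htM⟩
            rw [hu w ⟨t, htM⟩, hu w' ⟨t, htM⟩] at this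
            exact this
          · have e1 := hrec (j w + t) (by omega)
            have e2 := hrec (j w' + t) (by omega)
            have hja : ∀ i : Fin (M + V + 1), a (j w + t - M + i) = a (j w' + t - M + i) := by
              intro i
              have hi : (t - M + i : ℕ) < m + V := by omega
              have := congrFun (congrArg Subtype.val h2) ⟨t - M + i, hi⟩
              rw [hva w ⟨t - M + i, hi⟩, hva w' ⟨t - M + i, hi⟩] at this
              have ea : j w + t - M + i = j w + (t - M + i) := by omega
              have ea' : j w' + t - M + i = j w' + (t - M + i) := by omega
              rw [ea, ea']
              exact this
            have hjb : ∀ i : Fin (M + V + 1), b (j w + t - M + i) = b (j w' + t - M + i) := by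
              intro i
              have hi : (t - M + i : ℕ) < m + V := by omega
              have := congrFun (congrArg Subtype.val h3) ⟨t - M + i, hi⟩
              rw [hvb w ⟨t - M + i, hi⟩, hvb w' ⟨t - M + i, hi⟩] at this
              have ea : j w + t - M + i = j w + (t - M + i) := by omega
              have ea' : j w' + t - M + i = j w' + (t - M + i) := by omega
              rw [ea, ea']
              exact this
            have hjc : ∀ i : Fin M, c (j w + t - M + i) = c (j w' + t - M + i) := by
              intro i
              have ea : j w + t - M + i = j w + (t - M + i) := by omega
              have ea' : j w' + t - M + i = j w' + (t - M + i) := by omega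
              rw [ea, ea']
              exact ih (t - M + i) (by omega) (by omega)
            rw [e1, e2]
            congr 1
            · funext i; exact hjc i
            · funext i; exact hja i
            · funext i; exact hjb i
      apply Subtype.ext
      funext i
      rw [hw w i, hw w' i, hc i i.2]
    have hcard := Nat.card_le_card_of_injective _ hinj
    rw [Nat.card_prod, Nat.card_prod] at hcard
    calc subwordComplexity c m = Nat.card Sc := (Nat.card_coe_set_eq _).symm
      _ ≤ _ := hcard
      _ = Fintype.card F ^ M * (subwordComplexity a (m + V) * subwordComplexity b (m + V)) := by
          rw [Nat.card_eq_fintype_card, Fintype.card_fun, Fintype.card_fin,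
            Nat.card_coe_set_eq, Nat.card_coe_set_eq]
          rfl

lemma extract_X_pow {F : Type*} [Field F] (p : Polynomial F) (hp : p ≠ 0) :
    ∃ (V : ℕ) (q : Polynomial F), q.coeff 0 ≠ 0 ∧ p = X ^ V * q := by
  generalize hd : p.natDegree = d
  induction d using Nat.strong_induction_on generalizing p with
  | _ d ih =>
    by_cases h0 : p.coeff 0 ≠ 0
    · exact ⟨0, p, h0, by simp⟩
    · push_neg at h0
      have hdvd : p = X * p.divX := by
        conv_lhs => rw [← p.X_mul_divX_add]
        rw [h0, map_zero, add_zero]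
      have hdx : p.divX ≠ 0 := by
        intro h; rw [h, mul_zero] at hdvd; exact hp hdvd
      have hdpos : 0 < d := by
        rcases Nat.eq_zero_or_pos d with h | h
        · exfalso
          have := Polynomial.eq_C_of_natDegree_eq_zero (hd.trans h)
          rw [this, h0, map_zero] at hp; exact hp rfl
        · exact h
      have hlt : p.divX.natDegree < d := by
        rw [Polynomial.natDegree_divX_eq_natDegree_tsub_one, hd]; omega
      obtain ⟨V, q, hq, hq2⟩ := ih p.divX.natDegree hlt p.divX hdx rfl
      exact ⟨V + 1, q, hq, by rw [hdvd, hq2]; ring⟩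

lemma poly_eq_sum_single {F : Type*} [Field F] (P : Polynomial F) :
    ((P : PowerSeries F) : LaurentSeries F) =
      ∑ i ∈ Finset.range (P.natDegree + 1), HahnSeries.single (i : ℤ) (P.coeff i) := by
  ext k
  have hsum : (∑ i ∈ Finset.range (P.natDegree + 1),
      HahnSeries.single (i : ℤ) (P.coeff i)).coeff k =
      ∑ i ∈ Finset.range (P.natDegree + 1),
        (HahnSeries.single (i : ℤ) (P.coeff i)).coeff k :=
    map_sum (HahnSeries.coeff.addMonoidHom k) _ _
  rw [hsum, PowerSeries.coeff_coe]
  split_ifs with hk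
  · symm
    apply Finset.sum_eq_zero
    intro i _
    rw [HahnSeries.coeff_single_of_ne (by omega)]
  · push_neg at hk
    obtain ⟨k, rfl⟩ := Int.eq_ofNat_of_zero_le hk
    rw [Int.natAbs_natCast, Polynomial.coeff_coe]
    rcases lt_or_ge k (P.natDegree + 1) with h | h
    · rw [Finset.sum_eq_single k]
      · rw [HahnSeries.coeff_single_same]
      · intro i _ hik
        exact HahnSeries.coeff_single_of_ne (by exact_mod_cast fun h => hik (by omega))
      · intro h2; exact absurd (Finset.mem_range.mpr h) h2
    · rw [Polynomial.coeff_eq_zero_of_natDegree_lt (by omega)]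
      symm
      apply Finset.sum_eq_zero
      intro i hi
      rw [Finset.mem_range] at hi
      exact HahnSeries.coeff_single_of_ne (by exact_mod_cast (by omega : (k : ℕ) ≠ i))

lemma coeff_poly_mul {F : Type*} [Field F] (P : Polynomial F) (x : LaurentSeries F) (n : ℤ) :
    (((P : PowerSeries F) : LaurentSeries F) * x).coeff n =
      ∑ i ∈ Finset.range (P.natDegree + 1), P.coeff i * x.coeff (n - i) := by
  rw [poly_eq_sum_single, Finset.sum_mul]
  have hsum : (∑ i ∈ Finset.range (P.natDegree + 1),
      HahnSeries.single (i : ℤ) (P.coeff i) * x).coeff n =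
      ∑ i ∈ Finset.range (P.natDegree + 1),
        (HahnSeries.single (i : ℤ) (P.coeff i) * x).coeff n :=
    map_sum (HahnSeries.coeff.addMonoidHom n) _ _
  rw [hsum]
  apply Finset.sum_congr rfl
  intro i _
  have := HahnSeries.coeff_single_mul_add (r := P.coeff i) (x := x) (a := n - i) (b := (i : ℤ))
  rwa [sub_add_cancel] at this

open scoped RatFunc in
lemma key_identity {F : Type*} [Field F] (r s : RatFunc F) (f g : LaurentSeries F) :
    ∃ (V : ℕ) (Q A B : Polynomial F), Q.coeff 0 ≠ 0 ∧ ∀ n : ℤ,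
      ∑ i ∈ Finset.range (Q.natDegree + 1), Q.coeff i *
          ((algebraMap (RatFunc F) (LaurentSeries F) r) * f +
            (algebraMap (RatFunc F) (LaurentSeries F) s) * g).coeff (n - i)
        = ∑ i ∈ Finset.range (A.natDegree + 1), A.coeff i * f.coeff (n + V - i)
          + ∑ i ∈ Finset.range (B.natDegree + 1), B.coeff i * g.coeff (n + V - i) := by
  obtain ⟨V, Q, hQ0, hQeq⟩ := extract_X_pow (r.denom * s.denom)
    (mul_ne_zero (RatFunc.denom_ne_zero r) (RatFunc.denom_ne_zero s))
  have hQne : Q ≠ 0 := fun h => hQ0 (by simp [h])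
  set A := r.num * s.denom with hA
  set B := s.num * r.denom with hB
  have hnum : ∀ x : RatFunc F, algebraMap (Polynomial F) (RatFunc F) x.denom * x =
      algebraMap (Polynomial F) (RatFunc F) x.num := by
    intro x
    have h := RatFunc.num_div_denom x
    have hd : algebraMap (Polynomial F) (RatFunc F) x.denom ≠ 0 :=
      RatFunc.algebraMap_ne_zero (RatFunc.denom_ne_zero x)
    rw [div_eq_iff hd] at h
    rw [mul_comm]
    exact h.symm
  have hra : algebraMap (Polynomial F) (RatFunc F) (X ^ V * Q) * r =
      algebraMap (Polynomial F) (RatFunc F) A := by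
    rw [← hQeq, map_mul, hA, map_mul]
    rw [mul_comm (algebraMap (Polynomial F) (RatFunc F) r.denom)
      (algebraMap (Polynomial F) (RatFunc F) s.denom), mul_assoc, hnum r, mul_comm]
  have hsb : algebraMap (Polynomial F) (RatFunc F) (X ^ V * Q) * s =
      algebraMap (Polynomial F) (RatFunc F) B := by
    rw [← hQeq, map_mul, hB, map_mul, mul_assoc, hnum s, mul_comm]
  refine ⟨V, Q, A, B, hQ0, fun n => ?_⟩
  set Φ := algebraMap (RatFunc F) (LaurentSeries F) with hΦ
  have hcoe : ∀ P : Polynomial F, ((P : PowerSeries F) : LaurentSeries F) =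
      Φ (algebraMap (Polynomial F) (RatFunc F) P) := by
    intro P
    rw [RatFunc.coe_coe]
    rfl
  have hmain : ((((X ^ V * Q : Polynomial F) : PowerSeries F)) : LaurentSeries F) *
      (Φ r * f + Φ s * g) =
      ((A : PowerSeries F) : LaurentSeries F) * f + ((B : PowerSeries F) : LaurentSeries F) * g := by
    rw [hcoe, hcoe, hcoe, mul_add, ← mul_assoc, ← mul_assoc, ← map_mul, ← map_mul, hra, hsb]
  have hc := congrArg (fun x : LaurentSeries F => x.coeff (n + V)) hmain
  simp only [HahnSeries.coeff_add] at hc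
  rw [coeff_poly_mul, coeff_poly_mul, coeff_poly_mul] at hc
  have hdeg : (X ^ V * Q : Polynomial F).natDegree = V + Q.natDegree := by
    rw [Polynomial.natDegree_mul (pow_ne_zero V Polynomial.X_ne_zero) hQne,
      Polynomial.natDegree_X_pow]
  set y := Φ r * f + Φ s * g with hy
  have hsplit : ∑ i ∈ Finset.range ((X ^ V * Q : Polynomial F).natDegree + 1),
      (X ^ V * Q : Polynomial F).coeff i * y.coeff (n + V - i)
      = ∑ i ∈ Finset.range (Q.natDegree + 1), Q.coeff i * y.coeff (n - i) := by
    rw [hdeg, show V + Q.natDegree + 1 = V + (Q.natDegree + 1) by ring,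
      Finset.range_eq_Ico,
      ← Finset.sum_Ico_consecutive _ (Nat.zero_le V) (by omega : V ≤ V + (Q.natDegree + 1)),
      ← Finset.range_eq_Ico]
    have h1 : ∑ i ∈ Finset.range V, (X ^ V * Q : Polynomial F).coeff i *
        y.coeff (n + V - i) = 0 := by
      apply Finset.sum_eq_zero
      intro i hi
      rw [Finset.mem_range] at hi
      rw [Polynomial.coeff_X_pow_mul', if_neg (by omega), zero_mul]
    rw [h1, zero_add, Finset.sum_Ico_eq_sum_range, Nat.add_sub_cancel_left]
    apply Finset.sum_congr rfl
    intro i _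
    rw [show V + i = i + V by ring, Polynomial.coeff_X_pow_mul]
    congr 2
    push_cast
    ring
  rw [hsplit] at hc
  exact hc

open scoped RatFunc in
/-- The class 𝒫 of Laurent series of at most polynomial complexity is a vector
space over `F(T)`: any `F(T)`-linear combination of two Laurent series of
polynomial complexity again has polynomial complexity. -/
theorem polynomial_complexity_class_vector_space
    (F : Type*) [Field F] [Fintype F] (f g : LaurentSeries F)
    (K L : ℕ) (C₁ C₂ : ℝ) (hC₁ : 0 < C₁) (hC₂ : 0 < C₂)
    (hf : ∀ m : ℕ, 1 ≤ m → (laurentComplexity f m : ℝ) ≤ C₁ * (m : ℝ) ^ K)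
    (hg : ∀ m : ℕ, 1 ≤ m → (laurentComplexity g m : ℝ) ≤ C₂ * (m : ℝ) ^ L)
    (r s : RatFunc F) :
    ∃ (N : ℕ) (C : ℝ), 0 < C ∧ ∀ m : ℕ, 1 ≤ m →
      (laurentComplexity
        ((algebraMap (RatFunc F) (LaurentSeries F) r) * f +
          (algebraMap (RatFunc F) (LaurentSeries F) s) * g) m : ℝ) ≤ C * (m : ℝ) ^ N := by
  haveI : Nonempty F := ⟨0⟩
  obtain ⟨V, Q, A, B, hQ0, hid⟩ := key_identity r s f g
  set h : LaurentSeries F := (algebraMap (RatFunc F) (LaurentSeries F) r) * f +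
      (algebraMap (RatFunc F) (LaurentSeries F) s) * g with hh
  set M : ℕ := Q.natDegree + A.natDegree + B.natDegree + V + 1 with hM
  have hM1 : 1 ≤ M := by omega
  set a : ℕ → F := fun n => f.coeff (n : ℤ) with ha
  set b : ℕ → F := fun n => g.coeff (n : ℤ) with hb
  set c : ℕ → F := fun n => h.coeff (n : ℤ) with hc
  set e : (Fin M → F) → (Fin (M + V + 1) → F) → (Fin (M + V + 1) → F) → F :=
    fun u v w => (Q.coeff 0)⁻¹ *
      ((∑ i ∈ Finset.range (A.natDegree + 1), A.coeff i * v ⟨M + V - i, by omega⟩)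
        + (∑ i ∈ Finset.range (B.natDegree + 1), B.coeff i * w ⟨M + V - i, by omega⟩)
        - ∑ i ∈ Finset.range Q.natDegree, Q.coeff (i + 1) * u ⟨M - 1 - i, by omega⟩) with he
  have hrec : ∀ n : ℕ, M ≤ n →
      c n = e (fun i => c (n - M + i)) (fun i => a (n - M + i)) (fun i => b (n - M + i)) := by
    intro n hn
    have E := hid (n : ℤ)
    rw [Finset.sum_range_succ'] at E
    simp only [Nat.cast_zero, sub_zero] at E
    rw [he]
    simp only
    have hAeq : ∑ i ∈ Finset.range (A.natDegree + 1),
        A.coeff i * a (n - M + (M + V - i)) =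
        ∑ i ∈ Finset.range (A.natDegree + 1), A.coeff i * f.coeff ((n : ℤ) + V - i) := by
      apply Finset.sum_congr rfl
      intro i hi
      rw [Finset.mem_range] at hi
      congr 1
      rw [ha]
      simp only
      congr 1
      omega
    have hBeq : ∑ i ∈ Finset.range (B.natDegree + 1),
        B.coeff i * b (n - M + (M + V - i)) =
        ∑ i ∈ Finset.range (B.natDegree + 1), B.coeff i * g.coeff ((n : ℤ) + V - i) := by
      apply Finset.sum_congr rfl
      intro i hi
      rw [Finset.mem_range] at hi
      congr 1
      rw [hb]
      simp only
      congr 1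
      omega
    have hQeq : ∑ i ∈ Finset.range Q.natDegree,
        Q.coeff (i + 1) * c (n - M + (M - 1 - i)) =
        ∑ i ∈ Finset.range Q.natDegree, Q.coeff (i + 1) * h.coeff ((n : ℤ) - (i + 1 : ℕ)) := by
      apply Finset.sum_congr rfl
      intro i hi
      rw [Finset.mem_range] at hi
      congr 1
      rw [hc]
      simp only
      congr 1
      omega
    rw [hAeq, hBeq, hQeq]
    rw [hc]
    simp only
    rw [eq_comm, inv_mul_eq_div, div_eq_iff hQ0, ← E]
    ring
  have main := comb_bound a b c M V e hrec
  refine ⟨K + L, (Fintype.card F : ℝ) ^ M * (C₁ * C₂) * ((V : ℝ) + 1) ^ (K + L), by positivity,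
    fun m hm => ?_⟩
  have hmain := main m
  have h1 : (subwordComplexity a (m + V) : ℝ) ≤ C₁ * ((m : ℝ) + V) ^ K := by
    have := hf (m + V) (by omega)
    rw [laurentComplexity] at this
    push_cast at this ⊢
    convert this using 3
  have h2 : (subwordComplexity b (m + V) : ℝ) ≤ C₂ * ((m : ℝ) + V) ^ L := by
    have := hg (m + V) (by omega)
    rw [laurentComplexity] at this
    push_cast at this ⊢
    convert this using 3
  have hmV : ((m : ℝ) + V) ≤ ((V : ℝ) + 1) * m := by
    have : (1 : ℝ) ≤ (m : ℝ) := by exact_mod_cast hm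
    nlinarith [Nat.cast_nonneg (α := ℝ) V]
  have hlc : (laurentComplexity h m : ℝ) ≤
      (Fintype.card F : ℝ) ^ M * ((subwordComplexity a (m + V) : ℝ) *
        (subwordComplexity b (m + V) : ℝ)) := by
    rw [laurentComplexity]
    exact_mod_cast hmain
  calc (laurentComplexity h m : ℝ)
      ≤ (Fintype.card F : ℝ) ^ M * ((subwordComplexity a (m + V) : ℝ) *
        (subwordComplexity b (m + V) : ℝ)) := hlc
    _ ≤ (Fintype.card F : ℝ) ^ M * ((C₁ * ((m : ℝ) + V) ^ K) * (C₂ * ((m : ℝ) + V) ^ L)) := by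
        apply mul_le_mul_of_nonneg_left _ (by positivity)
        exact mul_le_mul h1 h2 (by positivity) (by positivity)
    _ ≤ (Fintype.card F : ℝ) ^ M * ((C₁ * (((V : ℝ) + 1) * m) ^ K) *
        (C₂ * (((V : ℝ) + 1) * m) ^ L)) := by
        apply mul_le_mul_of_nonneg_left _ (by positivity)
        apply mul_le_mul _ _ (by positivity) (by positivity)
        · exact mul_le_mul_of_nonneg_left (pow_le_pow_left₀ (by positivity) hmV K) hC₁.le
        · exact mul_le_mul_of_nonneg_left (pow_le_pow_left₀ (by positivity) hmV L) hC₂.le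
    _ = (Fintype.card F : ℝ) ^ M * (C₁ * C₂) * ((V : ℝ) + 1) ^ (K + L) * (m : ℝ) ^ (K + L) := by
        rw [mul_pow, mul_pow, _root_.pow_add, _root_.pow_add]
        ring
end

section
/- The class 𝒵 of Laurent series of zero topological entropy is a vector space over F(T): let F be a finite field and f, g : LaurentSeries F with zero entropy, i.e. Tendsto (fun m => Real.log (p(f, m)) / m) atTop (𝓝 0) and Tendsto (fun m => Real.log (p(g, m)) / m) atTop (𝓝 0). Then for all rational functions r, s : RatFunc F, the Laurent series (algebraMap (RatFunc F) (LaurentSeries F) r) * f + (algebraMap (RatFunc F) (LaurentSeries F) s) * g also has zero entropy: Tendsto (fun m => Real.log (p(r·f + s·g, m)) / m) atTop (𝓝 0). -/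
open Filter Topology
open scoped RatFunc

namespace ZeroEntropyAux

open Finset Polynomial

variable {F : Type*} [Field F]

lemma ncard_prod {α β : Type*} (s : Set α) (t : Set β) :
    (s ×ˢ t).ncard = s.ncard * t.ncard := by
  rw [← Nat.card_coe_set_eq, ← Nat.card_coe_set_eq, ← Nat.card_coe_set_eq,
    Nat.card_congr (Equiv.Set.prod s t), Nat.card_prod]

lemma coeff_sum (s : Finset ℕ) (c : ℕ → LaurentSeries F) (n : ℤ) :
    (∑ k ∈ s, c k).coeff n = ∑ k ∈ s, (c k).coeff n := by
  classical
  induction s using Finset.induction_on with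
  | empty => simp
  | insert a s h ih => rw [Finset.sum_insert h, Finset.sum_insert h, HahnSeries.coeff_add, ih]

lemma algebraMap_monomial (k : ℕ) (a : F) :
    algebraMap F[X] (LaurentSeries F) (monomial k a) = HahnSeries.single (k : ℤ) a := by
  rw [Polynomial.algebraMap_hahnSeries_apply, ← C_mul_X_pow_eq_monomial,
    Polynomial.coe_mul, Polynomial.coe_C, Polynomial.coe_pow, Polynomial.coe_X,
    map_mul, map_pow, HahnSeries.ofPowerSeries_C, HahnSeries.ofPowerSeries_X]
  rw [HahnSeries.single_pow, HahnSeries.C_apply, HahnSeries.single_mul_single]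
  simp

lemma coeff_polyMul (P : F[X]) (x : LaurentSeries F) (n : ℤ) :
    (algebraMap F[X] (LaurentSeries F) P * x).coeff n
      = ∑ k ∈ Finset.range (P.natDegree + 1), P.coeff k * x.coeff (n - k) := by
  conv_lhs => rw [Polynomial.as_sum_range' P (P.natDegree + 1) (Nat.lt_succ_self _)]
  rw [map_sum, Finset.sum_mul, coeff_sum]
  refine Finset.sum_congr rfl fun k hk => ?_
  rw [algebraMap_monomial]
  have h := HahnSeries.coeff_single_mul_add (r := P.coeff k) (x := x) (a := n - k) (b := (k : ℤ))
  rw [sub_add_cancel] at h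
  exact h

lemma key_identity (r : RatFunc F) (f : LaurentSeries F) :
    algebraMap F[X] (LaurentSeries F) r.denom * (algebraMap (RatFunc F) (LaurentSeries F) r * f)
      = algebraMap F[X] (LaurentSeries F) r.num * f := by
  rw [← mul_assoc]
  congr 1
  rw [IsScalarTower.algebraMap_apply F[X] (RatFunc F) (LaurentSeries F),
    IsScalarTower.algebraMap_apply F[X] (RatFunc F) (LaurentSeries F) r.num,
    ← map_mul]
  congr 1
  have hQ : algebraMap F[X] (RatFunc F) r.denom ≠ 0 :=
    RatFunc.algebraMap_ne_zero (r.denom_ne_zero)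
  have h := RatFunc.num_div_denom r
  rw [div_eq_iff hQ] at h
  rw [h, mul_comm]

lemma coeff_rec (r : RatFunc F) (f : LaurentSeries F) (n : ℤ) :
    (algebraMap (RatFunc F) (LaurentSeries F) r * f).coeff n =
      (r.denom.coeff r.denom.natTrailingDegree)⁻¹ *
        ((∑ k ∈ Finset.range (r.num.natDegree + 1),
            r.num.coeff k * f.coeff (n + r.denom.natTrailingDegree - k)) -
         ∑ k ∈ Finset.range (r.denom.natDegree - r.denom.natTrailingDegree),
            r.denom.coeff (r.denom.natTrailingDegree + 1 + k) *
              (algebraMap (RatFunc F) (LaurentSeries F) r * f).coeff (n - (k + 1))) := by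
  set u := algebraMap (RatFunc F) (LaurentSeries F) r * f with hu
  set v := r.denom.natTrailingDegree with hv
  have hQ0 : r.denom ≠ 0 := r.denom_ne_zero
  have hqv : r.denom.coeff v ≠ 0 := by
    rw [hv, Ne, Polynomial.coeff_natTrailingDegree_eq_zero]
    exact hQ0
  have hvd : v ≤ r.denom.natDegree := Polynomial.natTrailingDegree_le_natDegree _
  have hid := congrArg (fun z : LaurentSeries F => z.coeff (n + v)) (key_identity r f)
  rw [coeff_polyMul, coeff_polyMul] at hid
  have hsplit : ∑ k ∈ Finset.range (r.denom.natDegree + 1),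
      r.denom.coeff k * u.coeff (n + v - k)
      = r.denom.coeff v * u.coeff n +
        ∑ k ∈ Finset.range (r.denom.natDegree - v),
          r.denom.coeff (v + 1 + k) * u.coeff (n - (k + 1)) := by
    have hsub : Finset.Ico v (r.denom.natDegree + 1) ⊆ Finset.range (r.denom.natDegree + 1) := by
      intro x hx
      simp only [Finset.mem_Ico] at hx
      simp [hx.2]
    have hzero : ∀ x ∈ Finset.range (r.denom.natDegree + 1),
        x ∉ Finset.Ico v (r.denom.natDegree + 1) →
        r.denom.coeff x * u.coeff (n + v - x) = 0 := by
      intro x hx hnx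
      simp only [Finset.mem_range] at hx
      simp only [Finset.mem_Ico, not_and, not_lt] at hnx
      have : x < v := by
        by_contra hxe
        exact absurd (hnx (le_of_not_gt hxe)) (by omega)
      rw [Polynomial.coeff_eq_zero_of_lt_natTrailingDegree (hv ▸ this), zero_mul]
    rw [← Finset.sum_subset hsub hzero, Finset.sum_Ico_eq_sum_range]
    have he : r.denom.natDegree + 1 - v = (r.denom.natDegree - v) + 1 := by omega
    rw [he, Finset.sum_range_succ']
    rw [add_comm]
    congr 1
    · simp
    · refine Finset.sum_congr rfl fun k hk => ?_
      have h1 : v + (k + 1) = v + 1 + k := by omega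
      rw [h1]
      congr 2
      push_cast
      ring
  rw [hsplit] at hid
  have hsolve : r.denom.coeff v * u.coeff n =
      (∑ k ∈ Finset.range (r.num.natDegree + 1),
        r.num.coeff k * f.coeff (n + v - k)) -
      ∑ k ∈ Finset.range (r.denom.natDegree - v),
        r.denom.coeff (v + 1 + k) * u.coeff (n - (k + 1)) := by
    rw [eq_sub_iff_add_eq, ← hid]
  rw [← hsolve, inv_mul_cancel_left₀ hqv]

/-- The recursive "sliding block with memory" map. -/
noncomputable def phi (vinv : F) (d : ℕ) (qc : ℕ → F) (v dP : ℕ) (pc : ℕ → F)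
    (su sf : ℤ → F) (w : ℕ → F) : ℕ → F
  | n =>
    vinv * ((∑ k ∈ Finset.range (dP + 1), pc k *
        (if 0 ≤ (n : ℤ) + v - k then w ((n : ℤ) + v - k).toNat else sf ((n : ℤ) + v - k))) -
      ∑ k ∈ Finset.range d, qc k *
        (if h : k + 1 ≤ n then phi vinv d qc v dP pc su sf w (n - (k + 1))
         else su ((n : ℤ) - (k + 1))))
  decreasing_by omega

lemma phi_congr (vinv : F) (d : ℕ) (qc : ℕ → F) (v dP : ℕ) (pc : ℕ → F)
    {su su' sf sf' : ℤ → F} {w w' : ℕ → F} (n : ℕ)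
    (hsu : ∀ t : ℤ, -(d : ℤ) ≤ t → t < 0 → su t = su' t)
    (hsf : ∀ t : ℤ, -(dP : ℤ) ≤ t → t < 0 → sf t = sf' t)
    (hw : ∀ t : ℕ, t ≤ n + v → w t = w' t) :
    phi vinv d qc v dP pc su sf w n = phi vinv d qc v dP pc su' sf' w' n := by
  induction n using Nat.strong_induction_on with
  | _ n ih =>
    rw [phi, phi]
    congr 2
    · refine Finset.sum_congr rfl fun k hk => ?_
      simp only [Finset.mem_range] at hk
      congr 1
      split_ifs with h
      · exact hw _ (by omega)
      · exact hsf _ (by omega) (by omega)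
    · refine Finset.sum_congr rfl fun k hk => ?_
      simp only [Finset.mem_range] at hk
      congr 1
      split_ifs with h
      · exact ih _ (by omega) (fun t ht => hw t (by omega))
      · exact hsu _ (by omega) (by omega)

lemma phi_spec (u f : LaurentSeries F) (vinv : F) (d : ℕ) (qc : ℕ → F) (v dP : ℕ) (pc : ℕ → F)
    (hrec : ∀ n : ℤ, u.coeff n = vinv *
      ((∑ k ∈ Finset.range (dP + 1), pc k * f.coeff (n + v - k))
        - ∑ k ∈ Finset.range d, qc k * u.coeff (n - (k + 1))))
    (j : ℕ) (n : ℕ) :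
    phi vinv d qc v dP pc (fun t => u.coeff ((j : ℤ) + t)) (fun t => f.coeff ((j : ℤ) + t))
      (fun t : ℕ => f.coeff ((j : ℤ) + (t : ℤ))) n = u.coeff ((j : ℤ) + n) := by
  induction n using Nat.strong_induction_on with
  | _ n ih =>
    rw [phi, hrec ((j : ℤ) + n)]
    congr 1
    congr 1
    · refine Finset.sum_congr rfl fun k hk => ?_
      congr 1
      split_ifs with h
      · congr 1
        omega
      · congr 1
        ring
    · refine Finset.sum_congr rfl fun k hk => ?_
      congr 1
      split_ifs with h
      · rw [ih _ (by omega)]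
        congr 1
        omega
      · congr 1
        ring

/-- Decode a finite past into a function on negative integers. -/
noncomputable def decode {D : ℕ} (s : Fin D → F) : ℤ → F := fun t =>
  if h : t < 0 ∧ (-t).toNat - 1 < D then s ⟨(-t).toNat - 1, h.2⟩ else 0

lemma decode_spec {D : ℕ} (c : ℤ → F) (j : ℕ) (t : ℤ) (h1 : -(D : ℤ) ≤ t) (h2 : t < 0) :
    decode (fun i : Fin D => c ((j : ℤ) - ((i : ℕ) + 1))) t = c ((j : ℤ) + t) := by
  have hD : (-t).toNat - 1 < D := by omega
  rw [decode, dif_pos ⟨h2, hD⟩]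
  congr 1
  have : (((-t).toNat - 1 : ℕ) : ℤ) = -t - 1 := by omega
  rw [this]
  ring

lemma complexity_le [Fintype F] (u f : LaurentSeries F) (vinv : F) (d : ℕ) (qc : ℕ → F)
    (v dP : ℕ) (pc : ℕ → F)
    (hrec : ∀ n : ℤ, u.coeff n = vinv *
      ((∑ k ∈ Finset.range (dP + 1), pc k * f.coeff (n + v - k))
        - ∑ k ∈ Finset.range d, qc k * u.coeff (n - (k + 1))))
    (m : ℕ) :
    laurentComplexity u m ≤ laurentComplexity f (m + v) * Fintype.card F ^ (d + dP) := by
  classical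
  set Ψ : (Fin (m + v) → F) × ((Fin d → F) × (Fin dP → F)) → (Fin m → F) :=
    fun x i => phi vinv d qc v dP pc (decode x.2.1) (decode x.2.2)
      (fun t => if h : t < m + v then x.1 ⟨t, h⟩ else 0) i with hΨ
  set Sf : Set (Fin (m + v) → F) :=
    { w | ∃ j : ℕ, ∀ i : Fin (m + v), w i = f.coeff (((j + (i : ℕ) : ℕ) : ℤ)) } with hSf
  have hsub : { w : Fin m → F | ∃ j : ℕ, ∀ i : Fin m, w i = u.coeff (((j + (i : ℕ) : ℕ) : ℤ)) }
      ⊆ Ψ '' (Sf ×ˢ (Set.univ : Set ((Fin d → F) × (Fin dP → F)))) := by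
    rintro w ⟨j, hw⟩
    refine ⟨⟨fun i => f.coeff ((j : ℤ) + (i : ℕ)),
      (fun i => u.coeff ((j : ℤ) - ((i : ℕ) + 1)), fun i => f.coeff ((j : ℤ) - ((i : ℕ) + 1)))⟩,
      ⟨⟨j, fun i => by norm_cast⟩, trivial⟩, ?_⟩
    funext i
    have hcongr := phi_congr vinv d qc v dP pc
      (su := decode (fun i : Fin d => u.coeff ((j : ℤ) - ((i : ℕ) + 1))))
      (sf := decode (fun i : Fin dP => f.coeff ((j : ℤ) - ((i : ℕ) + 1))))
      (w := fun t : ℕ => if h : t < m + v then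
        (fun i : Fin (m + v) => f.coeff ((j : ℤ) + (i : ℕ))) ⟨t, h⟩ else 0)
      (su' := fun t => u.coeff ((j : ℤ) + t))
      (sf' := fun t => f.coeff ((j : ℤ) + t)) (w' := fun t : ℕ => f.coeff ((j : ℤ) + (t : ℤ)))
      (i : ℕ)
      (fun t h1 h2 => decode_spec (fun t => u.coeff t) j t h1 h2)
      (fun t h1 h2 => decode_spec (fun t => f.coeff t) j t h1 h2)
      (fun t ht => by
        have h : t < m + v := by omega
        simp only [dif_pos h])
    calc Ψ ⟨fun i => f.coeff ((j : ℤ) + (i : ℕ)),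
        (fun i => u.coeff ((j : ℤ) - ((i : ℕ) + 1)),
         fun i => f.coeff ((j : ℤ) - ((i : ℕ) + 1)))⟩ i
        = phi vinv d qc v dP pc (fun t => u.coeff ((j : ℤ) + t))
            (fun t => f.coeff ((j : ℤ) + t)) (fun t : ℕ => f.coeff ((j : ℤ) + (t : ℤ)))
            (i : ℕ) := hcongr
      _ = u.coeff ((j : ℤ) + (i : ℕ)) := phi_spec u f vinv d qc v dP pc hrec j i
      _ = w i := by rw [hw i]; norm_cast
  have h1 : laurentComplexity u m
      ≤ (Ψ '' (Sf ×ˢ (Set.univ : Set ((Fin d → F) × (Fin dP → F))))).ncard :=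
    Set.ncard_le_ncard hsub (Set.toFinite _)
  have h2 : (Ψ '' (Sf ×ˢ (Set.univ : Set ((Fin d → F) × (Fin dP → F))))).ncard
      ≤ (Sf ×ˢ (Set.univ : Set ((Fin d → F) × (Fin dP → F)))).ncard :=
    Set.ncard_image_le (Set.toFinite _)
  have h3 : (Sf ×ˢ (Set.univ : Set ((Fin d → F) × (Fin dP → F)))).ncard
      = Sf.ncard * Fintype.card F ^ (d + dP) := by
    rw [ncard_prod, Set.ncard_univ, Nat.card_eq_fintype_card, Fintype.card_prod,
      Fintype.card_fun, Fintype.card_fun, Fintype.card_fin, Fintype.card_fin, pow_add]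
  calc laurentComplexity u m ≤ _ := h1
    _ ≤ _ := h2
    _ = Sf.ncard * Fintype.card F ^ (d + dP) := h3
    _ = laurentComplexity f (m + v) * Fintype.card F ^ (d + dP) := rfl

lemma complexity_add_le [Fintype F] (u w : LaurentSeries F) (m : ℕ) :
    laurentComplexity (u + w) m ≤ laurentComplexity u m * laurentComplexity w m := by
  classical
  set Su : Set (Fin m → F) :=
    { a | ∃ j : ℕ, ∀ i : Fin m, a i = u.coeff (((j + (i : ℕ) : ℕ) : ℤ)) } with hSu
  set Sw : Set (Fin m → F) :=
    { a | ∃ j : ℕ, ∀ i : Fin m, a i = w.coeff (((j + (i : ℕ) : ℕ) : ℤ)) } with hSw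
  have hsub : { a : Fin m → F | ∃ j : ℕ, ∀ i : Fin m,
      a i = (u + w).coeff (((j + (i : ℕ) : ℕ) : ℤ)) }
      ⊆ (fun p : (Fin m → F) × (Fin m → F) => p.1 + p.2) '' (Su ×ˢ Sw) := by
    rintro a ⟨j, ha⟩
    refine ⟨⟨fun i => u.coeff (((j + (i : ℕ) : ℕ) : ℤ)),
      fun i => w.coeff (((j + (i : ℕ) : ℕ) : ℤ))⟩, ⟨⟨j, fun i => rfl⟩, ⟨j, fun i => rfl⟩⟩, ?_⟩
    funext i
    simp only [Pi.add_apply]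
    rw [ha i, HahnSeries.coeff_add]
  calc laurentComplexity (u + w) m
      ≤ ((fun p : (Fin m → F) × (Fin m → F) => p.1 + p.2) '' (Su ×ˢ Sw)).ncard :=
        Set.ncard_le_ncard hsub (Set.toFinite _)
    _ ≤ (Su ×ˢ Sw).ncard := Set.ncard_image_le (Set.toFinite _)
    _ = Su.ncard * Sw.ncard := ncard_prod _ _
    _ = laurentComplexity u m * laurentComplexity w m := rfl

lemma one_le_complexity [Fintype F] (f : LaurentSeries F) (m : ℕ) :
    1 ≤ laurentComplexity f m := by
  have hne : { w : Fin m → F | ∃ j : ℕ, ∀ i : Fin m,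
      w i = f.coeff (((j + (i : ℕ) : ℕ) : ℤ)) }.Nonempty :=
    ⟨fun i => f.coeff (((0 + (i : ℕ) : ℕ) : ℤ)), 0, fun i => rfl⟩
  exact (Set.ncard_pos (Set.toFinite _)).mpr hne

lemma tendsto_shift (q : ℕ → ℕ) (v : ℕ)
    (h : Tendsto (fun m : ℕ => Real.log (q m) / m) atTop (𝓝 0)) :
    Tendsto (fun m : ℕ => Real.log (q (m + v)) / m) atTop (𝓝 0) := by
  have h1 : Tendsto (fun m : ℕ => Real.log (q (m + v)) / ((m : ℝ) + v)) atTop (𝓝 0) := by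
    have := h.comp (tendsto_add_atTop_nat v)
    refine this.congr fun m => ?_
    simp only [Function.comp_apply]
    push_cast
    ring
  have h2 : Tendsto (fun m : ℕ => ((m : ℝ) + v) / m) atTop (𝓝 1) := by
    have h3 : Tendsto (fun m : ℕ => 1 + (v : ℝ) / m) atTop (𝓝 (1 + 0)) :=
      tendsto_const_nhds.add (tendsto_const_div_atTop_nhds_zero_nat (v : ℝ))
    rw [add_zero] at h3
    refine h3.congr' ?_
    filter_upwards [eventually_ge_atTop 1] with m hm
    have hm0 : (m : ℝ) ≠ 0 := by positivity
    field_simp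
  have hmul := h1.mul h2
  rw [zero_mul] at hmul
  refine hmul.congr' ?_
  filter_upwards [eventually_ge_atTop 1] with m hm
  have hm0 : (m : ℝ) ≠ 0 := by positivity
  have hmv : (m : ℝ) + v ≠ 0 := by positivity
  field_simp

lemma tendsto_zero_of_bound (p q1 q2 : ℕ → ℕ) (v1 v2 C : ℕ) (hC : 1 ≤ C)
    (hp : ∀ m, 1 ≤ p m) (hq1 : ∀ m, 1 ≤ q1 m) (hq2 : ∀ m, 1 ≤ q2 m)
    (hle : ∀ m, p m ≤ q1 (m + v1) * q2 (m + v2) * C)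
    (t1 : Tendsto (fun m : ℕ => Real.log (q1 m) / m) atTop (𝓝 0))
    (t2 : Tendsto (fun m : ℕ => Real.log (q2 m) / m) atTop (𝓝 0)) :
    Tendsto (fun m : ℕ => Real.log (p m) / m) atTop (𝓝 0) := by
  have hu : Tendsto (fun m : ℕ => Real.log (q1 (m + v1)) / m + Real.log (q2 (m + v2)) / m
      + Real.log C / m) atTop (𝓝 0) := by
    have := ((tendsto_shift q1 v1 t1).add (tendsto_shift q2 v2 t2)).add
      (tendsto_const_div_atTop_nhds_zero_nat (Real.log C))
    simpa using this
  refine tendsto_of_tendsto_of_tendsto_of_le_of_le' tendsto_const_nhds hu ?_ ?_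
  · filter_upwards [] with m
    have h1 : (1 : ℝ) ≤ (p m : ℝ) := by
      have := hp m; exact_mod_cast this
    exact div_nonneg (Real.log_nonneg h1) (Nat.cast_nonneg m)
  · filter_upwards [eventually_ge_atTop 1] with m hm
    have hm0 : (0 : ℝ) < m := by positivity
    have hq1' : (1 : ℝ) ≤ (q1 (m + v1) : ℝ) := by exact_mod_cast hq1 (m + v1)
    have hq2' : (1 : ℝ) ≤ (q2 (m + v2) : ℝ) := by exact_mod_cast hq2 (m + v2)
    have hC' : (1 : ℝ) ≤ (C : ℝ) := by exact_mod_cast hC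
    have hp' : (0 : ℝ) < (p m : ℝ) := by
      have := hp m
      have : (1 : ℝ) ≤ (p m : ℝ) := by exact_mod_cast this
      linarith
    have hlog : Real.log (p m) ≤ Real.log (q1 (m + v1)) + Real.log (q2 (m + v2))
        + Real.log C := by
      have hle' : (p m : ℝ) ≤ (q1 (m + v1) : ℝ) * (q2 (m + v2) : ℝ) * (C : ℝ) := by
        have := hle m
        exact_mod_cast this
      have := Real.log_le_log hp' hle'
      rwa [Real.log_mul (by positivity) (by positivity),
        Real.log_mul (by positivity) (by positivity)] at this
    calc Real.log (p m) / m
        ≤ (Real.log (q1 (m + v1)) + Real.log (q2 (m + v2)) + Real.log C) / m := by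
          gcongr
      _ = Real.log (q1 (m + v1)) / m + Real.log (q2 (m + v2)) / m + Real.log C / m := by
          ring

end ZeroEntropyAux

open ZeroEntropyAux in
/-- The class 𝒵 of Laurent series of zero topological entropy is a vector space
over `F(T)`: any `F(T)`-linear combination of two Laurent series of zero entropy
again has zero entropy. -/
theorem zero_entropy_class_vector_space
    (F : Type*) [Field F] [Fintype F] (f g : LaurentSeries F)
    (hf : Tendsto (fun m : ℕ => Real.log (laurentComplexity f m) / m) atTop (𝓝 0))
    (hg : Tendsto (fun m : ℕ => Real.log (laurentComplexity g m) / m) atTop (𝓝 0))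
    (r s : RatFunc F) :
    Tendsto (fun m : ℕ =>
      Real.log (laurentComplexity
        ((algebraMap (RatFunc F) (LaurentSeries F) r) * f +
          (algebraMap (RatFunc F) (LaurentSeries F) s) * g) m) / m) atTop (𝓝 0) := by
  classical
  set u := algebraMap (RatFunc F) (LaurentSeries F) r * f with hu
  set w := algebraMap (RatFunc F) (LaurentSeries F) s * g with hw
  set v1 := r.denom.natTrailingDegree with hv1
  set v2 := s.denom.natTrailingDegree with hv2
  set D1 := (r.denom.natDegree - v1) + r.num.natDegree with hD1
  set D2 := (s.denom.natDegree - v2) + s.num.natDegree with hD2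
  have hbf : ∀ m, laurentComplexity u m
      ≤ laurentComplexity f (m + v1) * Fintype.card F ^ D1 := fun m =>
    complexity_le u f (r.denom.coeff v1)⁻¹ (r.denom.natDegree - v1)
      (fun k => r.denom.coeff (v1 + 1 + k)) v1 r.num.natDegree (fun k => r.num.coeff k)
      (fun n => coeff_rec r f n) m
  have hbg : ∀ m, laurentComplexity w m
      ≤ laurentComplexity g (m + v2) * Fintype.card F ^ D2 := fun m =>
    complexity_le w g (s.denom.coeff v2)⁻¹ (s.denom.natDegree - v2)
      (fun k => s.denom.coeff (v2 + 1 + k)) v2 s.num.natDegree (fun k => s.num.coeff k)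
      (fun n => coeff_rec s g n) m
  have hcard : 1 ≤ Fintype.card F := Fintype.card_pos
  refine tendsto_zero_of_bound (fun m => laurentComplexity (u + w) m)
    (fun m => laurentComplexity f m) (fun m => laurentComplexity g m) v1 v2
    (Fintype.card F ^ D1 * Fintype.card F ^ D2)
    (Nat.one_le_iff_ne_zero.mpr (by positivity))
    (fun m => one_le_complexity (u + w) m)
    (fun m => one_le_complexity f m) (fun m => one_le_complexity g m)
    (fun m => ?_) hf hg
  calc laurentComplexity (u + w) m
      ≤ laurentComplexity u m * laurentComplexity w m := complexity_add_le u w m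
    _ ≤ (laurentComplexity f (m + v1) * Fintype.card F ^ D1) *
          (laurentComplexity g (m + v2) * Fintype.card F ^ D2) :=
        Nat.mul_le_mul (hbf m) (hbg m)
    _ = laurentComplexity f (m + v1) * laurentComplexity g (m + v2) *
          (Fintype.card F ^ D1 * Fintype.card F ^ D2) := by ring
end

section
/- Let d, e ≥ 2 be multiplicatively independent integers, i.e. for all k, l : ℕ, d^k = e^l implies k = 0 and l = 0. Let F be a finite field (of characteristic p) and let a : ℕ → F be the sequence defined by a n = (the number of pairs (k, l) ∈ ℕ × ℕ with d^k + e^l = n), cast into F (this is the coefficient sequence of the product f·g of the Laurent series f = ∑_{n≥0} T^{−d^n} and g = ∑_{n≥0} T^{−e^n} in F((T⁻¹))). Then there exists a real constant C > 0 such that p(a, m) ≤ C · m⁴ for all m ≥ 1. -/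
def condA (u v l n : ℕ) : Prop :=
  v ^ l < n ∧ n - v ^ l < v ^ l ∧ ∃ k, u ^ k = n - v ^ l

open Classical in
noncomputable def NA (u v n : ℕ) : ℕ :=
  ((Finset.range n).filter fun l => condA u v l n).card

open Classical in
noncomputable def evalC (u m : ℕ) (c : Fin (m+1) ⊕ Fin (2*m)) (i : Fin m) : ℕ :=
  match c with
  | .inl i0 => if (i : ℕ) = (i0 : ℕ) then 1 else 0
  | .inr z => if m < (z : ℕ) + (i : ℕ) ∧ ∃ k, u ^ k = (z : ℕ) + (i : ℕ) - m then 1 else 0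

open Classical in
lemma single_contrib (u v m j l : ℕ) (hu : 2 ≤ u) (hv : 2 ≤ v) (hm : 1 ≤ m)
    (hj : 3 * m ≤ j) :
    ∃ c : Fin (m+1) ⊕ Fin (2*m), ∀ i : Fin m,
      (if condA u v l (j + i) then 1 else 0) = evalC u m c i := by
  by_cases hex : ∃ i : Fin m, condA u v l (j + (i : ℕ))
  · obtain ⟨i0, hi0⟩ := hex
    have hvl0 : v ^ l < j + (i0 : ℕ) := hi0.1
    by_cases hfar : v ^ l + m ≤ j
    · -- far case: at most one i satisfies the condition
      have huniq : ∀ i : Fin m, condA u v l (j + (i : ℕ)) → i = i0 := by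
        have key : ∀ B B' : ℕ, (∃ k, u ^ k = B) → (∃ k, u ^ k = B') →
            j - v ^ l ≤ B → B' < (j - v ^ l) + m → ¬ (B < B') := by
          rintro B B' ⟨k, rfl⟩ ⟨k', rfl⟩ hB hB' hlt
          have hkk : k < k' := (Nat.pow_lt_pow_iff_right (by omega : 1 < u)).mp hlt
          have h1 : u ^ (k + 1) ≤ u ^ k' := Nat.pow_le_pow_right (by omega) (by omega)
          have h2 : u ^ (k + 1) = u * u ^ k := by ring
          have h3 : 2 * u ^ k ≤ u * u ^ k := Nat.mul_le_mul_right _ (by omega)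
          omega
        intro i hi
        obtain ⟨h1, h2, hP⟩ := hi
        obtain ⟨h1', h2', hP'⟩ := hi0
        have e1 := key _ _ hP hP' (by omega) (by omega)
        have e2 := key _ _ hP' hP (by omega) (by omega)
        have : (i : ℕ) = (i0 : ℕ) := by omega
        exact Fin.ext this
      refine ⟨.inl ⟨(i0 : ℕ), by omega⟩, ?_⟩
      intro i
      simp only [evalC]
      by_cases h : condA u v l (j + (i : ℕ))
      · have := huniq i h
        subst this
        simp [h]
      · have hne : ¬ ((i : ℕ) = (i0 : ℕ)) := by
          intro h'
          exact h (Fin.ext h' ▸ hi0)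
        simp [h, hne]
    · -- near case: v ^ l > j - m
      push_neg at hfar
      have hvm : v ^ l ≤ j + m := by omega
      set z : ℕ := j + m - v ^ l with hz
      have hzval : z + v ^ l = j + m := by omega
      have hz2 : z < 2 * m := by omega
      refine ⟨.inr ⟨z, hz2⟩, ?_⟩
      intro i
      simp only [evalC]
      have hiff : condA u v l (j + (i : ℕ)) ↔
          (m < z + (i : ℕ) ∧ ∃ k, u ^ k = z + (i : ℕ) - m) := by
        constructor
        · rintro ⟨h1, h2, k, hk⟩
          exact ⟨by omega, ⟨k, by omega⟩⟩
        · rintro ⟨h1, k, hk⟩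
          have hkpos : 0 < u ^ k := pow_pos (by omega) k
          refine ⟨by omega, by omega, ⟨k, by omega⟩⟩
      by_cases h : condA u v l (j + (i : ℕ))
      · rw [if_pos h, if_pos (hiff.mp h)]
      · rw [if_neg h, if_neg (fun hh => h (hiff.mpr hh))]
  · push_neg at hex
    refine ⟨.inl ⟨m, by omega⟩, ?_⟩
    intro i
    simp only [evalC]
    rw [if_neg (hex i), if_neg (by omega : ¬ ((i : ℕ) = m))]

open Classical in
lemma na_split (u v m j : ℕ) (hu : 2 ≤ u) (hv : 2 ≤ v) (hm : 1 ≤ m) (hj : 3 * m ≤ j) :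
    ∃ c1 c2 : Fin (m+1) ⊕ Fin (2*m), ∀ i : Fin m,
      NA u v (j + i) = evalC u m c1 i + evalC u m c2 i := by
  have hne : ∃ l, j < 2 * v ^ l := by
    refine ⟨j, ?_⟩
    have : j < v ^ j := Nat.lt_pow_self (by omega)
    omega
  set l0 := Nat.find hne with hl0
  have hl0p : j < 2 * v ^ l0 := Nat.find_spec hne
  obtain ⟨c1, hc1⟩ := single_contrib u v m j l0 hu hv hm hj
  obtain ⟨c2, hc2⟩ := single_contrib u v m j (l0 + 1) hu hv hm hj
  refine ⟨c1, c2, ?_⟩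
  intro i
  rw [← hc1 i, ← hc2 i]
  have hmem : ∀ l, condA u v l (j + (i : ℕ)) → l = l0 ∨ l = l0 + 1 := by
    intro l hl
    obtain ⟨h1, h2, _⟩ := hl
    -- 2 * v ^ l > j + i ≥ j, so l ≥ l0
    have hge : l0 ≤ l := by
      by_contra hcon
      push_neg at hcon
      exact absurd (by omega : j < 2 * v ^ l) (Nat.find_min hne hcon)
    -- l ≤ l0 + 1 : otherwise v ^ l ≥ v ^ 2 * v ^ l0 ≥ 4 * v ^ l0 > 2 * j ≥ j + m > j + i
    by_contra hcon
    push_neg at hcon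
    have hll : l0 + 2 ≤ l := by omega
    have h4 : v ^ (l0 + 2) ≤ v ^ l := Nat.pow_le_pow_right (by omega) hll
    have h5 : v ^ (l0 + 2) = v * v * v ^ l0 := by ring
    have h6 : 4 * v ^ l0 ≤ v * v * v ^ l0 := Nat.mul_le_mul_right _ (by nlinarith)
    have h7 : (i : ℕ) < m := i.isLt
    omega
  have hF : (Finset.range (j + (i : ℕ))).filter (fun l => condA u v l (j + (i : ℕ)))
      = ({l0, l0 + 1} : Finset ℕ).filter (fun l => condA u v l (j + (i : ℕ))) := by
    ext l
    simp only [Finset.mem_filter, Finset.mem_range, Finset.mem_insert, Finset.mem_singleton]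
    constructor
    · rintro ⟨_, hc⟩
      exact ⟨hmem l hc, hc⟩
    · rintro ⟨_, hc⟩
      have h1 : v ^ l < j + (i : ℕ) := hc.1
      have h2 : l < v ^ l := Nat.lt_pow_self (by omega)
      exact ⟨by omega, hc⟩
  rw [NA, hF, Finset.card_filter]
  rw [Finset.sum_pair (by omega : l0 ≠ l0 + 1)]

open Classical in
lemma cardA (u v n : ℕ) (hu : 2 ≤ u) (hv : 2 ≤ v) :
    ((Finset.range n ×ˢ Finset.range n).filter
      (fun p : ℕ × ℕ => u ^ p.1 + v ^ p.2 = n ∧ u ^ p.1 < v ^ p.2)).card = NA u v n := by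
  refine Finset.card_bij (fun p _ => p.2) ?_ ?_ ?_
  · rintro ⟨k, l⟩ hp
    simp only [Finset.mem_filter, Finset.mem_product, Finset.mem_range] at hp ⊢
    obtain ⟨⟨hk, hl⟩, hsum, hlt⟩ := hp
    have h1 : 0 < u ^ k := pow_pos (by omega) k
    exact ⟨hl, by omega, by omega, ⟨k, by omega⟩⟩
  · rintro ⟨k, l⟩ hp ⟨k', l'⟩ hq h
    simp only [Finset.mem_filter, Finset.mem_product, Finset.mem_range] at hp hq
    simp only at h
    subst h
    have : u ^ k = u ^ k' := by omega
    have := Nat.pow_right_injective hu this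
    simp_all
  · intro l hl
    rw [Finset.mem_filter] at hl
    simp only [Finset.mem_filter, Finset.mem_range, condA] at hl
    obtain ⟨hln, hvl, hcap, k, hk⟩ := hl
    have h2 : 0 < v ^ l := pow_pos (by omega) l
    have h3 : k < u ^ k := Nat.lt_pow_self (by omega)
    refine ⟨(k, l), ?_, rfl⟩
    simp only [Finset.mem_filter, Finset.mem_product, Finset.mem_range]
    exact ⟨⟨by omega, by omega⟩, by omega, by omega⟩

open Classical in
lemma ncard_pairs (d e n : ℕ) (hd : 2 ≤ d) (he : 2 ≤ e)
    (hind : ∀ k l : ℕ, d ^ k = e ^ l → k = 0 ∧ l = 0) (hn : 3 ≤ n) :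
    {p : ℕ × ℕ | d ^ p.1 + e ^ p.2 = n}.ncard = NA d e n + NA e d n := by
  classical
  set S : Finset (ℕ × ℕ) :=
    (Finset.range n ×ˢ Finset.range n).filter (fun p => d ^ p.1 + e ^ p.2 = n) with hS
  have hset : {p : ℕ × ℕ | d ^ p.1 + e ^ p.2 = n} = ↑S := by
    ext ⟨k, l⟩
    simp only [hS, Set.mem_setOf_eq, Finset.coe_filter, Finset.mem_product,
      Finset.mem_range, Set.mem_setOf_eq]
    constructor
    · intro h
      have h1 : 0 < e ^ l := pow_pos (by omega) l
      have h2 : 0 < d ^ k := pow_pos (by omega) k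
      have h3 : k < d ^ k := Nat.lt_pow_self (by omega)
      have h4 : l < e ^ l := Nat.lt_pow_self (by omega)
      exact ⟨⟨by omega, by omega⟩, h⟩
    · exact fun h => h.2
  rw [hset, Set.ncard_coe_finset]
  rw [← Finset.card_filter_add_card_filter_not
    (s := S) (p := fun p : ℕ × ℕ => d ^ p.1 < e ^ p.2)]
  congr 1
  · rw [← cardA d e n hd he, hS, Finset.filter_filter]
  · rw [← cardA e d n he hd]
    refine Finset.card_bij (fun p _ => (p.2, p.1)) ?_ ?_ ?_
    · rintro ⟨k, l⟩ hp
      simp only [hS, Finset.mem_filter, Finset.mem_product, Finset.mem_range,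
        Finset.filter_filter] at hp ⊢
      have hne : d ^ k ≠ e ^ l := by
        intro hEq
        obtain ⟨h0, h0'⟩ := hind k l hEq
        subst h0; subst h0'
        simp only [pow_zero] at hp
        omega
      omega
    · rintro ⟨k, l⟩ hp ⟨k', l'⟩ hq h
      simp only [Prod.mk.injEq] at h
      obtain ⟨rfl, rfl⟩ := h; rfl
    · rintro ⟨l, k⟩ hl
      simp only [hS, Finset.mem_filter, Finset.mem_product, Finset.mem_range,
        Finset.filter_filter] at hl
      refine ⟨(k, l), ?_, rfl⟩
      simp only [hS, Finset.mem_filter, Finset.mem_product, Finset.mem_range,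
        Finset.filter_filter]
      omega

/-- Let `d, e ≥ 2` be multiplicatively independent integers and `F` a finite field.
The coefficient sequence of the product `(∑ T^{−d^n})·(∑ T^{−e^n})`, namely
`a n = #{(k, l) : d^k + e^l = n} mod p`, has complexity `O(m⁴)`. -/
theorem complexity_product_lacunary_series
    (d e : ℕ) (hd : 2 ≤ d) (he : 2 ≤ e)
    (hind : ∀ k l : ℕ, d ^ k = e ^ l → k = 0 ∧ l = 0)
    (F : Type*) [Field F] [Fintype F] (a : ℕ → F)
    (ha : ∀ n : ℕ, a n = ((Set.ncard {p : ℕ × ℕ | d ^ p.1 + e ^ p.2 = n} : ℕ) : F)) :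
    ∃ C : ℝ, 0 < C ∧ ∀ m : ℕ, 1 ≤ m →
      (subwordComplexity a m : ℝ) ≤ C * (m : ℝ) ^ 4 := by
  refine ⟨259, by norm_num, ?_⟩
  intro m hm
  have key : subwordComplexity a m ≤ 3 * m + (3 * m + 1) ^ 4 := by
    classical
    set CT := (Fin (m+1) ⊕ Fin (2*m)) × (Fin (m+1) ⊕ Fin (2*m)) with hCT
    let dec : (Fin (3*m) ⊕ (CT × CT)) → (Fin m → F) :=
      Sum.elim (fun j' i => a ((j' : ℕ) + i))
        (fun c i => ((evalC d m c.1.1 i + evalC d m c.1.2 i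
          + evalC e m c.2.1 i + evalC e m c.2.2 i : ℕ) : F))
    have hsub : { w : Fin m → F | ∃ j : ℕ, ∀ i : Fin m, w i = a (j + i) }
        ⊆ Set.range dec := by
      rintro w ⟨j, hw⟩
      by_cases hj : j < 3 * m
      · exact ⟨.inl ⟨j, hj⟩, by funext i; exact (hw i).symm⟩
      · push_neg at hj
        obtain ⟨c1, c2, h12⟩ := na_split d e m j hd he hm hj
        obtain ⟨c3, c4, h34⟩ := na_split e d m j he hd hm hj
        refine ⟨.inr ((c1, c2), (c3, c4)), ?_⟩
        funext i
        have hn3 : 3 ≤ j + (i : ℕ) := by omega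
        show ((evalC d m c1 i + evalC d m c2 i + evalC e m c3 i + evalC e m c4 i : ℕ) : F) = w i
        rw [hw i, ha (j + i), ncard_pairs d e (j + i) hd he hind hn3, h12 i, h34 i]
        push_cast
        ring
    have h1 : subwordComplexity a m ≤ (Set.range dec).ncard :=
      Set.ncard_le_ncard hsub (Set.finite_range dec)
    have h2 : (Set.range dec).ncard ≤ Fintype.card (Fin (3*m) ⊕ (CT × CT)) := by
      rw [← Nat.card_eq_fintype_card, ← Set.ncard_univ, ← Set.image_univ]
      exact Set.ncard_image_le Set.finite_univ
    have h3 : Fintype.card (Fin (3*m) ⊕ (CT × CT)) = 3 * m + (3 * m + 1) ^ 4 := by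
      simp [hCT, Fintype.card_sum, Fintype.card_prod, Fintype.card_fin]
      ring
    omega
  have key2 : subwordComplexity a m ≤ 259 * m ^ 4 := by
    have h4 : (3 * m + 1) ^ 4 ≤ (4 * m) ^ 4 := Nat.pow_le_pow_left (by omega) 4
    have h5 : m ≤ m ^ 4 := Nat.le_self_pow (by norm_num) m
    calc subwordComplexity a m ≤ 3 * m + (3 * m + 1) ^ 4 := key
      _ ≤ 3 * m ^ 4 + 256 * m ^ 4 := by nlinarith [h4, h5]
      _ = 259 * m ^ 4 := by ring
  calc (subwordComplexity a m : ℝ) ≤ ((259 * m ^ 4 : ℕ) : ℝ) := by exact_mod_cast key2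
    _ = 259 * (m : ℝ) ^ 4 := by push_cast; ring
end

section
/- Let F be a finite field, let b : Polynomial F be a polynomial in T, and let f : LaurentSeries F. Let B : LaurentSeries F be the image of b under evaluation at T = X⁻¹ (i.e. B = Polynomial.aeval (X⁻¹) b, where X is the variable of LaurentSeries F, which is invertible since LaurentSeries F is a field). Then there exists a real constant M > 0 (depending only on b) such that for all m ≥ 1, p(B * f, m) ≤ M · p(f, m). -/
section aux
variable {F : Type*} [Field F]

lemma xinv_eq : ((HahnSeries.single (1 : ℤ) (1 : F) : LaurentSeries F))⁻¹
    = HahnSeries.single (-1 : ℤ) (1 : F) := by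
  refine inv_eq_of_mul_eq_one_right ?_
  rw [HahnSeries.single_mul_single]
  norm_num [HahnSeries.single_zero_one]

lemma sum_coeff {α : Type*} (s : Finset α) (g : α → LaurentSeries F) (n : ℤ) :
    (∑ i ∈ s, g i).coeff n = ∑ i ∈ s, (g i).coeff n :=
  map_sum (HahnSeries.coeff.addMonoidHom n) g s

lemma coeff_mul_formula (b : Polynomial F) (f : LaurentSeries F) (n : ℤ) :
    ((Polynomial.aeval ((HahnSeries.single (1 : ℤ) (1 : F) : LaurentSeries F)⁻¹) b) * f).coeff n
    = ∑ k ∈ Finset.range (b.natDegree + 1), b.coeff k * f.coeff (n + k) := by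
  rw [xinv_eq, Polynomial.aeval_eq_sum_range, Finset.sum_mul, sum_coeff]
  refine Finset.sum_congr rfl fun k _ => ?_
  rw [HahnSeries.single_pow, one_pow, Algebra.smul_def]
  have halg : (algebraMap F (LaurentSeries F)) (b.coeff k)
      = HahnSeries.single (0 : ℤ) (b.coeff k) := by
    rw [HahnSeries.algebraMap_apply', ← PowerSeries.C_eq_algebraMap,
      HahnSeries.ofPowerSeries_C, HahnSeries.C_apply]
  rw [halg, mul_assoc, HahnSeries.coeff_single_zero_mul]
  have key : ((HahnSeries.single ((k : ℕ) • (-1 : ℤ)) (1 : F) : LaurentSeries F) * f).coeff n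
      = f.coeff (n + k) := by
    have h : ((k : ℕ) • (-1 : ℤ)) = -(k : ℤ) := by simp
    rw [h]
    have := HahnSeries.coeff_single_mul_add (r := (1 : F)) (x := f)
      (a := n + (k : ℤ)) (b := -(k : ℤ))
    simpa using this
  rw [key]
end aux

/-- Multiplying a Laurent series `f ∈ F((T⁻¹))` by a polynomial `b(T) ∈ F[T]`
(i.e. by `b(X⁻¹)` where `X = T⁻¹` is the variable of `LaurentSeries F`) increases
the complexity by at most a multiplicative constant depending only on `b`. -/
theorem complexity_polynomial_mul
    (F : Type*) [Field F] [Fintype F] (b : Polynomial F) (f : LaurentSeries F) :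
    ∃ M : ℝ, 0 < M ∧ ∀ m : ℕ, 1 ≤ m →
      (laurentComplexity
        ((Polynomial.aeval ((HahnSeries.single (1 : ℤ) (1 : F) : LaurentSeries F)⁻¹) b) * f)
        m : ℝ) ≤ M * (laurentComplexity f m : ℝ) := by
  classical
  set d := b.natDegree with hd
  have hcardF : 0 < Fintype.card F := Fintype.card_pos
  refine ⟨(Fintype.card F : ℝ) ^ d, by positivity, fun m hm => ?_⟩
  set B := (Polynomial.aeval ((HahnSeries.single (1 : ℤ) (1 : F) : LaurentSeries F)⁻¹) b)
    with hB
  -- Step 1 : complexity of B * f at m is at most complexity of f at m + d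
  have step1 : laurentComplexity (B * f) m ≤ laurentComplexity f (m + d) := by
    unfold laurentComplexity subwordComplexity
    set Φ : (Fin (m + d) → F) → (Fin m → F) := fun v i =>
      ∑ k ∈ Finset.range (d + 1), b.coeff k * v ⟨i.val + min k d, by
        have := i.isLt; have : min k d ≤ d := min_le_right _ _; omega⟩ with hPhi
    have hsub : { w : Fin m → F | ∃ j : ℕ, ∀ i : Fin m, w i = (B * f).coeff ((j + i : ℕ) : ℤ) }
        ⊆ Φ '' { v : Fin (m + d) → F | ∃ j : ℕ, ∀ i, v i = f.coeff ((j + i : ℕ) : ℤ) } := by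
      rintro w ⟨j, hj⟩
      refine ⟨fun i => f.coeff ((j + i : ℕ) : ℤ), ⟨j, fun i => rfl⟩, ?_⟩
      funext i
      rw [hPhi]
      simp only
      rw [hj i, coeff_mul_formula]
      refine Finset.sum_congr rfl fun k hk => ?_
      have hk' : k ≤ d := Nat.lt_succ_iff.mp (Finset.mem_range.mp hk)
      rw [min_eq_left hk']
      congr 1
      push_cast
      ring_nf
    calc Set.ncard { w : Fin m → F | ∃ j : ℕ, ∀ i : Fin m, w i = (B * f).coeff ((j + i : ℕ) : ℤ) }
        ≤ Set.ncard (Φ '' { v : Fin (m + d) → F | ∃ j : ℕ, ∀ i, v i = f.coeff ((j + i : ℕ) : ℤ) }) :=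
          Set.ncard_le_ncard hsub (Set.toFinite _)
      _ ≤ Set.ncard { v : Fin (m + d) → F | ∃ j : ℕ, ∀ i, v i = f.coeff ((j + i : ℕ) : ℤ) } :=
          Set.ncard_image_le (Set.toFinite _)
  -- Step 2 : complexity of f at m + d is at most |F|^d times complexity at m
  have step2 : laurentComplexity f (m + d) ≤ Fintype.card F ^ d * laurentComplexity f m := by
    unfold laurentComplexity subwordComplexity
    set s := { v : Fin (m + d) → F | ∃ j : ℕ, ∀ i, v i = f.coeff ((j + i : ℕ) : ℤ) } with hs
    set t := { w : Fin m → F | ∃ j : ℕ, ∀ i, w i = f.coeff ((j + i : ℕ) : ℤ) } with ht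
    have hmem : ∀ v ∈ s, (fun i : Fin m => v ⟨i.val, by omega⟩) ∈ t := by
      rintro v ⟨j, hj⟩
      exact ⟨j, fun i => hj ⟨i.val, by omega⟩⟩
    set g : s → t × (Fin d → F) := fun v =>
      (⟨fun i : Fin m => v.1 ⟨i.val, by omega⟩, hmem v.1 v.2⟩,
        fun i : Fin d => v.1 ⟨m + i.val, by omega⟩) with hg
    have hginj : Function.Injective g := by
      rintro u v h
      have h1 := congrArg (fun p => (p.1 : Fin m → F)) h
      have h2 := congrArg Prod.snd h
      apply Subtype.ext
      funext i
      rcases Nat.lt_or_ge i.val m with hlt | hge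
      · have := congrFun h1 ⟨i.val, hlt⟩
        simp only [hg] at this
        convert this using 2
      · have hi : i.val - m < d := by omega
        have := congrFun h2 ⟨i.val - m, hi⟩
        simp only [hg] at this
        have he : (⟨m + (i.val - m), by omega⟩ : Fin (m + d)) = i := by
          apply Fin.ext
          show m + (i.val - m) = i.val
          omega
        rw [he] at this
        exact this
    have hfin : Finite (t × (Fin d → F)) := by infer_instance
    have hle : Nat.card s ≤ Nat.card (t × (Fin d → F)) :=
      Nat.card_le_card_of_injective g hginj
    rw [Nat.card_prod, Nat.card_eq_fintype_card (α := Fin d → F)] at hle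
    rw [Nat.card_coe_set_eq, Nat.card_coe_set_eq] at hle
    have hcard : Fintype.card (Fin d → F) = Fintype.card F ^ d := by
      simp [Fintype.card_fun]
    rw [hcard] at hle
    calc Set.ncard s ≤ Set.ncard t * Fintype.card F ^ d := hle
      _ = Fintype.card F ^ d * Set.ncard t := Nat.mul_comm _ _
  have key : laurentComplexity (B * f) m ≤ Fintype.card F ^ d * laurentComplexity f m :=
    le_trans step1 step2
  have : (laurentComplexity (B * f) m : ℝ)
      ≤ ((Fintype.card F ^ d * laurentComplexity f m : ℕ) : ℝ) := by exact_mod_cast key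
  push_cast at this
  linarith
end
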